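/- arXiv:math/0111140 — 5 statements merged into one kernel-verified Lean document; each statement's English description precedes it below -/
import Mathlib

section
/- If μ is e-regular and has length at most k, then μ⁺ (obtained by inserting an empty runner into its e-abacus with k beads) is (e+1)-regular. -/
open Finset

/-- A partition: a weakly decreasing, eventually-zero sequence of naturals.
`parts i` is the `(i+1)`-st part (0-indexed). -/
structure AbacusPartition where
  parts : ℕ → ℕ
  antitone : ∀ ⦃i j : ℕ⦄, i ≤ j → parts j ≤ parts i
  eventually_zero : ∃ N, ∀ i, N ≤ i → parts i = 0

namespace AbacusPartition

/-- The length of a partition: the number of nonzero parts. -/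
noncomputable def length (l : AbacusPartition) : ℕ :=
  sInf {N | ∀ i, N ≤ i → l.parts i = 0}

/-- The size `|λ|` of a partition: the sum of its parts. -/
noncomputable def size (l : AbacusPartition) : ℕ :=
  ∑ i ∈ Finset.range l.length, l.parts i

/-- The beta-numbers of `l` with respect to `k` beads: `λ_i + k - i` for `i = 1, …, k`
(here 0-indexed: bead for row `i+1` sits at `parts i + (k - 1 - i)`). -/
def betaSet (l : AbacusPartition) (k : ℕ) : Finset ℕ :=
  (Finset.range k).image fun i => l.parts i + (k - 1 - i)

/-- Dominance order: `l ⊵ m`. -/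
def Dominates (l m : AbacusPartition) : Prop :=
  ∀ j, ∑ i ∈ Finset.range j, m.parts i ≤ ∑ i ∈ Finset.range j, l.parts i

/-- Inserting an empty runner before runner `α` into an `e`-abacus: a bead at
position `m*e + r` moves to `m*(e+1) + r` if `r < α` and to `m*(e+1) + r + 1` otherwise. -/
def insRunner (e α p : ℕ) : ℕ :=
  (p / e) * (e + 1) + p % e + (if p % e < α then 0 else 1)

/-- `lp` is the partition `λ⁺` obtained from `l` by inserting an empty runner at
position `α` into its `e`-abacus with `k` beads. -/
def IsPlus (e α k : ℕ) (l lp : AbacusPartition) : Prop :=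
  lp.length ≤ k ∧ lp.betaSet k = (l.betaSet k).image (insRunner e α)

/-- A partition is `d`-regular if no `d` of its nonzero parts are equal. -/
def Regular (d : ℕ) (l : AbacusPartition) : Prop :=
  ¬ ∃ i, l.parts i ≠ 0 ∧ l.parts (i + (d - 1)) = l.parts i

/-- The Young diagram of a partition, as a set of (row, column) cells, 0-indexed. -/
def cells (l : AbacusPartition) : Set (ℕ × ℕ) := {x | x.2 < l.parts x.1}

/-- `c 0, c 1, …, c (e-1)` are the successive cells of a ribbon: each next cell is
directly below, or directly to the left of, the previous cell. -/
def RibbonSteps (e : ℕ) (c : ℕ → ℕ × ℕ) : Prop :=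
  ∀ i, i + 1 < e →
    (c (i + 1) = ((c i).1 + 1, (c i).2)) ∨
    ((c i).2 = (c (i + 1)).2 + 1 ∧ (c (i + 1)).1 = (c i).1)

/-- `R` is an `e`-ribbon with cell enumeration `c` (head `c 0`). -/
def IsRibbonC (e : ℕ) (c : ℕ → ℕ × ℕ) (R : Set (ℕ × ℕ)) : Prop :=
  R = c '' (Set.Iio e) ∧ Set.InjOn c (Set.Iio e) ∧ RibbonSteps e c

/-- The spin of an `e`-ribbon: the number of vertical steps. -/
def spinOf (e : ℕ) (c : ℕ → ℕ × ℕ) : ℕ :=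
  ((Finset.range (e - 1)).filter fun i => (c (i + 1)).1 = (c i).1 + 1).card

/-- The head of the ribbon lies in row 1 or directly below a cell of `l`. -/
def HeadOK (l : AbacusPartition) (c : ℕ → ℕ × ℕ) : Prop :=
  (c 0).1 = 0 ∨ ((c 0).1 - 1, (c 0).2) ∈ cells l

/-- `l` is obtained from `n` by removing a single rim hook (ribbon) of length `e`. -/
def RemoveRibbon (e : ℕ) (n l : AbacusPartition) : Prop :=
  cells l ⊆ cells n ∧ ∃ c, IsRibbonC e c (cells n \ cells l)

/-- `κ` is the `e`-core of `l`: obtained by repeatedly removing `e`-rim-hooks,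
and no further `e`-rim-hook can be removed. -/
def IsECoreOf (e : ℕ) (κ l : AbacusPartition) : Prop :=
  Relation.ReflTransGen (RemoveRibbon e) l κ ∧ ¬ ∃ m, RemoveRibbon e κ m

/-- `l` has `e`-weight `w`: `|l| = |e-core of l| + w * e`. -/
def EWeight (e : ℕ) (l : AbacusPartition) (w : ℕ) : Prop :=
  ∃ κ, IsECoreOf e κ l ∧ l.size = κ.size + w * e

/-- `λ →_{m:e} ν` with total spin `s`: `[ν] \ [λ]` is a disjoint union of `m`
`e`-ribbons, each of whose heads lies in row 1 or directly below a cell of `λ`,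
the sum of whose spins is `s`. -/
def HAddSpin (e m s : ℕ) (l n : AbacusPartition) : Prop :=
  cells l ⊆ cells n ∧
  ∃ (R : Fin m → Set (ℕ × ℕ)) (c : Fin m → ℕ → ℕ × ℕ),
    ((cells n \ cells l) = ⋃ i, R i) ∧
    (Pairwise fun i j => Disjoint (R i) (R j)) ∧
    (∀ i, IsRibbonC e (c i) (R i) ∧ HeadOK l (c i)) ∧
    s = ∑ i, spinOf e (c i)

/-- `λ →_{m:e} ν`. -/
def HAdd (e m : ℕ) (l n : AbacusPartition) : Prop := ∃ s, HAddSpin e m s l n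

/-- `x` is an addable node of `l`. -/
def Addable (l : AbacusPartition) (x : ℕ × ℕ) : Prop :=
  x ∉ cells l ∧ ∃ n : AbacusPartition, cells n = insert x (cells l)

/-- `x` is a removable node of `l`. -/
def Removable (l : AbacusPartition) (x : ℕ × ℕ) : Prop :=
  x ∈ cells l ∧ ∃ n : AbacusPartition, cells n = cells l \ {x}

/-- The `e`-residue of a node `(c,d)`: `d - c mod e`. -/
def res (e : ℕ) (x : ℕ × ℕ) : ZMod e := (x.2 : ZMod e) - (x.1 : ZMod e)

/-- `N_i(λ,ν) = #{addable i-nodes of λ above x} - #{removable i-nodes of λ above x}`,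
where `i = res e x` and `y` is above `x` iff `y.1 < x.1`. -/
noncomputable def Nnum (e : ℕ) (l : AbacusPartition) (x : ℕ × ℕ) : ℤ :=
  ({y | Addable l y ∧ res e y = res e x ∧ y.1 < x.1}.ncard : ℤ) -
  ({y | Removable l y ∧ res e y = res e x ∧ y.1 < x.1}.ncard : ℤ)

end AbacusPartition

open AbacusPartition
/-- if `μ` is `e`-regular then `μ⁺` is `(e+1)`-regular. -/
theorem plus_regular_of_regular (e α k : ℕ) (he : 2 ≤ e) (hα : α ≤ e)
    (m mp : AbacusPartition) (hm : m.length ≤ k) (hreg : m.Regular e)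
    (hmp : IsPlus e α k m mp) :
    mp.Regular (e + 1) := by
  rintro ⟨i, hne, heq⟩
  simp only [Nat.add_sub_cancel] at heq
  have he0 : 0 < e := by omega
  -- every element of mp.betaSet k has residue ≠ α mod (e+1)
  have hmod : ∀ b ∈ mp.betaSet k, b % (e + 1) ≠ α := by
    intro b hb
    rw [hmp.2, Finset.mem_image] at hb
    obtain ⟨p, _, rfl⟩ := hb
    have hpe : p % e < e := Nat.mod_lt _ he0
    unfold insRunner
    rw [Nat.add_assoc, Nat.mul_add_mod']
    by_cases h : p % e < α
    · rw [if_pos h, Nat.add_zero, Nat.mod_eq_of_lt (by omega)]; omega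
    · rw [if_neg h, Nat.mod_eq_of_lt (by omega)]; omega
  -- parts between i and i+e are all equal
  have hparts : ∀ j ≤ e, mp.parts (i + j) = mp.parts i := fun j hj =>
    le_antisymm (mp.antitone (by omega)) (heq ▸ mp.antitone (by omega))
  -- i + e < k
  have hlenmem : mp.length ∈ {N | ∀ j, N ≤ j → mp.parts j = 0} := by
    obtain ⟨N, hN⟩ := mp.eventually_zero
    exact Nat.sInf_mem ⟨N, hN⟩
  have hlen : i + e < mp.length := by
    by_contra h
    push_neg at h
    exact hne (heq ▸ hlenmem (i + e) h)
  have hik : i + e < k := lt_of_lt_of_le hlen hmp.1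
  set a := mp.parts i + (k - 1 - (i + e)) with ha
  -- find t ≤ e with (a + t) % (e+1) = α
  have hdm : (e + 1) * (a / (e + 1)) + a % (e + 1) = a := by
    exact Nat.div_add_mod a (e + 1)
  have hq : (e + 1) * (a / (e + 1) + 1) = (e + 1) * (a / (e + 1)) + (e + 1) := by ring
  have hr : a % (e + 1) < e + 1 := Nat.mod_lt _ (by omega)
  obtain ⟨t, ht, htm⟩ : ∃ t, t ≤ e ∧ (a + t) % (e + 1) = α := by
    by_cases h : a % (e + 1) ≤ α
    · refine ⟨α - a % (e + 1), by omega, ?_⟩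
      have : a + (α - a % (e + 1)) = (e + 1) * (a / (e + 1)) + α := by omega
      rw [this, Nat.mul_add_mod, Nat.mod_eq_of_lt (by omega)]
    · refine ⟨α + (e + 1) - a % (e + 1), by omega, ?_⟩
      have : a + (α + (e + 1) - a % (e + 1)) = (e + 1) * (a / (e + 1) + 1) + α := by
        omega
      rw [this, Nat.mul_add_mod, Nat.mod_eq_of_lt (by omega)]
  -- a + t is a beta number of mp
  have hmem : a + t ∈ mp.betaSet k := by
    rw [betaSet, Finset.mem_image]
    refine ⟨i + (e - t), Finset.mem_range.2 (by omega), ?_⟩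
    rw [hparts (e - t) (by omega)]
    omega
  exact hmod _ hmem htm
end

section
/- Let λ and μ be partitions of n of length at most k. Then λ and μ have the same e-core if and only if λ⁺ and μ⁺ have the same (e+1)-core. -/
open Finset

/-- A partition: a weakly decreasing, eventually-zero sequence of naturals.
`parts i` is the `(i+1)`-st part (0-indexed). -/
structure PartitionSeq where
  parts : ℕ → ℕ
  antitone : ∀ ⦃i j : ℕ⦄, i ≤ j → parts j ≤ parts i
  eventually_zero : ∃ N, ∀ i, N ≤ i → parts i = 0

namespace PartitionSeq

/-- The length of a partition: the number of nonzero parts. -/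
noncomputable def length (l : PartitionSeq) : ℕ :=
  sInf {N | ∀ i, N ≤ i → l.parts i = 0}

/-- The size `|λ|` of a partition: the sum of its parts. -/
noncomputable def size (l : PartitionSeq) : ℕ :=
  ∑ i ∈ Finset.range l.length, l.parts i

/-- The beta-numbers of `l` with respect to `k` beads: `λ_i + k - i` for `i = 1, …, k`
(here 0-indexed: bead for row `i+1` sits at `parts i + (k - 1 - i)`). -/
def betaSet (l : PartitionSeq) (k : ℕ) : Finset ℕ :=
  (Finset.range k).image fun i => l.parts i + (k - 1 - i)

/-- Dominance order: `l ⊵ m`. -/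
def Dominates (l m : PartitionSeq) : Prop :=
  ∀ j, ∑ i ∈ Finset.range j, m.parts i ≤ ∑ i ∈ Finset.range j, l.parts i

/-- Inserting an empty runner before runner `α` into an `e`-abacus: a bead at
position `m*e + r` moves to `m*(e+1) + r` if `r < α` and to `m*(e+1) + r + 1` otherwise. -/
def insRunner (e α p : ℕ) : ℕ :=
  (p / e) * (e + 1) + p % e + (if p % e < α then 0 else 1)

/-- `lp` is the partition `λ⁺` obtained from `l` by inserting an empty runner at
position `α` into its `e`-abacus with `k` beads. -/
def IsPlus (e α k : ℕ) (l lp : PartitionSeq) : Prop :=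
  lp.length ≤ k ∧ lp.betaSet k = (l.betaSet k).image (insRunner e α)

/-- A partition is `d`-regular if no `d` of its nonzero parts are equal. -/
def Regular (d : ℕ) (l : PartitionSeq) : Prop :=
  ¬ ∃ i, l.parts i ≠ 0 ∧ l.parts (i + (d - 1)) = l.parts i

/-- The Young diagram of a partition, as a set of (row, column) cells, 0-indexed. -/
def cells (l : PartitionSeq) : Set (ℕ × ℕ) := {x | x.2 < l.parts x.1}

/-- `c 0, c 1, …, c (e-1)` are the successive cells of a ribbon: each next cell is
directly below, or directly to the left of, the previous cell. -/
def RibbonSteps (e : ℕ) (c : ℕ → ℕ × ℕ) : Prop :=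
  ∀ i, i + 1 < e →
    (c (i + 1) = ((c i).1 + 1, (c i).2)) ∨
    ((c i).2 = (c (i + 1)).2 + 1 ∧ (c (i + 1)).1 = (c i).1)

/-- `R` is an `e`-ribbon with cell enumeration `c` (head `c 0`). -/
def IsRibbonC (e : ℕ) (c : ℕ → ℕ × ℕ) (R : Set (ℕ × ℕ)) : Prop :=
  R = c '' (Set.Iio e) ∧ Set.InjOn c (Set.Iio e) ∧ RibbonSteps e c

/-- The spin of an `e`-ribbon: the number of vertical steps. -/
def spinOf (e : ℕ) (c : ℕ → ℕ × ℕ) : ℕ :=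
  ((Finset.range (e - 1)).filter fun i => (c (i + 1)).1 = (c i).1 + 1).card

/-- The head of the ribbon lies in row 1 or directly below a cell of `l`. -/
def HeadOK (l : PartitionSeq) (c : ℕ → ℕ × ℕ) : Prop :=
  (c 0).1 = 0 ∨ ((c 0).1 - 1, (c 0).2) ∈ cells l

/-- `l` is obtained from `n` by removing a single rim hook (ribbon) of length `e`. -/
def RemoveRibbon (e : ℕ) (n l : PartitionSeq) : Prop :=
  cells l ⊆ cells n ∧ ∃ c, IsRibbonC e c (cells n \ cells l)

/-- `κ` is the `e`-core of `l`: obtained by repeatedly removing `e`-rim-hooks,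
and no further `e`-rim-hook can be removed. -/
def IsECoreOf (e : ℕ) (κ l : PartitionSeq) : Prop :=
  Relation.ReflTransGen (RemoveRibbon e) l κ ∧ ¬ ∃ m, RemoveRibbon e κ m

/-- `l` has `e`-weight `w`: `|l| = |e-core of l| + w * e`. -/
def EWeight (e : ℕ) (l : PartitionSeq) (w : ℕ) : Prop :=
  ∃ κ, IsECoreOf e κ l ∧ l.size = κ.size + w * e

/-- `λ →_{m:e} ν` with total spin `s`: `[ν] \ [λ]` is a disjoint union of `m`
`e`-ribbons, each of whose heads lies in row 1 or directly below a cell of `λ`,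
the sum of whose spins is `s`. -/
def HAddSpin (e m s : ℕ) (l n : PartitionSeq) : Prop :=
  cells l ⊆ cells n ∧
  ∃ (R : Fin m → Set (ℕ × ℕ)) (c : Fin m → ℕ → ℕ × ℕ),
    ((cells n \ cells l) = ⋃ i, R i) ∧
    (Pairwise fun i j => Disjoint (R i) (R j)) ∧
    (∀ i, IsRibbonC e (c i) (R i) ∧ HeadOK l (c i)) ∧
    s = ∑ i, spinOf e (c i)

/-- `λ →_{m:e} ν`. -/
def HAdd (e m : ℕ) (l n : PartitionSeq) : Prop := ∃ s, HAddSpin e m s l n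

/-- `x` is an addable node of `l`. -/
def Addable (l : PartitionSeq) (x : ℕ × ℕ) : Prop :=
  x ∉ cells l ∧ ∃ n : PartitionSeq, cells n = insert x (cells l)

/-- `x` is a removable node of `l`. -/
def Removable (l : PartitionSeq) (x : ℕ × ℕ) : Prop :=
  x ∈ cells l ∧ ∃ n : PartitionSeq, cells n = cells l \ {x}

/-- The `e`-residue of a node `(c,d)`: `d - c mod e`. -/
def res (e : ℕ) (x : ℕ × ℕ) : ZMod e := (x.2 : ZMod e) - (x.1 : ZMod e)

/-- `N_i(λ,ν) = #{addable i-nodes of λ above x} - #{removable i-nodes of λ above x}`,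
where `i = res e x` and `y` is above `x` iff `y.1 < x.1`. -/
noncomputable def Nnum (e : ℕ) (l : PartitionSeq) (x : ℕ × ℕ) : ℤ :=
  ({y | Addable l y ∧ res e y = res e x ∧ y.1 < x.1}.ncard : ℤ) -
  ({y | Removable l y ∧ res e y = res e x ∧ y.1 < x.1}.ncard : ℤ)

end PartitionSeq

open PartitionSeq
namespace PartitionSeq

theorem pext {l m : PartitionSeq} (h : ∀ i, l.parts i = m.parts i) : l = m := by
  cases l; cases m; simp only [mk.injEq]; exact funext h

theorem parts_eq_zero_of_length_le {l : PartitionSeq} {i : ℕ} (h : l.length ≤ i) :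
    l.parts i = 0 := by
  obtain ⟨N, hN⟩ := l.eventually_zero
  have hne : {N | ∀ i, N ≤ i → l.parts i = 0}.Nonempty := ⟨N, hN⟩
  exact Nat.sInf_mem hne i h

theorem length_le_of_forall {l : PartitionSeq} {N : ℕ} (h : ∀ i, N ≤ i → l.parts i = 0) :
    l.length ≤ N := Nat.sInf_le h

theorem lt_length_of_parts_ne_zero {l : PartitionSeq} {i : ℕ} (h : l.parts i ≠ 0) :
    i < l.length := by
  by_contra hc
  exact h (parts_eq_zero_of_length_le (not_lt.1 hc))

/-- beta number of row `i` with `k` beads. -/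
def bnum (k : ℕ) (l : PartitionSeq) (i : ℕ) : ℕ := l.parts i + (k - 1 - i)

theorem betaSet_eq (l : PartitionSeq) (k : ℕ) :
    l.betaSet k = (Finset.range k).image (bnum k l) := rfl

theorem bnum_lt_bnum {k : ℕ} (l : PartitionSeq) {i j : ℕ} (hij : i < j) (hj : j < k) :
    bnum k l j < bnum k l i := by
  have := l.antitone hij.le
  unfold bnum; omega

theorem mem_cells {l : PartitionSeq} {x : ℕ × ℕ} : x ∈ cells l ↔ x.2 < l.parts x.1 :=
  Iff.rfl

theorem parts_le_of_cells_subset {l n : PartitionSeq} (h : cells l ⊆ cells n) (i : ℕ) :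
    l.parts i ≤ n.parts i := by
  by_contra hc
  have : (i, n.parts i) ∈ cells l := by simp [mem_cells]; omega
  have := h this
  simp [mem_cells] at this

/-- parts-level description of removing an `e`-ribbon from `n`, giving `l`,
with head row `r1` and tail row `r2`. -/
def RR (e : ℕ) (n l : PartitionSeq) (r1 r2 : ℕ) : Prop :=
  r1 ≤ r2 ∧
  (∀ i, i < r1 → l.parts i = n.parts i) ∧
  (∀ i, r2 < i → l.parts i = n.parts i) ∧
  (∀ i, r1 ≤ i → i < r2 → l.parts i + 1 = n.parts (i + 1)) ∧
  l.parts r2 < n.parts r2 ∧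
  l.parts r2 + e = n.parts r1 + (r2 - r1)

theorem RR.parts_lt {e : ℕ} {n l : PartitionSeq} {r1 r2 : ℕ} (h : RR e n l r1 r2) :
    ∀ i, r1 ≤ i → i ≤ r2 → l.parts i < n.parts i := by
  obtain ⟨h12, hlow, hhigh, hmid, hr2, heq⟩ := h
  intro i h1 h2
  rcases eq_or_lt_of_le h2 with rfl | h2
  · exact hr2
  · have := hmid i h1 h2
    have hn : n.parts (i+1) ≤ n.parts i := n.antitone (by omega)
    omega

theorem RR.parts_le {e : ℕ} {n l : PartitionSeq} {r1 r2 : ℕ} (h : RR e n l r1 r2) :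
    ∀ i, l.parts i ≤ n.parts i := by
  intro i
  have hlt := h.parts_lt
  obtain ⟨h12, hlow, hhigh, hmid, hr2, heq⟩ := h
  rcases lt_or_ge i r1 with h1 | h1
  · exact (hlow i h1).le
  rcases le_or_gt i r2 with h2 | h2
  · exact (hlt i h1 h2).le
  · exact (hhigh i h2).le

theorem RR.r2_lt_length {e : ℕ} {n l : PartitionSeq} {r1 r2 : ℕ} (h : RR e n l r1 r2) :
    r2 < n.length := by
  apply lt_length_of_parts_ne_zero
  have := h.parts_lt r2 h.1 le_rfl
  omega

end PartitionSeq
namespace PartitionSeq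

theorem mem_skew {l n : PartitionSeq} {x : ℕ × ℕ} :
    x ∈ cells n \ cells l ↔ l.parts x.1 ≤ x.2 ∧ x.2 < n.parts x.1 := by
  simp only [Set.mem_diff, mem_cells, not_lt]; tauto

/-- one step along a rim hook, going down or left. -/
def rstep (l : PartitionSeq) (p : ℕ × ℕ) : ℕ × ℕ :=
  if p.2 = l.parts p.1 then (p.1 + 1, p.2) else (p.1, p.2 - 1)

/-- the rim-hook path starting at `s`. -/
def rpath (l : PartitionSeq) (s : ℕ × ℕ) (j : ℕ) : ℕ × ℕ := (rstep l)^[j] s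

theorem rpath_succ (l : PartitionSeq) (s : ℕ × ℕ) (j : ℕ) :
    rpath l s (j + 1) = rstep l (rpath l s j) := Function.iterate_succ_apply' _ _ _

/-- rows lie in `[r1,r2]`, cells are in the skew diagram, and the diagonal
index increases by one each step. -/
theorem RR.path_inv {e : ℕ} {n l : PartitionSeq} {r1 r2 : ℕ} (h : RR e n l r1 r2) :
    ∀ j < e, r1 ≤ (rpath l (r1, n.parts r1 - 1) j).1 ∧
      (rpath l (r1, n.parts r1 - 1) j).1 ≤ r2 ∧
      l.parts (rpath l (r1, n.parts r1 - 1) j).1 ≤ (rpath l (r1, n.parts r1 - 1) j).2 ∧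
      (rpath l (r1, n.parts r1 - 1) j).2 < n.parts (rpath l (r1, n.parts r1 - 1) j).1 ∧
      (rpath l (r1, n.parts r1 - 1) j).1 + n.parts r1
        = r1 + (rpath l (r1, n.parts r1 - 1) j).2 + j + 1 := by
  have hlt := h.parts_lt
  intro j
  induction j with
  | zero =>
    intro _
    have h1 : l.parts r1 < n.parts r1 := hlt r1 le_rfl h.1
    simp only [rpath, Function.iterate_zero, id]
    exact ⟨le_rfl, h.1, by omega, by omega, by omega⟩
  | succ j ih =>
    intro hje
    have ihh := ih (by omega)
    set p := rpath l (r1, n.parts r1 - 1) j with hp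
    obtain ⟨i1, i2, i3, i4, i5⟩ := ihh
    rw [rpath_succ, ← hp]
    unfold rstep
    obtain ⟨h12, hlow, hhigh, hmid, hr2, heq⟩ := h
    by_cases hc : p.2 = l.parts p.1
    · -- down step
      rw [if_pos hc]
      have hprow : p.1 < r2 := by
        rcases eq_or_lt_of_le i2 with hr | hr
        · exfalso; rw [hr] at hc i5; omega
        · exact hr
      have hnext : l.parts p.1 + 1 = n.parts (p.1 + 1) := hmid p.1 i1 hprow
      have hla : l.parts (p.1 + 1) ≤ l.parts p.1 := l.antitone (by omega)
      exact ⟨by omega, by omega, by simp; omega, by simp; omega, by simp; omega⟩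
    · -- left step
      rw [if_neg hc]
      have hpos : 0 < p.2 := by omega
      have hrow2 : p.1 ≤ r2 := i2
      exact ⟨i1, i2, by simp; omega, by simp; omega, by simp; omega⟩

theorem RR.skew_diag_unique {e : ℕ} {n l : PartitionSeq} {r1 r2 : ℕ} (h : RR e n l r1 r2)
    {x y : ℕ × ℕ} (hx : x ∈ cells n \ cells l) (hy : y ∈ cells n \ cells l)
    (hd : x.1 + y.2 = y.1 + x.2) : x = y := by
  obtain ⟨h12, hlow, hhigh, hmid, hr2, heq⟩ := h
  have hxr : r1 ≤ x.1 ∧ x.1 ≤ r2 := by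
    rw [mem_skew] at hx
    constructor
    · by_contra hc; have := hlow x.1 (by omega); omega
    · by_contra hc; have := hhigh x.1 (by omega); omega
  have hyr : r1 ≤ y.1 ∧ y.1 ≤ r2 := by
    rw [mem_skew] at hy
    constructor
    · by_contra hc; have := hlow y.1 (by omega); omega
    · by_contra hc; have := hhigh y.1 (by omega); omega
  rw [mem_skew] at hx hy
  -- wlog-type argument on rows
  have key : ∀ a b : ℕ × ℕ, a ∈ cells n \ cells l → b ∈ cells n \ cells l →
      r1 ≤ a.1 → a.1 ≤ r2 → r1 ≤ b.1 → b.1 ≤ r2 → a.1 < b.1 →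
      a.1 + b.2 = b.1 + a.2 → False := by
    intro a b ha hb ha1 ha2 hb1 hb2 hab hdd
    rw [mem_skew] at ha hb
    have hstep : b.2 < n.parts b.1 := hb.2
    have hmm : l.parts (b.1 - 1) + 1 = n.parts b.1 := by
      have := hmid (b.1 - 1) (by omega) (by omega)
      have : b.1 - 1 + 1 = b.1 := by omega
      rw [← this]
      exact hmid (b.1 - 1) (by omega) (by omega)
    have hmon : l.parts (b.1 - 1) ≤ l.parts a.1 := l.antitone (by omega)
    omega
  rcases lt_trichotomy x.1 y.1 with hc | hc | hc
  · exact absurd (key x y (mem_skew.2 hx) (mem_skew.2 hy) hxr.1 hxr.2 hyr.1 hyr.2 hc hd) (by simp)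
  · have : x.2 = y.2 := by omega
    exact Prod.ext hc this
  · exact absurd (key y x (mem_skew.2 hy) (mem_skew.2 hx) hyr.1 hyr.2 hxr.1 hxr.2 hc hd.symm) (by simp)

end PartitionSeq
namespace PartitionSeq

theorem RR.removeRibbon {e : ℕ} {n l : PartitionSeq} {r1 r2 : ℕ}
    (h : RR e n l r1 r2) (he : 1 ≤ e) : RemoveRibbon e n l := by
  have hinv := h.path_inv
  have hle := h.parts_le
  have hdu := fun {x y} => h.skew_diag_unique (x := x) (y := y)
  set c := rpath l (r1, n.parts r1 - 1) with hc
  constructor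
  · intro x hx
    rw [mem_cells] at hx ⊢
    exact lt_of_lt_of_le hx (hle x.1)
  refine ⟨c, ?_, ?_, ?_⟩
  · -- image
    ext x
    simp only [Set.mem_image, Set.mem_Iio]
    constructor
    · intro hx
      obtain ⟨_, hlow, hhigh, _, _, heq⟩ := h
      have hx1 : r1 ≤ x.1 ∧ x.1 ≤ r2 := by
        rw [mem_skew] at hx
        constructor
        · by_contra hcon; have := hlow x.1 (by omega); omega
        · by_contra hcon; have := hhigh x.1 (by omega); omega
      rw [mem_skew] at hx
      have hnn : n.parts x.1 ≤ n.parts r1 := n.antitone hx1.1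
      have hll : l.parts r2 ≤ l.parts x.1 := l.antitone hx1.2
      refine ⟨x.1 + n.parts r1 - (r1 + x.2 + 1), by omega, ?_⟩
      set j := x.1 + n.parts r1 - (r1 + x.2 + 1) with hj
      have hje : j < e := by omega
      obtain ⟨i1, i2, i3, i4, i5⟩ := hinv j hje
      apply hdu (mem_skew.2 ⟨i3, i4⟩) (mem_skew.2 hx)
      omega
    · rintro ⟨j, hj, rfl⟩
      obtain ⟨i1, i2, i3, i4, i5⟩ := hinv j hj
      exact mem_skew.2 ⟨i3, i4⟩
  · -- injective
    intro j hj j' hj' hjj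
    simp only [Set.mem_Iio] at hj hj'
    obtain ⟨_, _, _, _, i5⟩ := hinv j hj
    obtain ⟨_, _, _, _, i5'⟩ := hinv j' hj'
    rw [hjj] at i5
    omega
  · -- steps
    intro i hi
    obtain ⟨i1, i2, i3, i4, i5⟩ := hinv i (by omega)
    have hstep : c (i + 1) = rstep l (c i) := rpath_succ _ _ _
    unfold rstep at hstep
    by_cases hcc : (c i).2 = l.parts (c i).1
    · left; rw [hstep, if_pos hcc]
    · right
      rw [hstep, if_neg hcc]
      constructor
      · simp; omega
      · simp

end PartitionSeq
namespace PartitionSeq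

theorem steps_mono {e : ℕ} {c : ℕ → ℕ × ℕ} (hs : RibbonSteps e c) :
    ∀ d j, j + d < e → (c j).1 ≤ (c (j + d)).1 ∧ (c (j + d)).2 ≤ (c j).2 ∧
      (c (j + d)).1 + (c j).2 = (c j).1 + (c (j + d)).2 + d := by
  intro d
  induction d with
  | zero => intro j _; exact ⟨le_rfl, le_rfl, rfl⟩
  | succ d ih =>
    intro j hd
    obtain ⟨m1, m2, m3⟩ := ih j (by omega)
    have hstep := hs (j + d) (by omega)
    have : j + (d + 1) = (j + d) + 1 := by omega
    rw [this]
    rcases hstep with hdown | ⟨hl1, hl2⟩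
    · rw [hdown]; simp; omega
    · omega

theorem steps_succ_bound {e : ℕ} {c : ℕ → ℕ × ℕ} (hs : RibbonSteps e c) :
    ∀ j, j + 1 < e → (c j).1 ≤ (c (j + 1)).1 ∧ (c (j + 1)).1 ≤ (c j).1 + 1 := by
  intro j hj
  rcases hs j hj with hdown | ⟨hl1, hl2⟩
  · rw [hdown]; simp
  · omega

theorem steps_ivt {e : ℕ} {c : ℕ → ℕ × ℕ} (hs : RibbonSteps e c) :
    ∀ j < e, ∀ i, (c 0).1 ≤ i → i ≤ (c j).1 → ∃ j' ≤ j, (c j').1 = i := by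
  intro j
  induction j with
  | zero => intro _ i h1 h2; exact ⟨0, le_rfl, by omega⟩
  | succ j ih =>
    intro hj i h1 h2
    rcases le_or_gt i (c j).1 with hle | hlt
    · obtain ⟨j', hj', hj''⟩ := ih (by omega) i h1 hle
      exact ⟨j', by omega, hj''⟩
    · obtain ⟨b1, b2⟩ := steps_succ_bound hs j hj
      exact ⟨j + 1, le_rfl, by omega⟩

theorem removeRibbon_RR {e : ℕ} {n l : PartitionSeq} (he : 1 ≤ e)
    (h : RemoveRibbon e n l) : ∃ r1 r2, RR e n l r1 r2 := by
  obtain ⟨hsub, c, himg, hinj, hsteps⟩ := h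
  have hle : ∀ i, l.parts i ≤ n.parts i := parts_le_of_cells_subset hsub
  set r1 := (c 0).1 with hr1
  set r2 := (c (e - 1)).1 with hr2
  have hmem : ∀ j, j < e → c j ∈ cells n \ cells l := by
    intro j hj; rw [himg]; exact ⟨j, hj, rfl⟩
  have hsk : ∀ j, j < e → l.parts (c j).1 ≤ (c j).2 ∧ (c j).2 < n.parts (c j).1 := by
    intro j hj; exact mem_skew.1 (hmem j hj)
  have hid : ∀ j, j < e → (c j).1 + (c 0).2 = (c 0).1 + (c j).2 + j := by
    intro j hj
    have := steps_mono hsteps j 0 (by omega)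
    simpa using this.2.2
  have hlb : ∀ j, j < e → r1 ≤ (c j).1 := by
    intro j hj
    have := steps_mono hsteps j 0 (by omega)
    simpa using this.1
  have hub : ∀ j, j < e → (c j).1 ≤ r2 := by
    intro j hj
    have := steps_mono hsteps (e - 1 - j) j (by omega)
    have hh : j + (e - 1 - j) = e - 1 := by omega
    rw [hh] at this
    exact this.1
  have hfind : ∀ x : ℕ × ℕ, l.parts x.1 ≤ x.2 → x.2 < n.parts x.1 → ∃ j < e, c j = x := by
    intro x h1 h2
    have : x ∈ cells n \ cells l := mem_skew.2 ⟨h1, h2⟩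
    rw [himg] at this
    obtain ⟨j, hj, hjx⟩ := this
    exact ⟨j, hj, hjx⟩
  have he1 : e - 1 < e := by omega
  have hr12 : r1 ≤ r2 := hlb (e - 1) he1
  -- low rows
  have hlow : ∀ i, i < r1 → l.parts i = n.parts i := by
    intro i hi
    by_contra hne
    have hlt : l.parts i < n.parts i := lt_of_le_of_ne (hle i) hne
    obtain ⟨j, hj, hjx⟩ := hfind (i, l.parts i) le_rfl hlt
    have := hlb j hj
    rw [hjx] at this
    simp at this; omega
  have hhigh : ∀ i, r2 < i → l.parts i = n.parts i := by
    intro i hi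
    by_contra hne
    have hlt : l.parts i < n.parts i := lt_of_le_of_ne (hle i) hne
    obtain ⟨j, hj, hjx⟩ := hfind (i, l.parts i) le_rfl hlt
    have := hub j hj
    rw [hjx] at this
    simp at this; omega
  -- tail row strict
  have htail : l.parts r2 < n.parts r2 := by
    have h0 := hsk (e - 1) he1
    rw [← hr2] at h0
    omega
  -- head column
  have hc0 : (c 0).2 + 1 = n.parts r1 := by
    have h0 := hsk 0 (by omega)
    rw [← hr1] at h0
    rcases eq_or_lt_of_le (Nat.succ_le_of_lt h0.2) with hh | hh
    · exact hh
    · exfalso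
      obtain ⟨j, hj, hjx⟩ := hfind (r1, (c 0).2 + 1) (by simp; omega) (by simp; omega)
      have hidj := hid j hj
      rw [hjx] at hidj
      simp at hidj; omega
  -- tail column
  have hce : (c (e - 1)).2 = l.parts r2 := by
    have h0 := hsk (e - 1) he1
    rw [← hr2] at h0
    rcases eq_or_lt_of_le h0.1 with hh | hh
    · exact hh.symm
    · exfalso
      obtain ⟨j, hj, hjx⟩ := hfind (r2, (c (e - 1)).2 - 1) (by simp; omega) (by simp; omega)
      have hidj := hid j hj
      have hide := hid (e - 1) he1
      rw [hjx] at hidj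
      simp at hidj; omega
  -- equation
  have hide := hid (e - 1) he1
  -- middle rows
  have hmid : ∀ i, r1 ≤ i → i < r2 → l.parts i + 1 = n.parts (i + 1) := by
    intro i hi1 hi2
    classical
    have hex : ∃ j, j < e ∧ (c j).1 = i + 1 := by
      obtain ⟨j', hj', hjx⟩ := steps_ivt hsteps (e - 1) he1 (i + 1) (by omega) (by omega)
      exact ⟨j', by omega, hjx⟩
    obtain ⟨hj0e, hj0x⟩ := Nat.find_spec hex
    set j0 := Nat.find hex with hj0def
    have hj0ne : j0 ≠ 0 := by
      intro hh
      rw [hh] at hj0x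
      omega
    obtain ⟨jp, hjp⟩ : ∃ jp, j0 = jp + 1 := ⟨j0 - 1, by omega⟩
    have hjpe : jp < e := by omega
    have hjpne : (c jp).1 ≠ i + 1 := by
      have := Nat.find_min hex (m := jp) (by omega)
      push_neg at this
      intro hh
      exact absurd (this (by omega)) (by omega)
    have hstep := hsteps jp (by omega)
    rw [← hjp] at hstep
    rcases hstep with hdown | ⟨hl1, hl2⟩
    · -- down step
      have hrow : (c jp).1 = i := by rw [hdown] at hj0x; simp at hj0x; omega
      have hcol : (c j0).2 = (c jp).2 := by rw [hdown]
      set col := (c jp).2 with hcoldef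
      have hskp := hsk jp hjpe
      have hsk0 := hsk j0 hj0e
      rw [hrow] at hskp
      rw [hj0x, hcol] at hsk0
      have hidp := hid jp hjpe
      rw [hrow] at hidp
      -- claim A : col = l.parts i
      have hA : col = l.parts i := by
        rcases eq_or_lt_of_le hskp.1 with hh | hh
        · exact hh.symm
        · exfalso
          obtain ⟨jw, hjw, hjwx⟩ := hfind (i, col - 1) (by simp; omega) (by simp; omega)
          have hidw := hid jw hjw
          rw [hjwx] at hidw
          have hjwj0 : jw = j0 := by simp at hidw; omega
          rw [hjwj0] at hjwx
          rw [hjwx] at hj0x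
          simp at hj0x
      -- claim B : col + 1 = n.parts (i + 1)
      have hB : col + 1 = n.parts (i + 1) := by
        rcases eq_or_lt_of_le (Nat.succ_le_of_lt hsk0.2) with hh | hh
        · exact hh
        · exfalso
          obtain ⟨jw, hjw, hjwx⟩ := hfind (i + 1, col + 1) (by simp; omega) (by simp; omega)
          have hidw := hid jw hjw
          rw [hjwx] at hidw
          have hjwjp : jw = jp := by simp at hidw; omega
          rw [hjwjp] at hjwx
          apply hjpne
          rw [hjwx]
      omega
    · exact absurd (hl2.trans (by omega) : (c j0).1 = i + 1).symm (by
        intro hh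
        exact hjpne (by omega))
  exact ⟨r1, r2, hr12, hlow, hhigh, hmid, htail, by omega⟩

end PartitionSeq
namespace PartitionSeq

/-- number of beads with residue `r` mod `d` on the `k`-bead abacus. -/
def rcount (d k : ℕ) (l : PartitionSeq) (r : ℕ) : ℕ :=
  ((Finset.range k).filter (fun i => bnum k l i % d = r)).card

theorem bnum_injOn (l : PartitionSeq) (k : ℕ) : Set.InjOn (bnum k l) (Finset.range k) := by
  intro i hi j hj hij
  simp only [Finset.coe_range, Set.mem_Iio] at hi hj
  by_contra hne
  rcases lt_or_gt_of_ne hne with hh | hh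
  · exact absurd hij (bnum_lt_bnum l hh hj).ne'
  · exact absurd hij (bnum_lt_bnum l hh hi).ne

theorem rcount_eq_filter_card (d k : ℕ) (l : PartitionSeq) (r : ℕ) :
    rcount d k l r = ((l.betaSet k).filter (fun y => y % d = r)).card := by
  rw [betaSet_eq, rcount, Finset.filter_image]
  rw [Finset.card_image_of_injOn]
  exact (bnum_injOn l k).mono (by intro x hx; simpa using (Finset.mem_filter.1 hx).1)

theorem length_le_of_parts_le {l n : PartitionSeq} {k : ℕ} (h : ∀ i, l.parts i ≤ n.parts i)
    (hk : n.length ≤ k) : l.length ≤ k := by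
  apply length_le_of_forall
  intro i hi
  have := parts_eq_zero_of_length_le (l := n) (i := i) (by omega)
  have := h i
  omega

theorem RR.r2_lt {e k : ℕ} {n l : PartitionSeq} {r1 r2 : ℕ} (h : RR e n l r1 r2)
    (hk : n.length ≤ k) : r2 < k := lt_of_lt_of_le h.r2_lt_length hk

theorem RR.rcount_eq {e k : ℕ} {n l : PartitionSeq} {r1 r2 : ℕ} (h : RR e n l r1 r2)
    (hk : n.length ≤ k) (r : ℕ) : rcount e k l r = rcount e k n r := by
  have hr2k : r2 < k := h.r2_lt hk
  obtain ⟨h12, hlow, hhigh, hmid, hr2, heq⟩ := h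
  have hb1 : ∀ i, i < r1 → bnum k l i = bnum k n i := by
    intro i hi; unfold bnum; rw [hlow i hi]
  have hb4 : ∀ i, r2 < i → bnum k l i = bnum k n i := by
    intro i hi; unfold bnum; rw [hhigh i hi]
  have hb2 : ∀ i, r1 ≤ i → i < r2 → bnum k l i = bnum k n (i + 1) := by
    intro i hi1 hi2; have := hmid i hi1 hi2; unfold bnum; omega
  have hb3 : bnum k l r2 + e = bnum k n r1 := by
    unfold bnum; omega
  unfold rcount
  apply Finset.card_bij'
    (i := fun i _ => if i < r1 then i else if i < r2 then i + 1 else if i = r2 then r1 else i)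
    (j := fun j _ => if j < r1 then j else if j = r1 then r2 else if j ≤ r2 then j - 1 else j)
  · intro a ha
    simp only [Finset.mem_filter, Finset.mem_range] at ha ⊢
    obtain ⟨hak, har⟩ := ha
    by_cases h1 : a < r1
    · simp only [if_pos h1]; rw [← hb1 a h1]; exact ⟨hak, har⟩
    by_cases h2 : a < r2
    · simp only [if_neg h1, if_pos h2]; rw [← hb2 a (by omega) h2]; exact ⟨by omega, har⟩
    by_cases h3 : a = r2
    · simp only [if_neg h1, if_neg h2, if_pos h3]
      refine ⟨by omega, ?_⟩
      rw [h3] at har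
      rw [← hb3, Nat.add_mod_right]
      exact har
    · simp only [if_neg h1, if_neg h2, if_neg h3]
      rw [← hb4 a (by omega)]; exact ⟨hak, har⟩
  · intro b hb
    simp only [Finset.mem_filter, Finset.mem_range] at hb ⊢
    obtain ⟨hbk, hbr⟩ := hb
    by_cases h1 : b < r1
    · simp only [if_pos h1]; rw [hb1 b h1]; exact ⟨hbk, hbr⟩
    by_cases h2 : b = r1
    · simp only [if_neg h1, if_pos h2]
      refine ⟨by omega, ?_⟩
      rw [h2, ← hb3, Nat.add_mod_right] at hbr
      exact hbr
    by_cases h3 : b ≤ r2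
    · simp only [if_neg h1, if_neg h2, if_pos h3]
      rw [hb2 (b - 1) (by omega) (by omega)]
      have : b - 1 + 1 = b := by omega
      rw [this]; exact ⟨by omega, hbr⟩
    · simp only [if_neg h1, if_neg h2, if_neg h3]
      rw [hb4 b (by omega)]; exact ⟨hbk, hbr⟩
  · intro a ha
    simp only [Finset.mem_filter, Finset.mem_range] at ha
    split_ifs <;> omega
  · intro b hb
    simp only [Finset.mem_filter, Finset.mem_range] at hb
    split_ifs <;> omega

theorem RR.msize_lt {e k : ℕ} {n l : PartitionSeq} {r1 r2 : ℕ} (h : RR e n l r1 r2)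
    (hk : n.length ≤ k) :
    ∑ i ∈ Finset.range k, l.parts i < ∑ i ∈ Finset.range k, n.parts i := by
  apply Finset.sum_lt_sum (fun i _ => h.parts_le i)
  exact ⟨r2, Finset.mem_range.2 (h.r2_lt hk), h.parts_lt r2 h.1 le_rfl⟩

end PartitionSeq
namespace PartitionSeq

theorem mem_betaSet {l : PartitionSeq} {k x : ℕ} :
    x ∈ l.betaSet k ↔ ∃ i, i < k ∧ bnum k l i = x := by
  rw [betaSet_eq]
  simp [Finset.mem_image, Finset.mem_range]

/-- Every bead can be pushed up its runner: no bead has a free spot `e` below it. -/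
def Reduced (e k : ℕ) (l : PartitionSeq) : Prop :=
  ∀ p ∈ l.betaSet k, e ≤ p → p - e ∈ l.betaSet k

theorem Reduced.no_ribbon {e k : ℕ} {κ : PartitionSeq} (hred : Reduced e k κ)
    (hk : κ.length ≤ k) (he : 1 ≤ e) : ¬ ∃ m, RemoveRibbon e κ m := by
  rintro ⟨m, hm⟩
  obtain ⟨r1, r2, hrr⟩ := removeRibbon_RR he hm
  have hr2k : r2 < k := hrr.r2_lt hk
  obtain ⟨h12, hlow, hhigh, hmid, hr2lt, heq⟩ := hrr
  have hr1k : r1 < k := by omega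
  have hp : bnum k κ r1 ∈ κ.betaSet k := mem_betaSet.2 ⟨r1, hr1k, rfl⟩
  have hpe : e ≤ bnum k κ r1 := by unfold bnum; omega
  obtain ⟨j, hjk, hj⟩ := mem_betaSet.1 (hred _ hp hpe)
  have hjval : bnum k κ j = bnum k m r2 := by
    rw [hj]; unfold bnum; omega
  unfold bnum at hjval
  rcases le_or_gt j r2 with hc | hc
  · have h1 : κ.parts r2 ≤ κ.parts j := κ.antitone hc
    omega
  · have h1 : κ.parts j = m.parts j := (hhigh j hc).symm
    have h2 : m.parts j ≤ m.parts r2 := m.antitone hc.le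
    omega

theorem exists_RR_of_not_reduced {e k : ℕ} {κ : PartitionSeq} (he : 1 ≤ e)
    (hk : κ.length ≤ k) (hnr : ¬ Reduced e k κ) : ∃ m r1 r2, RR e κ m r1 r2 := by
  unfold Reduced at hnr
  push_neg at hnr
  obtain ⟨p, hpB, hpe, hq⟩ := hnr
  obtain ⟨r1, hr1k, hbr1⟩ := mem_betaSet.1 hpB
  set q := p - e with hqdef
  have hqe : q + e = p := by omega
  set S := (Finset.range k).filter (fun j => q < bnum k κ j) with hS
  have hr1S : r1 ∈ S := by
    simp only [hS, Finset.mem_filter, Finset.mem_range]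
    exact ⟨hr1k, by omega⟩
  have hSne : S.Nonempty := ⟨r1, hr1S⟩
  set r2 := S.max' hSne with hr2def
  have hr2S : r2 ∈ S := S.max'_mem hSne
  have hr2k : r2 < k := by
    have := hr2S; simp only [hS, Finset.mem_filter, Finset.mem_range] at this; exact this.1
  have hqr2 : q < bnum k κ r2 := by
    have := hr2S; simp only [hS, Finset.mem_filter, Finset.mem_range] at this; exact this.2
  have hr1r2 : r1 ≤ r2 := S.le_max' r1 hr1S
  have hqnB : ∀ j, j < k → bnum k κ j ≠ q := by
    intro j hjk hcon
    exact hq (mem_betaSet.2 ⟨j, hjk, hcon⟩)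
  have hnext : ∀ j, r2 < j → j < k → bnum k κ j < q := by
    intro j h1 h2
    have hnS : j ∉ S := by
      intro hc
      exact absurd (S.le_max' j hc) (by omega)
    simp only [hS, Finset.mem_filter, Finset.mem_range, not_and, not_lt] at hnS
    have := hnS h2
    have := hqnB j h2
    omega
  have hpos : ∀ j, r1 < j → j ≤ r2 → 1 ≤ κ.parts j := by
    intro j h1 h2
    by_contra hcon
    have hz : κ.parts j = 0 := by omega
    have hjk : j < k := by omega
    have hb2j : bnum k κ r2 ≤ bnum k κ j := by
      rcases eq_or_lt_of_le h2 with hh | hh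
      · rw [hh]
      · exact (bnum_lt_bnum κ hh hr2k).le
    have hbj : bnum k κ j = k - 1 - j := by unfold bnum; omega
    -- so q < k - 1 - j ; then j' := k - 1 - q has parts 0 and bnum = q
    have hqlt : q < k - 1 - j := by omega
    set j' := k - 1 - q with hj'
    have hj'k : j' < k := by omega
    have hzz : κ.parts j' = 0 := by
      have := κ.antitone (show j ≤ j' by omega)
      omega
    apply hqnB j' hj'k
    unfold bnum; omega
  have hq2 : k - 1 - r2 ≤ q := by
    rcases eq_or_lt_of_le (show r2 ≤ k - 1 by omega) with hh | hh
    · omega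
    · have := hnext (r2 + 1) (by omega) (by omega)
      unfold bnum at this; omega
  unfold bnum at hqr2 hbr1
  -- define the new partition
  set f : ℕ → ℕ := fun i =>
    if i < r1 then κ.parts i else if i < r2 then κ.parts (i + 1) - 1
    else if i = r2 then q - (k - 1 - r2) else κ.parts i with hfdef
  have hfanti : ∀ i, f (i + 1) ≤ f i := by
    intro i
    by_cases c1 : i + 1 < r1
    · have h1 : f i = κ.parts i := by simp only [hfdef]; rw [if_pos (by omega)]
      have h2 : f (i + 1) = κ.parts (i + 1) := by simp only [hfdef]; rw [if_pos c1]
      rw [h1, h2]; exact κ.antitone (by omega)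
    by_cases c2 : i + 1 = r1
    · have h1 : f i = κ.parts i := by simp only [hfdef]; rw [if_pos (by omega)]
      by_cases c3 : r1 < r2
      · have h2 : f (i + 1) = κ.parts (i + 1 + 1) - 1 := by
          simp only [hfdef]; rw [if_neg (by omega), if_pos (by omega)]
        rw [h1, h2]
        have := κ.antitone (show i ≤ i + 1 + 1 by omega)
        omega
      · have h2 : f (i + 1) = q - (k - 1 - r2) := by
          simp only [hfdef]; rw [if_neg (by omega), if_neg (by omega), if_pos (by omega)]
        rw [h1, h2]
        have := κ.antitone (show i ≤ r2 by omega)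
        omega
    by_cases c4 : i + 1 < r2
    · have h1 : f i = κ.parts (i + 1) - 1 := by
        simp only [hfdef]; rw [if_neg (by omega), if_pos (by omega)]
      have h2 : f (i + 1) = κ.parts (i + 1 + 1) - 1 := by
        simp only [hfdef]; rw [if_neg (by omega), if_pos c4]
      rw [h1, h2]
      have := κ.antitone (show i + 1 ≤ i + 1 + 1 by omega)
      omega
    by_cases c5 : i + 1 = r2
    · have h1 : f i = κ.parts (i + 1) - 1 := by
        simp only [hfdef]; rw [if_neg (by omega), if_pos (by omega)]
      have h2 : f (i + 1) = q - (k - 1 - r2) := by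
        simp only [hfdef]; rw [if_neg (by omega), if_neg (by omega), if_pos c5]
      rw [h1, h2]
      have hp1 := hpos r2 (by omega) le_rfl
      have := κ.antitone (show i + 1 ≤ r2 by omega)
      omega
    by_cases c6 : i = r2
    · have h1 : f i = q - (k - 1 - r2) := by
        simp only [hfdef]; rw [if_neg (by omega), if_neg (by omega), if_pos c6]
      have h2 : f (i + 1) = κ.parts (i + 1) := by
        simp only [hfdef]; rw [if_neg (by omega), if_neg (by omega), if_neg (by omega)]
      rw [h1, h2]
      by_cases c7 : r2 + 1 < k
      · have := hnext (r2 + 1) (by omega) c7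
        unfold bnum at this
        have hmm := κ.antitone (show r2 + 1 ≤ i + 1 by omega)
        omega
      · have hz : κ.parts (i + 1) = 0 := parts_eq_zero_of_length_le (by omega)
        omega
    · have h1 : f i = κ.parts i := by
        simp only [hfdef]; rw [if_neg (by omega), if_neg (by omega), if_neg (by omega)]
      have h2 : f (i + 1) = κ.parts (i + 1) := by
        simp only [hfdef]; rw [if_neg (by omega), if_neg (by omega), if_neg (by omega)]
      rw [h1, h2]; exact κ.antitone (by omega)
  set m : PartitionSeq := ⟨f, fun i j hij => antitone_nat_of_succ_le hfanti hij,
    ⟨k + r2 + 1, by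
      intro i hi
      simp only [hfdef]
      rw [if_neg (by omega), if_neg (by omega), if_neg (by omega)]
      exact parts_eq_zero_of_length_le (by omega)⟩⟩ with hmdef
  have hmp : ∀ i, m.parts i = f i := fun i => rfl
  refine ⟨m, r1, r2, hr1r2, ?_, ?_, ?_, ?_, ?_⟩
  · intro i hi
    rw [hmp]; simp only [hfdef]; rw [if_pos hi]
  · intro i hi
    rw [hmp]; simp only [hfdef]; rw [if_neg (by omega), if_neg (by omega), if_neg (by omega)]
  · intro i hi1 hi2
    rw [hmp]; simp only [hfdef]; rw [if_neg (by omega), if_pos hi2]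
    have := hpos (i + 1) (by omega) (by omega)
    omega
  · rw [hmp]; simp only [hfdef]
    rw [if_neg (by omega), if_neg (by omega), if_pos trivial]
    omega
  · rw [hmp]; simp only [hfdef]
    rw [if_neg (by omega), if_neg (by omega), if_pos trivial]
    omega

end PartitionSeq
namespace PartitionSeq

theorem core_exists {e k : ℕ} (he : 1 ≤ e) :
    ∀ (N : ℕ) (l : PartitionSeq), l.length ≤ k → (∑ i ∈ Finset.range k, l.parts i ≤ N) →
    ∃ κ, Relation.ReflTransGen (RemoveRibbon e) l κ ∧ Reduced e k κ ∧ κ.length ≤ k ∧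
      ∀ r, rcount e k κ r = rcount e k l r := by
  intro N
  induction N with
  | zero =>
    intro l hl hsz
    by_cases hred : Reduced e k l
    · exact ⟨l, Relation.ReflTransGen.refl, hred, hl, fun r => rfl⟩
    · obtain ⟨m, r1, r2, hrr⟩ := exists_RR_of_not_reduced he hl hred
      have := hrr.msize_lt hl
      omega
  | succ N ih =>
    intro l hl hsz
    by_cases hred : Reduced e k l
    · exact ⟨l, Relation.ReflTransGen.refl, hred, hl, fun r => rfl⟩
    · obtain ⟨m, r1, r2, hrr⟩ := exists_RR_of_not_reduced he hl hred
      have hlt := hrr.msize_lt hl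
      have hml : m.length ≤ k := length_le_of_parts_le hrr.parts_le hl
      obtain ⟨κ, hreach, hred', hlen, hcounts⟩ := ih m hml (by omega)
      exact ⟨κ, Relation.ReflTransGen.head (hrr.removeRibbon he) hreach, hred', hlen,
        fun r => (hcounts r).trans (hrr.rcount_eq hl r)⟩

theorem reach_counts {e k : ℕ} {l κ : PartitionSeq} (he : 1 ≤ e)
    (h : Relation.ReflTransGen (RemoveRibbon e) l κ) (hl : l.length ≤ k) :
    κ.length ≤ k ∧ ∀ r, rcount e k κ r = rcount e k l r := by
  induction h with
  | refl => exact ⟨hl, fun r => rfl⟩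
  | tail hab hbc ih =>
    obtain ⟨hbl, hbc'⟩ := ih
    obtain ⟨r1, r2, hrr⟩ := removeRibbon_RR he hbc
    exact ⟨length_le_of_parts_le hrr.parts_le hbl,
      fun r => (hrr.rcount_eq hbl r).trans (hbc' r)⟩

theorem dc_range {S : Finset ℕ} (h : ∀ j, j + 1 ∈ S → j ∈ S) :
    S = Finset.range S.card := by
  have key : ∀ d a, a + d ∈ S → a ∈ S := by
    intro d
    induction d with
    | zero => intro a ha; simpa using ha
    | succ d ih =>
      intro a ha
      have : a + d + 1 ∈ S := by
        have hh : a + (d + 1) = a + d + 1 := by omega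
        rwa [hh] at ha
      exact ih a (h (a + d) this)
  have hsub : S ⊆ Finset.range S.card := by
    intro x hx
    have hIic : Finset.Iic x ⊆ S := by
      intro y hy
      simp only [Finset.mem_Iic] at hy
      have : y + (x - y) ∈ S := by
        have hh : y + (x - y) = x := by omega
        rwa [hh]
      exact key (x - y) y this
    have := Finset.card_le_card hIic
    rw [Nat.card_Iic] at this
    exact Finset.mem_range.2 (by omega)
  exact Finset.eq_of_subset_of_card_le hsub (by rw [Finset.card_range])

theorem reduced_mem_iff {e k : ℕ} {l : PartitionSeq} (he : 1 ≤ e)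
    (hred : Reduced e k l) (x : ℕ) :
    x ∈ l.betaSet k ↔ x / e < rcount e k l (x % e) := by
  rw [rcount_eq_filter_card]
  set B := l.betaSet k with hB
  set S := B.filter (fun y => y % e = x % e) with hSdef
  have hinj : Set.InjOn (fun y => y / e) S := by
    intro y hy y' hy' hyy
    simp only [hSdef, Finset.coe_filter, Set.mem_setOf_eq] at hy hy'
    have h1 := Nat.div_add_mod y e
    have h2 := Nat.div_add_mod y' e
    simp only at hyy
    have h3 : e * (y / e) = e * (y' / e) := by rw [hyy]
    omega
  set T := S.image (fun y => y / e) with hTdef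
  have hTcard : T.card = S.card := Finset.card_image_of_injOn hinj
  have hdc : ∀ j, j + 1 ∈ T → j ∈ T := by
    intro j hj
    simp only [hTdef, Finset.mem_image] at hj ⊢
    obtain ⟨y, hyS, hyj⟩ := hj
    have hyB : y ∈ B := (Finset.mem_filter.1 hyS).1
    have hyr : y % e = x % e := (Finset.mem_filter.1 hyS).2
    have h1 := Nat.div_add_mod y e
    rw [hyj] at h1
    have hmul : e * (j + 1) = e * j + e := Nat.mul_succ e j
    have h4 : y % e < e := Nat.mod_lt _ (by omega)
    have hye : e ≤ y := by omega
    have hmem : y - e ∈ B := hred y hyB hye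
    have h5 : y - e = e * j + y % e := by omega
    have hmod : (y - e) % e = y % e := by
      rw [h5, Nat.mul_add_mod, Nat.mod_eq_of_lt h4]
    have hdiv : (y - e) / e = j := by
      rw [h5, Nat.mul_add_div (by omega : 0 < e), Nat.div_eq_of_lt h4]
      omega
    refine ⟨y - e, Finset.mem_filter.2 ⟨hmem, by rw [hmod, hyr]⟩, hdiv⟩
  have hTr := dc_range hdc
  constructor
  · intro hx
    have hxS : x ∈ S := Finset.mem_filter.2 ⟨hx, rfl⟩
    have : x / e ∈ T := Finset.mem_image_of_mem _ hxS
    rw [hTr, Finset.mem_range, hTcard] at this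
    exact this
  · intro hx
    have : x / e ∈ T := by
      rw [hTr, Finset.mem_range, hTcard]
      exact hx
    simp only [hTdef, Finset.mem_image] at this
    obtain ⟨y, hyS, hyx⟩ := this
    have hyr : y % e = x % e := (Finset.mem_filter.1 hyS).2
    have h1 := Nat.div_add_mod y e
    have h2 := Nat.div_add_mod x e
    have h3 : e * (y / e) = e * (x / e) := by rw [hyx]
    have : y = x := by omega
    rw [← this]
    exact (Finset.mem_filter.1 hyS).1

theorem strictAnti_image_eq :
    ∀ (k : ℕ) (f g : ℕ → ℕ), (∀ i j, i < j → j < k → f j < f i) →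
      (∀ i j, i < j → j < k → g j < g i) →
      (Finset.range k).image f = (Finset.range k).image g → ∀ i, i < k → f i = g i := by
  intro k
  induction k with
  | zero => intro f g _ _ _ i hi; omega
  | succ k ih =>
    intro f g hf hg himg
    have h0 : f 0 = g 0 := by
      have hf0 : f 0 ∈ (Finset.range (k + 1)).image g := by
        rw [← himg]; exact Finset.mem_image_of_mem f (Finset.mem_range.2 (Nat.succ_pos k))
      have hg0 : g 0 ∈ (Finset.range (k + 1)).image f := by
        rw [himg]; exact Finset.mem_image_of_mem g (Finset.mem_range.2 (Nat.succ_pos k))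
      obtain ⟨j, hj, hj2⟩ := Finset.mem_image.1 hf0
      obtain ⟨j', hj', hj2'⟩ := Finset.mem_image.1 hg0
      rw [Finset.mem_range] at hj hj'
      have h1 : g j ≤ g 0 := by
        rcases Nat.eq_zero_or_pos j with hh | hh
        · rw [hh]
        · exact (hg 0 j hh hj).le
      have h2 : f j' ≤ f 0 := by
        rcases Nat.eq_zero_or_pos j' with hh | hh
        · rw [hh]
        · exact (hf 0 j' hh hj').le
      omega
    have herase : ∀ (f : ℕ → ℕ), (∀ i j, i < j → j < k + 1 → f j < f i) →
        ((Finset.range (k + 1)).image f).erase (f 0) =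
          (Finset.range k).image (fun i => f (i + 1)) := by
      intro f hf
      ext x
      simp only [Finset.mem_erase, Finset.mem_image, Finset.mem_range]
      constructor
      · rintro ⟨hne, j, hj, rfl⟩
        have hj0 : j ≠ 0 := by rintro rfl; exact hne rfl
        exact ⟨j - 1, by omega, by congr 1; omega⟩
      · rintro ⟨j, hj, rfl⟩
        exact ⟨(hf 0 (j + 1) (by omega) (by omega)).ne, j + 1, by omega, rfl⟩
    have hrec := ih (fun i => f (i + 1)) (fun i => g (i + 1))
      (fun i j hij hj => hf (i + 1) (j + 1) (by omega) (by omega))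
      (fun i j hij hj => hg (i + 1) (j + 1) (by omega) (by omega))
      (by rw [← herase f hf, ← herase g hg, himg, h0])
    intro i hi
    rcases Nat.eq_zero_or_pos i with hh | hh
    · rw [hh]; exact h0
    · have := hrec (i - 1) (by omega)
      have hii : i - 1 + 1 = i := by omega
      rwa [hii] at this

theorem betaSet_inj {k : ℕ} {l m : PartitionSeq} (hl : l.length ≤ k) (hm : m.length ≤ k)
    (h : l.betaSet k = m.betaSet k) : l = m := by
  apply pext
  intro i
  rcases lt_or_ge i k with hi | hi
  · have := strictAnti_image_eq k (bnum k l) (bnum k m)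
      (fun i j hij hj => bnum_lt_bnum l hij hj)
      (fun i j hij hj => bnum_lt_bnum m hij hj)
      (by rw [← betaSet_eq, ← betaSet_eq, h]) i hi
    unfold bnum at this
    omega
  · rw [parts_eq_zero_of_length_le (by omega), parts_eq_zero_of_length_le (by omega)]

theorem same_core_iff_counts {e k : ℕ} {l m : PartitionSeq} (he : 1 ≤ e)
    (hl : l.length ≤ k) (hm : m.length ≤ k) :
    (∃ κ, IsECoreOf e κ l ∧ IsECoreOf e κ m) ↔
      ∀ r, rcount e k l r = rcount e k m r := by
  constructor
  · rintro ⟨κ, ⟨hκl, _⟩, ⟨hκm, _⟩⟩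
    intro r
    have h1 := (reach_counts he hκl hl).2 r
    have h2 := (reach_counts he hκm hm).2 r
    omega
  · intro hc
    obtain ⟨κl, hreachl, hredl, hlenl, hcl⟩ := core_exists he _ l hl le_rfl
    obtain ⟨κm, hreachm, hredm, hlenm, hcm⟩ := core_exists he _ m hm le_rfl
    have hBeq : κl.betaSet k = κm.betaSet k := by
      apply Finset.ext
      intro x
      rw [reduced_mem_iff he hredl, reduced_mem_iff he hredm]
      rw [hcl, hcm, hc]
    have hκeq : κl = κm := betaSet_inj hlenl hlenm hBeq
    refine ⟨κl, ⟨hreachl, hredl.no_ribbon hlenl he⟩, ?_⟩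
    rw [hκeq]
    exact ⟨hreachm, hredm.no_ribbon hlenm he⟩

end PartitionSeq
namespace PartitionSeq

theorem insRunner_divmod {e α : ℕ} (he : 1 ≤ e) (p : ℕ) :
    insRunner e α p / (e + 1) = p / e ∧
      insRunner e α p % (e + 1) = p % e + (if p % e < α then 0 else 1) := by
  have hpm : p % e < e := Nat.mod_lt _ (by omega)
  have hite : (if p % e < α then 0 else 1) ≤ 1 := by split <;> omega
  have hform : insRunner e α p = (e + 1) * (p / e) + (p % e + (if p % e < α then 0 else 1)) := by
    unfold insRunner
    rw [Nat.mul_comm]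
    omega
  have ht : p % e + (if p % e < α then 0 else 1) < e + 1 := by omega
  constructor
  · rw [hform, Nat.mul_add_div (by omega : 0 < e + 1), Nat.div_eq_of_lt ht]
    omega
  · rw [hform, Nat.mul_add_mod, Nat.mod_eq_of_lt ht]

theorem insRunner_inj {e α : ℕ} (he : 1 ≤ e) : Function.Injective (insRunner e α) := by
  intro p q h
  obtain ⟨hd1, hm1⟩ := insRunner_divmod (α := α) he p
  obtain ⟨hd2, hm2⟩ := insRunner_divmod (α := α) he q
  rw [h] at hd1 hm1
  have hdd : p / e = q / e := by omega
  have hmm : p % e = q % e := by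
    have h1 : p % e < e := Nat.mod_lt _ (by omega)
    have h2 : q % e < e := Nat.mod_lt _ (by omega)
    rw [hm2] at hm1
    split_ifs at hm1 <;> omega
  have h1 := Nat.div_add_mod p e
  have h2 := Nat.div_add_mod q e
  have h3 : e * (p / e) = e * (q / e) := by rw [hdd]
  omega

theorem rcount_plus {e α k : ℕ} {l lp : PartitionSeq} (he : 1 ≤ e) (hα : α ≤ e)
    (hlpb : lp.betaSet k = (l.betaSet k).image (insRunner e α)) :
    (∀ s, s < α → rcount (e + 1) k lp s = rcount e k l s) ∧
      rcount (e + 1) k lp α = 0 ∧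
      (∀ r, α ≤ r → r < e → rcount (e + 1) k lp (r + 1) = rcount e k l r) := by
  have key : ∀ s : ℕ, rcount (e + 1) k lp s =
      ((l.betaSet k).filter (fun p => insRunner e α p % (e + 1) = s)).card := by
    intro s
    rw [rcount_eq_filter_card, hlpb, Finset.filter_image]
    exact Finset.card_image_of_injOn (fun a _ b _ hh => insRunner_inj he hh)
  refine ⟨?_, ?_, ?_⟩
  · intro s hs
    rw [key, rcount_eq_filter_card]
    congr 1
    apply Finset.filter_congr
    intro p _
    rw [(insRunner_divmod he p).2]
    have hpm : p % e < e := Nat.mod_lt _ (by omega)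
    split_ifs with hif <;> constructor <;> intro hh <;> omega
  · rw [key]
    rw [Finset.card_eq_zero, Finset.filter_eq_empty_iff]
    intro p _
    rw [(insRunner_divmod he p).2]
    have hpm : p % e < e := Nat.mod_lt _ (by omega)
    split_ifs with hif <;> omega
  · intro r hr1 hr2
    rw [key, rcount_eq_filter_card]
    congr 1
    apply Finset.filter_congr
    intro p _
    rw [(insRunner_divmod he p).2]
    have hpm : p % e < e := Nat.mod_lt _ (by omega)
    split_ifs with hif <;> constructor <;> intro hh <;> omega

theorem rcount_zero_of_ge {d k r : ℕ} {l : PartitionSeq} (hd : 1 ≤ d) (hr : d ≤ r) :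
    rcount d k l r = 0 := by
  rw [rcount, Finset.card_eq_zero, Finset.filter_eq_empty_iff]
  intro i _
  have := Nat.mod_lt (bnum k l i) (show 0 < d by omega)
  omega

end PartitionSeq
open PartitionSeq

theorem same_core_iff_plus_same_core' (e α k : ℕ) (he : 2 ≤ e) (hα : α ≤ e)
    (l m lp mp : PartitionSeq) (hl : l.length ≤ k) (hm : m.length ≤ k)
    (hlp : IsPlus e α k l lp) (hmp : IsPlus e α k m mp) :
    (∃ κ, IsECoreOf e κ l ∧ IsECoreOf e κ m) ↔
      (∃ κ, IsECoreOf (e + 1) κ lp ∧ IsECoreOf (e + 1) κ mp) := by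
  obtain ⟨hlpl, hlpb⟩ := hlp
  obtain ⟨hmpl, hmpb⟩ := hmp
  rw [same_core_iff_counts (k := k) (by omega : 1 ≤ e) hl hm,
      same_core_iff_counts (k := k) (by omega : 1 ≤ e + 1) hlpl hmpl]
  obtain ⟨ka, kb, kc⟩ := rcount_plus (by omega : 1 ≤ e) hα hlpb
  obtain ⟨ma, mb, mc⟩ := rcount_plus (by omega : 1 ≤ e) hα hmpb
  constructor
  · intro h s
    rcases lt_or_ge s α with hs | hs
    · rw [ka s hs, ma s hs, h s]
    rcases eq_or_lt_of_le hs with hs2 | hs2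
    · rw [← hs2, kb, mb]
    rcases lt_or_ge s (e + 1) with hs3 | hs3
    · have hrw : s = (s - 1) + 1 := by omega
      rw [hrw, kc (s - 1) (by omega) (by omega), mc (s - 1) (by omega) (by omega),
        h (s - 1)]
    · rw [rcount_zero_of_ge (by omega) hs3, rcount_zero_of_ge (by omega) hs3]
  · intro h r
    rcases lt_or_ge r α with hs | hs
    · rw [← ka r hs, ← ma r hs, h]
    rcases lt_or_ge r e with hs2 | hs2
    · rw [← kc r hs hs2, ← mc r hs hs2, h]
    · rw [rcount_zero_of_ge (by omega) hs2, rcount_zero_of_ge (by omega) hs2]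

/-- `λ` and `μ` have the same `e`-core iff `λ⁺` and `μ⁺` have the
same `(e+1)`-core. -/
theorem same_core_iff_plus_same_core (e α k n : ℕ) (he : 2 ≤ e) (hα : α ≤ e)
    (l m lp mp : PartitionSeq) (hl : l.length ≤ k) (hm : m.length ≤ k)
    (hln : l.size = n) (hmn : m.size = n)
    (hlp : IsPlus e α k l lp) (hmp : IsPlus e α k m mp) :
    (∃ κ, IsECoreOf e κ l ∧ IsECoreOf e κ m) ↔
      (∃ κ, IsECoreOf (e + 1) κ lp ∧ IsECoreOf (e + 1) κ mp) :=
  same_core_iff_plus_same_core' e α k he hα l m lp mp hl hm hlp hmp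
end

section
/- Let λ and μ be partitions of n of length at most k with the same e-core. Then |λ⁺| = |μ⁺|. -/
open Finset

open AbacusPartition

section Aux
open AbacusPartition Finset

lemma parts_eq_zero_of_length_le (l : AbacusPartition) {i : ℕ} (h : l.length ≤ i) :
    l.parts i = 0 := by
  have hne : {N | ∀ j, N ≤ j → l.parts j = 0}.Nonempty := l.eventually_zero
  exact Nat.sInf_mem hne i h

lemma lt_length_of_parts_ne (l : AbacusPartition) {i : ℕ} (h : l.parts i ≠ 0) : i < l.length := by
  by_contra h'
  exact h (parts_eq_zero_of_length_le l (by omega))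

lemma length_le_of_parts_le {l n : AbacusPartition} (h : ∀ i, l.parts i ≤ n.parts i) :
    l.length ≤ n.length :=
  Nat.sInf_le (fun i hi => Nat.le_zero.mp ((h i).trans_eq (parts_eq_zero_of_length_le n hi)))

lemma parts_le_of_cells_subset {l n : AbacusPartition} (h : cells l ⊆ cells n) (i : ℕ) :
    l.parts i ≤ n.parts i := by
  by_contra hc
  push_neg at hc
  have hmem : ((i, l.parts i - 1) : ℕ × ℕ) ∈ cells l := by
    simp only [cells, Set.mem_setOf_eq]
    omega
  have := h hmem
  simp only [cells, Set.mem_setOf_eq] at this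
  omega

lemma sum_range_parts (l : AbacusPartition) {k : ℕ} (hk : l.length ≤ k) :
    ∑ i ∈ Finset.range k, l.parts i = l.size := by
  have h0 : ∑ i ∈ Finset.Ico l.length k, l.parts i = 0 :=
    Finset.sum_eq_zero fun i hi => parts_eq_zero_of_length_le l (Finset.mem_Ico.mp hi).1
  rw [AbacusPartition.size, ← Finset.sum_range_add_sum_Ico _ hk, h0, add_zero]

lemma beta_injOn (l : AbacusPartition) (k : ℕ) :
    ∀ x ∈ Finset.range k, ∀ y ∈ Finset.range k,
      l.parts x + (k - 1 - x) = l.parts y + (k - 1 - y) → x = y := by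
  intro x hx y hy hxy
  simp only [Finset.mem_range] at hx hy
  rcases lt_trichotomy x y with h | h | h
  · have := l.antitone h.le; omega
  · exact h
  · have := l.antitone h.le; omega

lemma sum_betaSet (l : AbacusPartition) (k : ℕ) (f : ℕ → ℕ) :
    ∑ p ∈ l.betaSet k, f p = ∑ i ∈ Finset.range k, f (l.parts i + (k - 1 - i)) := by
  rw [betaSet, Finset.sum_image (beta_injOn l k)]

lemma insRunner_eq (e α p : ℕ) :
    insRunner e α p = p + p / e + (if α ≤ p % e then 1 else 0) := by
  unfold insRunner
  have h : e * (p / e) + p % e = p := Nat.div_add_mod p e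
  have h2 : p / e * (e + 1) = e * (p / e) + p / e := by ring
  rw [h2]
  split_ifs <;> omega

lemma insRunner_injective (e α : ℕ) (he : 1 ≤ e) : Function.Injective (insRunner e α) := by
  intro p p' hpp
  unfold insRunner at hpp
  have hp : p % e < e := Nat.mod_lt _ he
  have hp' : p' % e < e := Nat.mod_lt _ he
  set b : ℕ := if p % e < α then 0 else 1 with hb
  set b' : ℕ := if p' % e < α then 0 else 1 with hb'
  have hble : b ≤ 1 := by rw [hb]; split_ifs <;> omega
  have hble' : b' ≤ 1 := by rw [hb']; split_ifs <;> omega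
  -- uniqueness of quotient/remainder base (e+1)
  have hq : p / e = p' / e := by
    have h1 : (p / e * (e + 1) + (p % e + b)) / (e + 1) = p / e := by
      rw [mul_comm, Nat.mul_add_div (by omega : 0 < e + 1)]
      have : (p % e + b) / (e + 1) = 0 := Nat.div_eq_of_lt (by omega)
      omega
    have h2 : (p' / e * (e + 1) + (p' % e + b')) / (e + 1) = p' / e := by
      rw [mul_comm, Nat.mul_add_div (by omega : 0 < e + 1)]
      have : (p' % e + b') / (e + 1) = 0 := Nat.div_eq_of_lt (by omega)
      omega
    rw [← h1, ← h2]
    congr 1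
    omega
  rw [hq] at hpp
  have hr : p % e + b = p' % e + b' := by omega
  have hrr : p % e = p' % e := by
    rw [hb, hb'] at hr
    split_ifs at hr <;> omega
  have e1 := Nat.div_add_mod p e
  have e2 := Nat.div_add_mod p' e
  rw [← hq, ← hrr] at e2
  omega

/-- Key step lemma: removing an `e`-ribbon from `n` (giving `l`) replaces one
beta number `A` of `n` by `B = A - e` in the `k`-bead beta sequence. -/
lemma step_key {e k : ℕ} (he : 1 ≤ e) {n l : AbacusPartition} (hnk : n.length ≤ k)
    (h : RemoveRibbon e n l) :
    ∃ A B : ℕ, B + e = A ∧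
      ∀ f : ℕ → ℕ,
        (∑ i ∈ Finset.range k, f (l.parts i + (k - 1 - i))) + f A
          = (∑ i ∈ Finset.range k, f (n.parts i + (k - 1 - i))) + f B := by
  obtain ⟨hsub, c, hEq, hinj, hsteps⟩ := h
  have hle : ∀ i, l.parts i ≤ n.parts i := parts_le_of_cells_subset hsub
  -- row description of the skew diagram
  have hrow : ∀ x : ℕ × ℕ, x ∈ cells n \ cells l ↔
      l.parts x.1 ≤ x.2 ∧ x.2 < n.parts x.1 := by
    intro x
    simp only [Set.mem_diff, cells, Set.mem_setOf_eq, not_lt]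
    exact and_comm
  have hDmem : ∀ j, j < e → l.parts (c j).1 ≤ (c j).2 ∧ (c j).2 < n.parts (c j).1 := by
    intro j hj
    have : c j ∈ cells n \ cells l := by
      rw [hEq]; exact ⟨j, hj, rfl⟩
    exact (hrow _).mp this
  have hfind : ∀ x : ℕ × ℕ, l.parts x.1 ≤ x.2 → x.2 < n.parts x.1 →
      ∃ j, j < e ∧ c j = x := by
    intro x h1 h2
    have : x ∈ cells n \ cells l := (hrow x).mpr ⟨h1, h2⟩
    rw [hEq] at this
    obtain ⟨j, hj, hcx⟩ := this
    exact ⟨j, hj, hcx⟩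
  have hstep' : ∀ j, j + 1 < e →
      ((c (j+1)).1 = (c j).1 + 1 ∧ (c (j+1)).2 = (c j).2) ∨
      ((c (j+1)).1 = (c j).1 ∧ (c j).2 = (c (j+1)).2 + 1) := by
    intro j hj
    rcases hsteps j hj with h | h
    · left; rw [h]; exact ⟨rfl, rfl⟩
    · right; exact ⟨h.2, h.1⟩
  -- monotonicity and content
  have hmono : ∀ i j, i ≤ j → j < e →
      (c i).1 ≤ (c j).1 ∧ (c j).2 ≤ (c i).2 ∧
      (c j).1 + (c i).2 + i = (c i).1 + (c j).2 + j := by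
    intro i j
    induction j with
    | zero => intro hij _; have : i = 0 := by omega
              subst this; omega
    | succ j ih =>
      intro hij hje
      rcases Nat.lt_or_ge i (j+1) with hlt | hge
      · have hij' : i ≤ j := by omega
        have hje' : j < e := by omega
        obtain ⟨a1, a2, a3⟩ := ih hij' hje'
        rcases hstep' j hje with ⟨b1, b2⟩ | ⟨b1, b2⟩ <;> omega
      · have : i = j + 1 := by omega
        subst this; omega
  -- discrete IVT for rows
  have hIVT : ∀ v, (c 0).1 ≤ v → v ≤ (c (e-1)).1 → ∃ j, j < e ∧ (c j).1 = v := by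
    have key : ∀ j, j < e → ∀ v, (c 0).1 ≤ v → v ≤ (c j).1 → ∃ t, t ≤ j ∧ (c t).1 = v := by
      intro j
      induction j with
      | zero => intro _ v h1 h2; exact ⟨0, le_rfl, by omega⟩
      | succ j ih =>
        intro hje v h1 h2
        by_cases hv : v ≤ (c j).1
        · obtain ⟨t, ht, hct⟩ := ih (by omega) v h1 hv
          exact ⟨t, by omega, hct⟩
        · rcases hstep' j hje with ⟨b1, _⟩ | ⟨b1, _⟩
          · exact ⟨j + 1, le_rfl, by omega⟩
          · exact ⟨j + 1, le_rfl, by omega⟩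
    intro v h1 h2
    obtain ⟨t, ht, hct⟩ := key (e-1) (by omega) v h1 h2
    exact ⟨t, by omega, hct⟩
  -- rows outside [a,b] unchanged
  have hout : ∀ i, (i < (c 0).1 ∨ (c (e-1)).1 < i) → n.parts i = l.parts i := by
    intro i hi
    refine le_antisymm ?_ (hle i)
    by_contra hc
    push_neg at hc
    obtain ⟨j, hj, hcj⟩ := hfind (i, l.parts i) le_rfl hc
    have h1 := (hmono 0 j (Nat.zero_le _) hj).1
    have h2 := (hmono j (e-1) (by omega) (by omega)).1
    have : (c j).1 = i := by rw [hcj]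
    omega
  -- head is at the end of its row
  have hE : (c 0).2 + 1 = n.parts (c 0).1 := by
    have h0 := hDmem 0 (by omega)
    by_contra hc
    obtain ⟨j, hj, hcj⟩ := hfind ((c 0).1, (c 0).2 + 1) (by simp; omega) (by simp; omega)
    have hq := (hmono 0 j (Nat.zero_le _) hj).2.1
    have : (c j).2 = (c 0).2 + 1 := by rw [hcj]
    omega
  -- tail is at the start of its row
  have hF : (c (e-1)).2 = l.parts (c (e-1)).1 := by
    have h0 := hDmem (e-1) (by omega)
    by_contra hc
    have hlt : l.parts (c (e-1)).1 < (c (e-1)).2 := by omega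
    obtain ⟨j, hj, hcj⟩ := hfind ((c (e-1)).1, (c (e-1)).2 - 1) (by simp; omega) (by simp; omega)
    have hq := (hmono j (e-1) (by omega) (by omega)).2.1
    have h1 : (c j).1 = (c (e-1)).1 := by rw [hcj]
    have h2 : (c j).2 = (c (e-1)).2 - 1 := by rw [hcj]
    omega
  -- middle rows: rim condition
  have hG : ∀ i, (c 0).1 ≤ i → i < (c (e-1)).1 → n.parts (i+1) = l.parts i + 1 := by
    intro i hai hib
    have hS : ∃ j, j < e ∧ i + 1 ≤ (c j).1 := ⟨e - 1, by omega, by omega⟩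
    classical
    obtain ⟨j, hj, hmin⟩ : ∃ j, (j < e ∧ i + 1 ≤ (c j).1) ∧
        ∀ t, t < j → ¬(t < e ∧ i + 1 ≤ (c t).1) :=
      ⟨Nat.find hS, Nat.find_spec hS, fun t ht => Nat.find_min hS ht⟩
    have hj0 : j ≠ 0 := by
      intro h0
      have := hj.2
      rw [h0] at this
      omega
    have hj'lt : j - 1 < e := by omega
    have hrj' : (c (j-1)).1 ≤ i := by
      by_contra hc
      exact hmin (j-1) (by omega) ⟨hj'lt, by omega⟩
    have hstepj := hstep' (j-1) (by omega)
    rw [(by omega : j - 1 + 1 = j)] at hstepj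
    rcases hstepj with ⟨b1, b2⟩ | ⟨b1, b2⟩
    swap
    · exfalso; have := hj.2; omega
    have hrj : (c j).1 = i + 1 := by have := hj.2; omega
    have hrj'' : (c (j-1)).1 = i := by omega
    have memj := hDmem j hj.1
    rw [hrj] at memj
    have memj' := hDmem (j-1) hj'lt
    rw [hrj''] at memj'
    have claim1 : (c j).2 + 1 = n.parts (i+1) := by
      by_contra hc
      obtain ⟨t, ht, hct⟩ := hfind (i+1, (c j).2 + 1) (by simp; omega) (by simp; omega)
      have h1 : (c t).1 = i + 1 := by rw [hct]
      have h2 : (c t).2 = (c j).2 + 1 := by rw [hct]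
      have hjt : j ≤ t := by
        by_contra hc2
        exact hmin t (by omega) ⟨ht, by omega⟩
      have := (hmono j t hjt ht).2.1
      omega
    have claim2 : (c (j-1)).2 = l.parts i := by
      by_contra hc
      have hlt : l.parts i < (c (j-1)).2 := by omega
      obtain ⟨t, ht, hct⟩ := hfind (i, (c (j-1)).2 - 1) (by simp; omega) (by simp; omega)
      have h1 : (c t).1 = i := by rw [hct]
      have h2 : (c t).2 = (c (j-1)).2 - 1 := by rw [hct]
      have htj : t < j := by
        by_contra hc2
        have := (hmono j t (by omega) ht).1
        omega
      have := (hmono t (j-1) (by omega) hj'lt).2.1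
      omega
    omega
  -- main numeric relation
  have hd := hmono 0 (e-1) (Nat.zero_le _) (by omega)
  have hab : (c 0).1 ≤ (c (e-1)).1 := hd.1
  have main : (c (e-1)).1 + n.parts (c 0).1 = (c 0).1 + l.parts (c (e-1)).1 + e := by
    have h3 := hd.2.2
    omega
  have hbk : (c (e-1)).1 < k := by
    have h0 := hDmem (e-1) (by omega)
    exact lt_of_lt_of_le (lt_length_of_parts_ne n (by omega)) hnk
  refine ⟨n.parts (c 0).1 + (k - 1 - (c 0).1), l.parts (c (e-1)).1 + (k - 1 - (c (e-1)).1),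
    by omega, ?_⟩
  intro f
  have hbmem : (c (e-1)).1 ∈ Finset.range k := Finset.mem_range.mpr hbk
  have hamem : (c 0).1 ∈ Finset.range k := Finset.mem_range.mpr (by omega)
  rw [← Finset.sum_erase_add (Finset.range k) _ hbmem,
      ← Finset.sum_erase_add (Finset.range k) _ hamem]
  have hclaim : ∑ i ∈ (Finset.range k).erase (c (e-1)).1, f (l.parts i + (k - 1 - i))
      = ∑ i ∈ (Finset.range k).erase (c 0).1, f (n.parts i + (k - 1 - i)) := by
    refine Finset.sum_nbij'
      (fun x => if (c 0).1 ≤ x ∧ x < (c (e-1)).1 then x + 1 else x)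
      (fun x => if (c 0).1 < x ∧ x ≤ (c (e-1)).1 then x - 1 else x)
      ?_ ?_ ?_ ?_ ?_
    · intro x hx
      simp only [Finset.mem_erase, Finset.mem_range] at hx ⊢
      split_ifs <;> omega
    · intro x hx
      simp only [Finset.mem_erase, Finset.mem_range] at hx ⊢
      split_ifs <;> omega
    · intro x hx
      simp only [Finset.mem_erase, Finset.mem_range] at hx
      split_ifs <;> omega
    · intro x hx
      simp only [Finset.mem_erase, Finset.mem_range] at hx
      split_ifs <;> omega
    · intro x hx
      simp only [Finset.mem_erase, Finset.mem_range] at hx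
      by_cases hc : (c 0).1 ≤ x ∧ x < (c (e-1)).1
      · rw [if_pos hc]
        have := hG x hc.1 hc.2
        congr 1
        omega
      · rw [if_neg hc]
        have := hout x (by omega)
        congr 1
        omega
  omega

/-- Along a chain of ribbon removals, the beta-sum drops by `e` each step, the sum
of `⌊β/e⌋` drops by 1, and the residue statistics are unchanged. -/
lemma chain_key (e α k : ℕ) (he : 1 ≤ e) {l κ : AbacusPartition}
    (hchain : Relation.ReflTransGen (RemoveRibbon e) l κ) :
    l.length ≤ k → ∃ s : ℕ,
      (∑ i ∈ Finset.range k, (l.parts i + (k - 1 - i)))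
        = (∑ i ∈ Finset.range k, (κ.parts i + (k - 1 - i))) + s * e ∧
      (∑ i ∈ Finset.range k, (l.parts i + (k - 1 - i)) / e)
        = (∑ i ∈ Finset.range k, (κ.parts i + (k - 1 - i)) / e) + s ∧
      (∑ i ∈ Finset.range k, (if α ≤ (l.parts i + (k - 1 - i)) % e then 1 else 0))
        = (∑ i ∈ Finset.range k, (if α ≤ (κ.parts i + (k - 1 - i)) % e then 1 else 0)) := by
  induction hchain using Relation.ReflTransGen.head_induction_on with
  | refl => exact fun _ => ⟨0, by simp⟩
  | @head x y hxy hyk ih =>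
    intro hxk
    have hparts : ∀ i, y.parts i ≤ x.parts i := parts_le_of_cells_subset hxy.1
    have hyk' : y.length ≤ k := le_trans (length_le_of_parts_le hparts) hxk
    obtain ⟨s, h1, h2, h3⟩ := ih hyk'
    obtain ⟨A, B, hBA, hsum⟩ := step_key he hxk hxy
    refine ⟨s + 1, ?_, ?_, ?_⟩
    · have hid := hsum id
      simp only [id_eq] at hid
      have hmul : (s + 1) * e = s * e + e := by ring
      omega
    · have hdiv := hsum (fun p => p / e)
      have hAB : A / e = B / e + 1 := by
        rw [← hBA, Nat.add_div_right _ he]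
      omega
    · have hmod := hsum (fun p => if α ≤ p % e then 1 else 0)
      have hAB : A % e = B % e := by rw [← hBA, Nat.add_mod_right]
      rw [hAB] at hmod
      omega

end Aux
/-- if `λ` and `μ` are partitions of `n` with the same `e`-core
then `|λ⁺| = |μ⁺|`. -/
theorem plus_same_size (e α k n : ℕ) (he : 2 ≤ e) (hα : α ≤ e)
    (l m lp mp : AbacusPartition) (hl : l.length ≤ k) (hm : m.length ≤ k)
    (hln : l.size = n) (hmn : m.size = n)
    (hcore : ∃ κ, IsECoreOf e κ l ∧ IsECoreOf e κ m)
    (hlp : IsPlus e α k l lp) (hmp : IsPlus e α k m mp) :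
    lp.size = mp.size := by
  obtain ⟨κ, hκl, hκm⟩ := hcore
  have he1 : 1 ≤ e := by omega
  obtain ⟨sl, hl1, hl2, hl3⟩ := chain_key e α k he1 hκl.1 hl
  obtain ⟨sm, hm1, hm2, hm3⟩ := chain_key e α k he1 hκm.1 hm
  have Tl : ∑ i ∈ Finset.range k, (l.parts i + (k - 1 - i))
      = n + ∑ i ∈ Finset.range k, (k - 1 - i) := by
    rw [Finset.sum_add_distrib, sum_range_parts l hl, hln]
  have Tm : ∑ i ∈ Finset.range k, (m.parts i + (k - 1 - i))
      = n + ∑ i ∈ Finset.range k, (k - 1 - i) := by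
    rw [Finset.sum_add_distrib, sum_range_parts m hm, hmn]
  have hs : sl = sm := by
    have h1 : sl * e = sm * e := by omega
    exact Nat.eq_of_mul_eq_mul_right (by omega) h1
  have key : ∀ (x xp : AbacusPartition), x.length ≤ k → IsPlus e α k x xp →
      xp.size + ∑ i ∈ Finset.range k, (k - 1 - i)
        = (∑ i ∈ Finset.range k, (x.parts i + (k - 1 - i)))
          + (∑ i ∈ Finset.range k, (x.parts i + (k - 1 - i)) / e)
          + (∑ i ∈ Finset.range k, if α ≤ (x.parts i + (k - 1 - i)) % e then 1 else 0) := by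
    rintro x xp hxk ⟨hxplen, hxpbeta⟩
    have h1 : ∑ p ∈ xp.betaSet k, p = xp.size + ∑ i ∈ Finset.range k, (k - 1 - i) := by
      have h := sum_betaSet xp k id
      simp only [id_eq] at h
      rw [h, Finset.sum_add_distrib, sum_range_parts xp hxplen]
    have h2 : ∑ p ∈ xp.betaSet k, p = ∑ p ∈ x.betaSet k, insRunner e α p := by
      rw [hxpbeta, Finset.sum_image (fun a _ b _ hab => insRunner_injective e α he1 hab)]
    have h3 : ∑ p ∈ x.betaSet k, insRunner e α p
        = (∑ i ∈ Finset.range k, (x.parts i + (k - 1 - i)))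
          + (∑ i ∈ Finset.range k, (x.parts i + (k - 1 - i)) / e)
          + (∑ i ∈ Finset.range k, if α ≤ (x.parts i + (k - 1 - i)) % e then 1 else 0) := by
      rw [sum_betaSet x k (insRunner e α), ← Finset.sum_add_distrib, ← Finset.sum_add_distrib]
      exact Finset.sum_congr rfl fun i _ => insRunner_eq e α _
    omega
  have kl := key l lp hl hlp
  have km := key m mp hm hmp
  omega
end

section
/- The e-weight of a partition λ, represented on an e-abacus with k beads, equals the sum over all beads β of the number of empty bead positions that lie above β on the same runner. -/
open Finset

/-- A partition: a weakly decreasing, eventually-zero sequence of naturals.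
`parts i` is the `(i+1)`-st part (0-indexed). -/
structure AbPartition where
  parts : ℕ → ℕ
  antitone : ∀ ⦃i j : ℕ⦄, i ≤ j → parts j ≤ parts i
  eventually_zero : ∃ N, ∀ i, N ≤ i → parts i = 0

namespace AbPartition

/-- The length of a partition: the number of nonzero parts. -/
noncomputable def length (l : AbPartition) : ℕ :=
  sInf {N | ∀ i, N ≤ i → l.parts i = 0}

/-- The size `|λ|` of a partition: the sum of its parts. -/
noncomputable def size (l : AbPartition) : ℕ :=
  ∑ i ∈ Finset.range l.length, l.parts i

/-- The beta-numbers of `l` with respect to `k` beads: `λ_i + k - i` for `i = 1, …, k`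
(here 0-indexed: bead for row `i+1` sits at `parts i + (k - 1 - i)`). -/
def betaSet (l : AbPartition) (k : ℕ) : Finset ℕ :=
  (Finset.range k).image fun i => l.parts i + (k - 1 - i)

/-- Dominance order: `l ⊵ m`. -/
def Dominates (l m : AbPartition) : Prop :=
  ∀ j, ∑ i ∈ Finset.range j, m.parts i ≤ ∑ i ∈ Finset.range j, l.parts i

/-- Inserting an empty runner before runner `α` into an `e`-abacus: a bead at
position `m*e + r` moves to `m*(e+1) + r` if `r < α` and to `m*(e+1) + r + 1` otherwise. -/
def insRunner (e α p : ℕ) : ℕ :=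
  (p / e) * (e + 1) + p % e + (if p % e < α then 0 else 1)

/-- `lp` is the partition `λ⁺` obtained from `l` by inserting an empty runner at
position `α` into its `e`-abacus with `k` beads. -/
def IsPlus (e α k : ℕ) (l lp : AbPartition) : Prop :=
  lp.length ≤ k ∧ lp.betaSet k = (l.betaSet k).image (insRunner e α)

/-- A partition is `d`-regular if no `d` of its nonzero parts are equal. -/
def Regular (d : ℕ) (l : AbPartition) : Prop :=
  ¬ ∃ i, l.parts i ≠ 0 ∧ l.parts (i + (d - 1)) = l.parts i

/-- The Young diagram of a partition, as a set of (row, column) cells, 0-indexed. -/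
def cells (l : AbPartition) : Set (ℕ × ℕ) := {x | x.2 < l.parts x.1}

/-- `c 0, c 1, …, c (e-1)` are the successive cells of a ribbon: each next cell is
directly below, or directly to the left of, the previous cell. -/
def RibbonSteps (e : ℕ) (c : ℕ → ℕ × ℕ) : Prop :=
  ∀ i, i + 1 < e →
    (c (i + 1) = ((c i).1 + 1, (c i).2)) ∨
    ((c i).2 = (c (i + 1)).2 + 1 ∧ (c (i + 1)).1 = (c i).1)

/-- `R` is an `e`-ribbon with cell enumeration `c` (head `c 0`). -/
def IsRibbonC (e : ℕ) (c : ℕ → ℕ × ℕ) (R : Set (ℕ × ℕ)) : Prop :=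
  R = c '' (Set.Iio e) ∧ Set.InjOn c (Set.Iio e) ∧ RibbonSteps e c

/-- The spin of an `e`-ribbon: the number of vertical steps. -/
def spinOf (e : ℕ) (c : ℕ → ℕ × ℕ) : ℕ :=
  ((Finset.range (e - 1)).filter fun i => (c (i + 1)).1 = (c i).1 + 1).card

/-- The head of the ribbon lies in row 1 or directly below a cell of `l`. -/
def HeadOK (l : AbPartition) (c : ℕ → ℕ × ℕ) : Prop :=
  (c 0).1 = 0 ∨ ((c 0).1 - 1, (c 0).2) ∈ cells l

/-- `l` is obtained from `n` by removing a single rim hook (ribbon) of length `e`. -/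
def RemoveRibbon (e : ℕ) (n l : AbPartition) : Prop :=
  cells l ⊆ cells n ∧ ∃ c, IsRibbonC e c (cells n \ cells l)

/-- `κ` is the `e`-core of `l`: obtained by repeatedly removing `e`-rim-hooks,
and no further `e`-rim-hook can be removed. -/
def IsECoreOf (e : ℕ) (κ l : AbPartition) : Prop :=
  Relation.ReflTransGen (RemoveRibbon e) l κ ∧ ¬ ∃ m, RemoveRibbon e κ m

/-- `l` has `e`-weight `w`: `|l| = |e-core of l| + w * e`. -/
def EWeight (e : ℕ) (l : AbPartition) (w : ℕ) : Prop :=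
  ∃ κ, IsECoreOf e κ l ∧ l.size = κ.size + w * e

/-- `λ →_{m:e} ν` with total spin `s`: `[ν] \ [λ]` is a disjoint union of `m`
`e`-ribbons, each of whose heads lies in row 1 or directly below a cell of `λ`,
the sum of whose spins is `s`. -/
def HAddSpin (e m s : ℕ) (l n : AbPartition) : Prop :=
  cells l ⊆ cells n ∧
  ∃ (R : Fin m → Set (ℕ × ℕ)) (c : Fin m → ℕ → ℕ × ℕ),
    ((cells n \ cells l) = ⋃ i, R i) ∧
    (Pairwise fun i j => Disjoint (R i) (R j)) ∧
    (∀ i, IsRibbonC e (c i) (R i) ∧ HeadOK l (c i)) ∧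
    s = ∑ i, spinOf e (c i)

/-- `λ →_{m:e} ν`. -/
def HAdd (e m : ℕ) (l n : AbPartition) : Prop := ∃ s, HAddSpin e m s l n

/-- `x` is an addable node of `l`. -/
def Addable (l : AbPartition) (x : ℕ × ℕ) : Prop :=
  x ∉ cells l ∧ ∃ n : AbPartition, cells n = insert x (cells l)

/-- `x` is a removable node of `l`. -/
def Removable (l : AbPartition) (x : ℕ × ℕ) : Prop :=
  x ∈ cells l ∧ ∃ n : AbPartition, cells n = cells l \ {x}

/-- The `e`-residue of a node `(c,d)`: `d - c mod e`. -/
def res (e : ℕ) (x : ℕ × ℕ) : ZMod e := (x.2 : ZMod e) - (x.1 : ZMod e)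

/-- `N_i(λ,ν) = #{addable i-nodes of λ above x} - #{removable i-nodes of λ above x}`,
where `i = res e x` and `y` is above `x` iff `y.1 < x.1`. -/
noncomputable def Nnum (e : ℕ) (l : AbPartition) (x : ℕ × ℕ) : ℤ :=
  ({y | Addable l y ∧ res e y = res e x ∧ y.1 < x.1}.ncard : ℤ) -
  ({y | Removable l y ∧ res e y = res e x ∧ y.1 < x.1}.ncard : ℤ)

end AbPartition

open AbPartition

section Aux
open Finset

namespace AbPartition

lemma parts_eq_zero (l : AbPartition) {i : ℕ} (h : l.length ≤ i) : l.parts i = 0 := by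
  have hne : {N | ∀ i, N ≤ i → l.parts i = 0}.Nonempty := l.eventually_zero
  exact Nat.sInf_mem hne i h

lemma length_le_of (l : AbPartition) {N : ℕ} (h : ∀ i, N ≤ i → l.parts i = 0) :
    l.length ≤ N := Nat.sInf_le h

lemma size_eq_sum (l : AbPartition) {k : ℕ} (h : l.length ≤ k) :
    l.size = ∑ i ∈ Finset.range k, l.parts i := by
  rw [size]
  apply Finset.sum_subset (Finset.range_subset_range.2 h)
  intro x hx hnx
  simp only [Finset.mem_range] at hx hnx
  exact l.parts_eq_zero (by omega)

lemma beta_lt (l : AbPartition) {k i j : ℕ} (hij : i < j) (hj : j < k) :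
    l.parts j + (k - 1 - j) < l.parts i + (k - 1 - i) := by
  have := l.antitone hij.le
  omega

lemma beta_inj (l : AbPartition) {k i j : ℕ} (hi : i < k) (hj : j < k)
    (h : l.parts i + (k - 1 - i) = l.parts j + (k - 1 - j)) : i = j := by
  rcases lt_trichotomy i j with h' | h' | h'
  · exact absurd h (by have := l.beta_lt h' hj; omega)
  · exact h'
  · exact absurd h (by have := l.beta_lt h' hi; omega)

lemma mem_betaSet {l : AbPartition} {k b : ℕ} :
    b ∈ l.betaSet k ↔ ∃ i, i < k ∧ l.parts i + (k - 1 - i) = b := by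
  simp [betaSet, Finset.mem_image, Finset.mem_range]

end AbPartition

open AbPartition

lemma runner_step {e p q : ℕ} (hmod : q % e = p % e) (hlt : q < p) : q + e ≤ p := by
  have h1 : e ∣ p - q := (Nat.modEq_iff_dvd' hlt.le).1 hmod
  have h2 : 0 < p - q := by omega
  have := Nat.le_of_dvd h2 h1
  omega

/-- gap-count statistic of a bead configuration -/
def wt (e : ℕ) (B : Finset ℕ) : ℕ :=
  ∑ p ∈ B, ((Finset.range p).filter fun q => q % e = p % e ∧ q ∉ B).card

lemma sub_mod_self {b e : ℕ} (h : e ≤ b) : (b - e) % e = b % e := by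
  conv_rhs => rw [show b = (b - e) + e by omega]
  rw [Nat.add_mod_right]

lemma wt_move {e b : ℕ} (he : 0 < e) {B : Finset ℕ} (hb : b ∈ B) (heb : e ≤ b)
    (hgap : b - e ∉ B) :
    wt e (insert (b - e) (B.erase b)) + 1 = wt e B := by
  classical
  set B' : Finset ℕ := insert (b - e) (B.erase b) with hB'
  have hbe_mod : (b - e) % e = b % e := sub_mod_self heb
  have hbe_lt : b - e < b := by omega
  have hmemB' : ∀ q, q ∈ B' ↔ q = b - e ∨ (q ≠ b ∧ q ∈ B) := by
    intro q; simp [hB', Finset.mem_insert, Finset.mem_erase]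
  -- split sums
  have hsplit : wt e B =
      ((Finset.range b).filter fun q => q % e = b % e ∧ q ∉ B).card +
      ∑ p ∈ B.erase b, ((Finset.range p).filter fun q => q % e = p % e ∧ q ∉ B).card :=
    (Finset.add_sum_erase _ _ hb).symm
  have hbeB' : b - e ∈ B' := by simp [hB']
  have hnotmem : b - e ∉ B.erase b := fun h => hgap (Finset.mem_of_mem_erase h)
  have hsplit' : wt e B' =
      ((Finset.range (b - e)).filter fun q => q % e = (b - e) % e ∧ q ∉ B').card +
      ∑ p ∈ B.erase b, ((Finset.range p).filter fun q => q % e = p % e ∧ q ∉ B').card := by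
    rw [wt, hB', Finset.sum_insert hnotmem]
  -- head terms
  have hhead : ((Finset.range b).filter fun q => q % e = b % e ∧ q ∉ B) =
      insert (b - e) ((Finset.range (b - e)).filter fun q => q % e = (b - e) % e ∧ q ∉ B') := by
    ext q
    simp only [Finset.mem_insert, Finset.mem_filter, Finset.mem_range, hmemB', hbe_mod]
    constructor
    · rintro ⟨hq1, hq2, hq3⟩
      by_cases hq : q = b - e
      · exact Or.inl hq
      · have : q + e ≤ b := runner_step (by omega) hq1
        refine Or.inr ⟨by omega, hq2, ?_⟩
        push_neg
        exact ⟨hq, fun _ => hq3⟩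
    · rintro (rfl | ⟨hq1, hq2, hq3⟩)
      · exact ⟨by omega, hbe_mod, hgap⟩
      · refine ⟨by omega, hq2, ?_⟩
        push_neg at hq3
        rcases hq3 with ⟨h1, h2⟩
        intro hqB
        exact (h2 (by omega)) hqB
  have hheadcard : ((Finset.range b).filter fun q => q % e = b % e ∧ q ∉ B).card =
      ((Finset.range (b - e)).filter fun q => q % e = (b - e) % e ∧ q ∉ B').card + 1 := by
    rw [hhead, Finset.card_insert_of_notMem (by simp)]
  -- tail terms
  have htail : ∀ p ∈ B.erase b,
      ((Finset.range p).filter fun q => q % e = p % e ∧ q ∉ B').card =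
      ((Finset.range p).filter fun q => q % e = p % e ∧ q ∉ B).card := by
    intro p hp
    have hpB : p ∈ B := Finset.mem_of_mem_erase hp
    have hpb : p ≠ b := Finset.ne_of_mem_erase hp
    by_cases hres : p % e = b % e
    · rcases lt_or_gt_of_ne hpb with hlt | hgt
      · -- p < b : p < b - e, sets identical
        have hple : p + e ≤ b := runner_step hres hlt
        have hpbe : p < b - e := by
          rcases Nat.lt_or_ge p (b - e) with h | h
          · exact h
          · have : p = b - e := by omega
            exact absurd (this ▸ hpB) hgap
        congr 1
        apply Finset.filter_congr
        intro q hq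
        simp only [Finset.mem_range] at hq
        have hq1 : q ≠ b - e := by omega
        have hq2 : q ≠ b := by omega
        simp only [hmemB']
        constructor
        · rintro ⟨h1, h2⟩; push_neg at h2; exact ⟨h1, fun h => (h2.2 hq2) h⟩
        · rintro ⟨h1, h2⟩; exact ⟨h1, by push_neg; exact ⟨hq1, fun _ => h2⟩⟩
      · -- b < p : insert b, erase (b-e)
        have hSeq : ((Finset.range p).filter fun q => q % e = p % e ∧ q ∉ B') =
            insert b (((Finset.range p).filter fun q => q % e = p % e ∧ q ∉ B).erase (b - e)) := by
          ext q
          simp only [Finset.mem_insert, Finset.mem_erase, Finset.mem_filter, Finset.mem_range,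
            hmemB']
          constructor
          · rintro ⟨hq1, hq2, hq3⟩
            push_neg at hq3
            by_cases hq : q = b
            · exact Or.inl hq
            · exact Or.inr ⟨hq3.1, hq1, hq2, fun h => (hq3.2 hq) h⟩
          · rintro (rfl | ⟨hq0, hq1, hq2, hq3⟩)
            · exact ⟨hgt, by omega, by push_neg; exact ⟨by omega, fun h => absurd rfl h⟩⟩
            · exact ⟨hq1, hq2, by push_neg; exact ⟨hq0, fun _ => hq3⟩⟩
        have hbeS : b - e ∈ (Finset.range p).filter fun q => q % e = p % e ∧ q ∉ B := by
          simp only [Finset.mem_filter, Finset.mem_range]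
          exact ⟨by omega, by omega, hgap⟩
        have hbnot : b ∉ ((Finset.range p).filter fun q => q % e = p % e ∧ q ∉ B).erase (b - e) := by
          simp only [Finset.mem_erase, Finset.mem_filter]
          rintro ⟨-, -, -, h⟩; exact h hb
        rw [hSeq, Finset.card_insert_of_notMem hbnot, Finset.card_erase_of_mem hbeS]
        have : 0 < ((Finset.range p).filter fun q => q % e = p % e ∧ q ∉ B).card :=
          Finset.card_pos.2 ⟨b - e, hbeS⟩
        omega
    · -- different runner: sets identical
      congr 1
      apply Finset.filter_congr
      intro q hq
      simp only [hmemB']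
      constructor
      · rintro ⟨h1, h2⟩
        push_neg at h2
        refine ⟨h1, fun hqB => ?_⟩
        have hq2 : q ≠ b := by rintro rfl; exact hres (h1 ▸ rfl)
        exact (h2.2 hq2) hqB
      · rintro ⟨h1, h2⟩
        have hq1 : q ≠ b - e := by rintro rfl; exact hres (by rw [← h1, hbe_mod])
        exact ⟨h1, by push_neg; exact ⟨hq1, fun _ => h2⟩⟩
  rw [hsplit, hsplit', hheadcard, Finset.sum_congr rfl htail]
  omega

end Aux
section Aux2
open Finset AbPartition

lemma exists_gap_aux {e : ℕ} (he : 0 < e) (B : Finset ℕ) :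
    ∀ m q, q ∉ B → q + m * e ∈ B → ∃ b ∈ B, e ≤ b ∧ b - e ∉ B := by
  intro m
  induction m with
  | zero => intro q hq hq'; simp at hq'; exact absurd hq' hq
  | succ m ih =>
    intro q hq hq'
    by_cases h : q + e ∈ B
    · exact ⟨q + e, h, by omega, by simpa using hq⟩
    · have h2 : q + e + m * e = q + (m + 1) * e := by ring
      exact ih (q + e) h (h2 ▸ hq')

lemma exists_gap_of_wt_ne_zero {e : ℕ} (he : 0 < e) {B : Finset ℕ} (h : wt e B ≠ 0) :
    ∃ b ∈ B, e ≤ b ∧ b - e ∉ B := by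
  classical
  rw [wt] at h
  have : ∃ p ∈ B, ((Finset.range p).filter fun q => q % e = p % e ∧ q ∉ B).card ≠ 0 := by
    by_contra hc
    push_neg at hc
    exact h (Finset.sum_eq_zero hc)
  obtain ⟨p, hp, hcard⟩ := this
  obtain ⟨q, hq⟩ := Finset.card_ne_zero.1 hcard
  simp only [Finset.mem_filter, Finset.mem_range] at hq
  obtain ⟨hq1, hq2, hq3⟩ := hq
  have hqe : q + e ≤ p := runner_step hq2 hq1
  have hdvd : e ∣ p - q := (Nat.modEq_iff_dvd' hq1.le).1 hq2
  obtain ⟨m, hm⟩ := hdvd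
  have hm' : q + m * e = p := by rw [Nat.mul_comm]; omega
  exact exists_gap_aux he B m q hq3 (hm' ▸ hp)

lemma nogap_of_wt_zero {e : ℕ} (he : 0 < e) {B : Finset ℕ} (h : wt e B = 0) :
    ∀ b ∈ B, e ≤ b → b - e ∈ B := by
  intro b hb heb
  by_contra hgap
  have := exists_gap_of_wt_ne_zero (B := B) he
  rw [wt] at h
  have hterm := (Finset.sum_eq_zero_iff.1 h) b hb
  have : b - e ∈ (Finset.range b).filter fun q => q % e = b % e ∧ q ∉ B := by
    simp only [Finset.mem_filter, Finset.mem_range]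
    exact ⟨by omega, sub_mod_self heb, hgap⟩
  rw [Finset.card_eq_zero] at hterm
  rw [hterm] at this
  simp at this

lemma betaSet_succ (l : AbPartition) {k : ℕ} (hk : l.length ≤ k) :
    l.betaSet (k + 1) = insert 0 ((l.betaSet k).image (· + 1)) := by
  ext b
  simp only [mem_betaSet, Finset.mem_insert, Finset.mem_image]
  constructor
  · rintro ⟨i, hi, hib⟩
    by_cases h : i = k
    · subst h
      left
      rw [l.parts_eq_zero hk] at hib
      omega
    · right
      exact ⟨l.parts i + (k - 1 - i), ⟨i, by omega, rfl⟩, by omega⟩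
  · rintro (rfl | ⟨x, ⟨i, hi, hib⟩, hxb⟩)
    · exact ⟨k, by omega, by rw [l.parts_eq_zero hk]; omega⟩
    · exact ⟨i, by omega, by omega⟩

lemma nogap_mono (l : AbPartition) {e k : ℕ} (he : 0 < e) (hk : l.length ≤ k)
    (h : ∀ b ∈ l.betaSet k, e ≤ b → b - e ∈ l.betaSet k) :
    ∀ k', k ≤ k' → ∀ b ∈ l.betaSet k', e ≤ b → b - e ∈ l.betaSet k' := by
  intro k' hkk'
  induction k' , hkk' using Nat.le_induction with
  | base => exact h
  | succ k' hkk' ih =>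
    have hk' : l.length ≤ k' := hk.trans hkk'
    rw [betaSet_succ l hk']
    intro b hb heb
    simp only [Finset.mem_insert, Finset.mem_image] at hb ⊢
    rcases hb with rfl | ⟨x, hx, rfl⟩
    · omega
    · rcases Nat.lt_or_ge x e with hxe | hxe
      · left; omega
      · right
        exact ⟨x - e, ih x hx hxe, by omega⟩

end Aux2
section Aux3
open Finset AbPartition

lemma ribbon_singleton (x₀ : ℕ × ℕ) : IsRibbonC 1 (fun _ => x₀) {x₀} := by
  refine ⟨?_, ?_, ?_⟩
  · ext x
    simp only [Set.mem_image, Set.mem_Iio, Set.mem_singleton_iff]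
    constructor
    · rintro rfl; exact ⟨0, by omega, rfl⟩
    · rintro ⟨i, hi, rfl⟩; rfl
  · intro x hx y hy _
    simp only [Set.mem_Iio, Nat.lt_one_iff] at hx hy
    rw [hx, hy]
  · intro i hi
    omega

lemma ribbon_cons {e : ℕ} {c' : ℕ → ℕ × ℕ} {S : Set (ℕ × ℕ)} (x₀ : ℕ × ℕ)
    (h : IsRibbonC e c' S) (hx : x₀ ∉ S)
    (hstep : (c' 0 = (x₀.1 + 1, x₀.2)) ∨ (x₀.2 = (c' 0).2 + 1 ∧ (c' 0).1 = x₀.1)) :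
    IsRibbonC (e + 1) (fun n => match n with | 0 => x₀ | n + 1 => c' n) (insert x₀ S) := by
  obtain ⟨him, hinj, hsteps⟩ := h
  refine ⟨?_, ?_, ?_⟩
  · ext x
    simp only [Set.mem_insert_iff, Set.mem_image, Set.mem_Iio]
    constructor
    · rintro (rfl | hxS)
      · exact ⟨0, by omega, rfl⟩
      · rw [him] at hxS
        obtain ⟨i, hi, rfl⟩ := hxS
        have hi' := Set.mem_Iio.1 hi
        exact ⟨i + 1, by omega, rfl⟩
    · rintro ⟨i, hi, rfl⟩
      match i, hi with
      | 0, _ => exact Or.inl rfl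
      | j + 1, hi =>
        right
        rw [him]
        exact ⟨j, Set.mem_Iio.2 (by omega), rfl⟩
  · intro i hi j hj hij
    simp only [Set.mem_Iio] at hi hj
    match i, j, hi, hj, hij with
    | 0, 0, _, _, _ => rfl
    | 0, j + 1, hi, hj, hij =>
      exfalso
      apply hx
      rw [him]
      exact ⟨j, by simp only [Set.mem_Iio]; omega, hij.symm⟩
    | i + 1, 0, hi, hj, hij =>
      exfalso
      apply hx
      rw [him]
      exact ⟨i, by simp only [Set.mem_Iio]; omega, hij⟩
    | i + 1, j + 1, hi, hj, hij =>
      have := hinj (show i ∈ Set.Iio e by simp only [Set.mem_Iio]; omega)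
        (show j ∈ Set.Iio e by simp only [Set.mem_Iio]; omega) hij
      omega
  · intro i hi
    match i with
    | 0 =>
      rcases hstep with h1 | h2
      · left; exact h1
      · right; exact h2
    | j + 1 => exact hsteps j (by omega)

lemma ribbon_exists (a : ℕ → ℕ) (t : ℕ) :
    ∀ (e : ℕ) (r : ℕ) (b : ℕ → ℕ), r ≤ t →
    (∀ i, r ≤ i → i < t → a i = b (i + 1)) →
    (∀ i, r ≤ i → i ≤ t → a i ≤ b i) →
    (∑ i ∈ Finset.Icc r t, (b i + 1 - a i)) = e →
    ∃ c : ℕ → ℕ × ℕ, c 0 = (r, b r) ∧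
      IsRibbonC e c {x : ℕ × ℕ | r ≤ x.1 ∧ x.1 ≤ t ∧ a x.1 ≤ x.2 ∧ x.2 ≤ b x.1} := by
  intro e
  induction e with
  | zero =>
    intro r b hrt h1 h2 hsum
    exfalso
    have hr : r ∈ Finset.Icc r t := by simp [hrt]
    have := Finset.sum_eq_zero_iff.1 hsum r hr
    have := h2 r le_rfl hrt
    omega
  | succ e ih =>
    intro r b hrt h1 h2 hsum
    by_cases hab : a r < b r
    · -- peel leftmost: decrease b r by 1
      set b' : ℕ → ℕ := fun i => if i = r then b r - 1 else b i with hb'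
      have h1' : ∀ i, r ≤ i → i < t → a i = b' (i + 1) := by
        intro i hri hit
        have : i + 1 ≠ r := by omega
        simp only [hb', this, if_false]
        exact h1 i hri hit
      have h2' : ∀ i, r ≤ i → i ≤ t → a i ≤ b' i := by
        intro i hri hit
        simp only [hb']
        split
        · next h => subst h; omega
        · exact h2 i hri hit
      have hsum' : (∑ i ∈ Finset.Icc r t, (b' i + 1 - a i)) = e := by
        have hr : r ∈ Finset.Icc r t := by simp [hrt]
        rw [← Finset.add_sum_erase _ _ hr] at hsum ⊢
        have heq : ∑ i ∈ (Finset.Icc r t).erase r, (b' i + 1 - a i) =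
            ∑ i ∈ (Finset.Icc r t).erase r, (b i + 1 - a i) := by
          apply Finset.sum_congr rfl
          intro i hi
          have : i ≠ r := Finset.ne_of_mem_erase hi
          simp [hb', this]
        rw [heq]
        have hbr2 : b' r = b r - 1 := by simp [hb']
        rw [hbr2]
        omega
      obtain ⟨c', hc0, hc⟩ := ih r b' hrt h1' h2' hsum'
      have hbr' : b' r = b r - 1 := by simp [hb']
      refine ⟨fun n => match n with | 0 => (r, b r) | n + 1 => c' n, rfl, ?_⟩
      have hsets : {x : ℕ × ℕ | r ≤ x.1 ∧ x.1 ≤ t ∧ a x.1 ≤ x.2 ∧ x.2 ≤ b x.1} =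
          insert (r, b r) {x : ℕ × ℕ | r ≤ x.1 ∧ x.1 ≤ t ∧ a x.1 ≤ x.2 ∧ x.2 ≤ b' x.1} := by
        ext ⟨i, j⟩
        simp only [Set.mem_setOf_eq, Set.mem_insert_iff, Prod.mk.injEq, hb']
        constructor
        · rintro ⟨hi1, hi2, hi3, hi4⟩
          by_cases hir : i = r
          · subst hir
            by_cases hjb : j = b i
            · exact Or.inl ⟨rfl, hjb⟩
            · exact Or.inr ⟨hi1, hi2, hi3, by simp; omega⟩
          · exact Or.inr ⟨hi1, hi2, hi3, by rw [if_neg hir]; exact hi4⟩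
        · rintro (⟨rfl, rfl⟩ | ⟨hi1, hi2, hi3, hi4⟩)
          · exact ⟨le_rfl, hrt, h2 _ le_rfl hrt, le_rfl⟩
          · refine ⟨hi1, hi2, hi3, ?_⟩
            by_cases hir : i = r
            · subst hir
              simp at hi4
              omega
            · rw [if_neg hir] at hi4
              exact hi4
      rw [hsets]
      apply ribbon_cons _ hc ?_ ?_
      · simp only [Set.mem_setOf_eq, hbr']
        omega
      · right
        rw [hc0, hbr']
        exact ⟨by omega, rfl⟩
    · -- a r = b r
      have hab' : a r = b r := le_antisymm (h2 r le_rfl hrt) (by omega)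
      by_cases hrt' : r = t
      · -- single cell
        subst hrt'
        have : e + 1 = 1 := by
          rw [Finset.Icc_self, Finset.sum_singleton] at hsum
          omega
        rw [this]
        refine ⟨fun _ => (r, b r), rfl, ?_⟩
        have hsets : {x : ℕ × ℕ | r ≤ x.1 ∧ x.1 ≤ r ∧ a x.1 ≤ x.2 ∧ x.2 ≤ b x.1} =
            {(r, b r)} := by
          ext ⟨i, j⟩
          simp only [Set.mem_setOf_eq, Set.mem_singleton_iff, Prod.mk.injEq]
          constructor
          · rintro ⟨hi1, hi2, hi3, hi4⟩
            have : i = r := le_antisymm hi2 hi1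
            subst this
            exact ⟨rfl, by omega⟩
          · rintro ⟨rfl, rfl⟩
            exact ⟨le_rfl, le_rfl, by omega, le_rfl⟩
        rw [hsets]
        exact ribbon_singleton _
      · -- go down to row r+1
        have hrt2 : r + 1 ≤ t := by omega
        have hsum' : (∑ i ∈ Finset.Icc (r + 1) t, (b i + 1 - a i)) = e := by
          have hins : Finset.Icc r t = insert r (Finset.Icc (r + 1) t) := by
            ext i; simp only [Finset.mem_Icc, Finset.mem_insert]; omega
          rw [hins, Finset.sum_insert (by simp)] at hsum
          omega
        obtain ⟨c', hc0, hc⟩ := ih (r + 1) b hrt2 (fun i hi => h1 i (by omega))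
          (fun i hi => h2 i (by omega)) hsum'
        refine ⟨fun n => match n with | 0 => (r, b r) | n + 1 => c' n, rfl, ?_⟩
        have hsets : {x : ℕ × ℕ | r ≤ x.1 ∧ x.1 ≤ t ∧ a x.1 ≤ x.2 ∧ x.2 ≤ b x.1} =
            insert (r, b r) {x : ℕ × ℕ | r + 1 ≤ x.1 ∧ x.1 ≤ t ∧ a x.1 ≤ x.2 ∧ x.2 ≤ b x.1} := by
          ext ⟨i, j⟩
          simp only [Set.mem_setOf_eq, Set.mem_insert_iff, Prod.mk.injEq]
          constructor
          · rintro ⟨hi1, hi2, hi3, hi4⟩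
            by_cases hir : i = r
            · subst hir
              exact Or.inl ⟨rfl, by omega⟩
            · exact Or.inr ⟨by omega, hi2, hi3, hi4⟩
          · rintro (⟨rfl, rfl⟩ | ⟨hi1, hi2, hi3, hi4⟩)
            · exact ⟨le_rfl, hrt, h2 _ le_rfl hrt, le_rfl⟩
            · exact ⟨by omega, hi2, hi3, hi4⟩
        rw [hsets]
        apply ribbon_cons _ hc ?_ ?_
        · simp only [Set.mem_setOf_eq]
          omega
        · left
          rw [hc0]
          have : b (r + 1) = a r := (h1 r le_rfl (by omega)).symm
          rw [this, hab']
end Aux3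
section Aux4
open Finset AbPartition

lemma ribbon_chain {e : ℕ} {c : ℕ → ℕ × ℕ} (hsteps : RibbonSteps e c) :
    ∀ i j, i ≤ j → j < e →
      (c i).1 ≤ (c j).1 ∧ (c j).2 ≤ (c i).2 ∧
      (c j).1 + (c i).2 = (c i).1 + (c j).2 + (j - i) := by
  intro i j hij
  induction j, hij using Nat.le_induction with
  | base => intro _; omega
  | succ j hij ih =>
    intro hj
    have IH := ih (by omega)
    rcases hsteps j (by omega) with h | h
    · have h1 : (c (j + 1)).1 = (c j).1 + 1 := by rw [h]
      have h2 : (c (j + 1)).2 = (c j).2 := by rw [h]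
      omega
    · omega

lemma cells_subset_parts_le {m κ : AbPartition} (hsub : cells m ⊆ cells κ) :
    ∀ n, m.parts n ≤ κ.parts n := by
  intro n
  by_cases h : m.parts n = 0
  · omega
  · have : ((n, m.parts n - 1) : ℕ × ℕ) ∈ cells m := by
      simp only [cells, Set.mem_setOf_eq]
      omega
    have := hsub this
    simp only [cells, Set.mem_setOf_eq] at this
    omega

lemma gap_of_removeRibbon {e : ℕ} (he : 2 ≤ e) {κ m : AbPartition}
    (h : RemoveRibbon e κ m) :
    ∃ N, ∀ k', N ≤ k' → ∃ b ∈ κ.betaSet k', e ≤ b ∧ b - e ∉ κ.betaSet k' := by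
  obtain ⟨hsub, c, him, hinj, hsteps⟩ := h
  have hple := cells_subset_parts_le hsub
  have hmem : ∀ i, i < e →
      m.parts (c i).1 ≤ (c i).2 ∧ (c i).2 < κ.parts (c i).1 := by
    intro i hi
    have hx : c i ∈ cells κ \ cells m := by
      rw [him]; exact ⟨i, Set.mem_Iio.2 hi, rfl⟩
    obtain ⟨h1, h2⟩ := hx
    simp only [cells, Set.mem_setOf_eq] at h1 h2
    exact ⟨by omega, h1⟩
  have chain := ribbon_chain hsteps
  have h0 := hmem 0 (by omega)
  have hlast := hmem (e - 1) (by omega)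
  -- rows bounded by (c (e-1)).1
  have hrow_le : ∀ i, i < e → (c i).1 ≤ (c (e - 1)).1 := by
    intro i hi
    exact (chain i (e - 1) (by omega) (by omega)).1
  -- Fact A : first cell is at the end of its row
  have hA : (c 0).2 + 1 = κ.parts (c 0).1 := by
    have hx : ((c 0).1, κ.parts (c 0).1 - 1) ∈ cells κ \ cells m := by
      constructor
      · simp only [cells, Set.mem_setOf_eq]; omega
      · simp only [cells, Set.mem_setOf_eq]; omega
    rw [him] at hx
    obtain ⟨j, hj, hcj⟩ := hx
    have hj' := Set.mem_Iio.1 hj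
    have hj1 : (c j).1 = (c 0).1 := by rw [hcj]
    have hj2 : (c j).2 = κ.parts (c 0).1 - 1 := by rw [hcj]
    have := (chain 0 j (by omega) hj').2.1
    omega
  -- Fact B : last cell is at the start of its row
  have hB : (c (e - 1)).2 = m.parts (c (e - 1)).1 := by
    have hx : ((c (e - 1)).1, m.parts (c (e - 1)).1) ∈ cells κ \ cells m := by
      constructor
      · simp only [cells, Set.mem_setOf_eq]; omega
      · simp only [cells, Set.mem_setOf_eq]; omega
    rw [him] at hx
    obtain ⟨j, hj, hcj⟩ := hx
    have hj' := Set.mem_Iio.1 hj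
    have hj2 : (c j).2 = m.parts (c (e - 1)).1 := by rw [hcj]
    have := (chain j (e - 1) (by omega) (by omega)).2.1
    omega
  -- Fact C : the row below the last row is untouched
  have hC : κ.parts ((c (e - 1)).1 + 1) = m.parts ((c (e - 1)).1 + 1) := by
    by_contra hne
    have hlt : m.parts ((c (e - 1)).1 + 1) < κ.parts ((c (e - 1)).1 + 1) := by
      have := hple ((c (e - 1)).1 + 1); omega
    have hx : ((c (e - 1)).1 + 1, m.parts ((c (e - 1)).1 + 1)) ∈ cells κ \ cells m := by
      constructor
      · simp only [cells, Set.mem_setOf_eq]; omega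
      · simp only [cells, Set.mem_setOf_eq]; omega
    rw [him] at hx
    obtain ⟨j, hj, hcj⟩ := hx
    have hj' := Set.mem_Iio.1 hj
    have := hrow_le j hj'
    have : (c j).1 = (c (e - 1)).1 + 1 := by rw [hcj]
    omega
  have hD := chain 0 (e - 1) (by omega) (by omega)
  have hanti : m.parts ((c (e - 1)).1 + 1) ≤ m.parts ((c (e - 1)).1) :=
    m.antitone (by omega)
  refine ⟨(c (e - 1)).1 + 2, fun k' hk' => ?_⟩
  refine ⟨κ.parts (c 0).1 + (k' - 1 - (c 0).1), mem_betaSet.2 ⟨(c 0).1, by omega, rfl⟩,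
    by omega, ?_⟩
  intro hmem'
  obtain ⟨j, hj, hjeq⟩ := mem_betaSet.1 hmem'
  rcases le_or_gt j ((c (e - 1)).1) with hc1 | hc1
  · have := κ.antitone hc1
    omega
  · have := κ.antitone (show (c (e - 1)).1 + 1 ≤ j by omega)
    omega

end Aux4
section Aux5
open Finset AbPartition

lemma remove_ribbon_of_gap {e k : ℕ} (he : 2 ≤ e) {l : AbPartition} (hl : l.length ≤ k)
    {b : ℕ} (hb : b ∈ l.betaSet k) (heb : e ≤ b) (hgap : b - e ∉ l.betaSet k) :
    ∃ l' : AbPartition, RemoveRibbon e l l' ∧ l'.length ≤ k ∧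
      l'.betaSet k = insert (b - e) ((l.betaSet k).erase b) ∧
      l.size = l'.size + e := by
  classical
  obtain ⟨r, hrk, hrb⟩ := mem_betaSet.1 hb
  obtain ⟨s, hs⟩ : ∃ s, s = sInf {j | j = k ∨ (j < k ∧ l.parts j + (k - 1 - j) ≤ b - e)} :=
    ⟨_, rfl⟩
  have hsmem : s = k ∨ (s < k ∧ l.parts s + (k - 1 - s) ≤ b - e) := by
    have h := Nat.sInf_mem (s := {j | j = k ∨ (j < k ∧ l.parts j + (k - 1 - j) ≤ b - e)})
      ⟨k, Or.inl rfl⟩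
    rw [← hs] at h
    exact h
  have hsk : s ≤ k := hs ▸ Nat.sInf_le (Or.inl rfl)
  have hlow : ∀ j, j < s → b - e < l.parts j + (k - 1 - j) := by
    intro j hj
    have hnot := Nat.notMem_of_lt_sInf (hs ▸ hj)
    simp only [Set.mem_setOf_eq] at hnot
    push_neg at hnot
    have hjk : j < k := by omega
    have := hnot.2 hjk
    omega
  have hhigh : ∀ j, s ≤ j → j < k → l.parts j + (k - 1 - j) < b - e := by
    intro j hsj hjk
    have h1 : l.parts j ≤ l.parts s := l.antitone hsj
    have hne : l.parts j + (k - 1 - j) ≠ b - e := fun hEq =>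
      hgap (mem_betaSet.2 ⟨j, hjk, hEq⟩)
    rcases hsmem with h | ⟨h2, h3⟩
    · omega
    · omega
  have hrs : r < s := by
    by_contra hcon
    push_neg at hcon
    have := hhigh r hcon hrk
    omega
  have hpos : ∀ j, r < j → j < s → 1 ≤ l.parts j := by
    intro j h1 h2
    by_contra hz
    push_neg at hz
    have hjk : j < k := by omega
    have hj0 : l.parts j = 0 := by omega
    have hlj := hlow j h2
    have hjj' : j < k - 1 - (b - e) := by omega
    have hz2 : l.parts (k - 1 - (b - e)) = 0 := by
      have := l.antitone hjj'.le; omega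
    exact hgap (mem_betaSet.2 ⟨k - 1 - (b - e), by omega, by omega⟩)
  have hksbe : k - s ≤ b - e := by
    rcases hsmem with h | ⟨h1, h2⟩
    · omega
    · have := hhigh s le_rfl h1
      omega
  obtain ⟨μ, hμ⟩ : ∃ μ : ℕ → ℕ, μ = fun i => if i < r then l.parts i
    else if i + 1 < s then l.parts (i + 1) - 1
    else if i + 1 = s then b - e - (k - s)
    else l.parts i := ⟨_, rfl⟩
  have hμ_lt : ∀ i, i < r → μ i = l.parts i := by
    intro i h; simp only [hμ]; split_ifs <;> omega
  have hμ_mid : ∀ i, r ≤ i → i + 1 < s → μ i = l.parts (i + 1) - 1 := by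
    intro i h1 h2; simp only [hμ]; split_ifs <;> omega
  have hμ_s : ∀ i, r ≤ i → i + 1 = s → μ i = b - e - (k - s) := by
    intro i h1 h2; simp only [hμ]; split_ifs <;> omega
  have hμ_ge : ∀ i, s ≤ i → μ i = l.parts i := by
    intro i h; simp only [hμ]; split_ifs <;> omega
  have hμ_anti : ∀ i, μ (i + 1) ≤ μ i := by
    intro i
    rcases Nat.lt_or_ge (i + 1) r with h1 | h1
    · rw [hμ_lt (i + 1) h1, hμ_lt i (by omega)]
      exact l.antitone (by omega)
    rcases Nat.lt_or_ge (i + 1 + 1) s with h2 | h2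
    · rw [hμ_mid (i + 1) (by omega) h2]
      rcases Nat.lt_or_ge i r with h3 | h3
      · rw [hμ_lt i h3]
        have := l.antitone (show i ≤ i + 1 + 1 by omega)
        omega
      · rw [hμ_mid i h3 (by omega)]
        have := l.antitone (show i + 1 ≤ i + 1 + 1 by omega)
        omega
    rcases Nat.lt_or_ge (i + 1) s with h4 | h4
    · have hμi1 : μ (i + 1) = b - e - (k - s) := hμ_s (i + 1) (by omega) (by omega)
      rw [hμi1]
      rcases Nat.lt_or_ge i r with h3 | h3
      · rw [hμ_lt i h3]
        have := hlow i (by omega)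
        omega
      · rw [hμ_mid i h3 h4]
        have := hlow (i + 1) h4
        omega
    · rw [hμ_ge (i + 1) h4]
      rcases Nat.lt_or_ge i r with h3 | h3
      · omega
      rcases Nat.eq_or_lt_of_le h4 with heq | hlt'
      · rw [hμ_s i h3 (by omega)]
        rcases Nat.lt_or_ge s k with hsk' | hsk'
        · have := hhigh s le_rfl hsk'
          rw [← heq]
          omega
        · have h0 : l.parts s = 0 := l.parts_eq_zero (by omega)
          rw [← heq]
          omega
      · rw [hμ_ge i (by omega)]
        exact l.antitone (by omega)
  have hμ_le : ∀ i, μ i ≤ l.parts i := by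
    intro i
    rcases Nat.lt_or_ge i r with h1 | h1
    · rw [hμ_lt i h1]
    rcases Nat.lt_or_ge (i + 1) s with h2 | h2
    · rw [hμ_mid i h1 h2]
      have := l.antitone (show i ≤ i + 1 by omega)
      omega
    rcases Nat.eq_or_lt_of_le h2 with h3 | h3
    · rw [hμ_s i h1 (by omega)]
      have := hlow i (by omega)
      omega
    · rw [hμ_ge i (by omega)]
  obtain ⟨l', hl'p⟩ : ∃ l' : AbPartition, ∀ i, l'.parts i = μ i :=
    ⟨{ parts := μ
       antitone := fun i j hij => antitone_nat_of_succ_le hμ_anti hij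
       eventually_zero := ⟨max s l.length, fun i hi => by
         rw [hμ_ge i (by omega)]
         exact l.parts_eq_zero (by omega)⟩ }, fun _ => rfl⟩
  have hlen : l'.length ≤ k := by
    apply length_le_of
    intro i hi
    rw [hl'p, hμ_ge i (by omega)]
    exact l.parts_eq_zero (by omega)
  have hposr : 1 ≤ l.parts r := by
    rcases Nat.eq_or_lt_of_le (show r + 1 ≤ s from hrs) with h | h
    · have := hlow r hrs
      omega
    · have h1 := hpos (r + 1) (by omega) h
      have : l.parts (r + 1) ≤ l.parts r := l.antitone (by omega)
      omega
  have hpos' : ∀ i, r ≤ i → i < s → 1 ≤ l.parts i := by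
    intro i h1 h2
    rcases Nat.eq_or_lt_of_le h1 with h | h
    · rw [← h]; exact hposr
    · exact hpos i h h2
  -- beta set equality
  have hβ' : l'.betaSet k = insert (b - e) ((l.betaSet k).erase b) := by
    ext x
    simp only [mem_betaSet, Finset.mem_insert, Finset.mem_erase, hl'p]
    constructor
    · rintro ⟨i, hik, hix⟩
      rcases Nat.lt_or_ge i r with h1 | h1
      · rw [hμ_lt i h1] at hix
        refine Or.inr ⟨fun hxb => ?_, ⟨i, hik, hix⟩⟩
        have : i = r := l.beta_inj hik hrk (by omega)
        omega
      rcases Nat.lt_or_ge (i + 1) s with h2 | h2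
      · rw [hμ_mid i h1 h2] at hix
        have hp1 : 1 ≤ l.parts (i + 1) := hpos (i + 1) (by omega) h2
        refine Or.inr ⟨fun hxb => ?_, ⟨i + 1, by omega, by omega⟩⟩
        have : i + 1 = r := l.beta_inj (by omega) hrk (by omega)
        omega
      rcases Nat.eq_or_lt_of_le h2 with h3 | h3
      · rw [hμ_s i h1 (by omega)] at hix
        left
        omega
      · rw [hμ_ge i (by omega)] at hix
        refine Or.inr ⟨fun hxb => ?_, ⟨i, hik, hix⟩⟩
        have : i = r := l.beta_inj hik hrk (by omega)
        omega
    · rintro (rfl | ⟨hxb, i, hik, hix⟩)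
      · refine ⟨s - 1, by omega, ?_⟩
        rw [hμ_s (s - 1) (by omega) (by omega)]
        omega
      · rcases Nat.lt_or_ge i r with h1 | h1
        · exact ⟨i, hik, by rw [hμ_lt i h1]; exact hix⟩
        rcases Nat.lt_or_ge i s with h2 | h2
        · have hir : r < i := by
            rcases Nat.eq_or_lt_of_le h1 with h | h
            · exfalso; apply hxb; rw [← h] at hix; omega
            · omega
          have hp1 : 1 ≤ l.parts i := hpos i hir h2
          refine ⟨i - 1, by omega, ?_⟩
          have hieq : i - 1 + 1 = i := by omega
          rw [hμ_mid (i - 1) (by omega) (by omega), hieq]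
          omega
        · exact ⟨i, hik, by rw [hμ_ge i h2]; exact hix⟩
  -- sums
  have hinj1 : ∀ x ∈ Finset.range k, ∀ y ∈ Finset.range k,
      l.parts x + (k - 1 - x) = l.parts y + (k - 1 - y) → x = y := fun x hx y hy h =>
    l.beta_inj (Finset.mem_range.1 hx) (Finset.mem_range.1 hy) h
  have hinj2 : ∀ x ∈ Finset.range k, ∀ y ∈ Finset.range k,
      l'.parts x + (k - 1 - x) = l'.parts y + (k - 1 - y) → x = y := fun x hx y hy h =>
    l'.beta_inj (Finset.mem_range.1 hx) (Finset.mem_range.1 hy) h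
  have hsum1 : ∑ x ∈ l.betaSet k, x = ∑ i ∈ Finset.range k, (l.parts i + (k - 1 - i)) :=
    Finset.sum_image hinj1
  have hsum2 : ∑ x ∈ l'.betaSet k, x = ∑ i ∈ Finset.range k, (l'.parts i + (k - 1 - i)) :=
    Finset.sum_image hinj2
  have hsum3 : b + ∑ x ∈ (l.betaSet k).erase b, x = ∑ x ∈ l.betaSet k, x :=
    Finset.add_sum_erase _ (fun x => x) hb
  have hsum4 : ∑ x ∈ insert (b - e) ((l.betaSet k).erase b), (x : ℕ) =
      (b - e) + ∑ x ∈ (l.betaSet k).erase b, x :=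
    Finset.sum_insert (fun hmem => hgap (Finset.mem_of_mem_erase hmem))
  have hglobal : ∑ i ∈ Finset.range k, l.parts i = (∑ i ∈ Finset.range k, μ i) + e := by
    have h1 : ∑ i ∈ Finset.range k, (l.parts i + (k - 1 - i)) =
        (∑ i ∈ Finset.range k, l.parts i) + ∑ i ∈ Finset.range k, (k - 1 - i) :=
      Finset.sum_add_distrib
    have h2 : ∑ i ∈ Finset.range k, (l'.parts i + (k - 1 - i)) =
        (∑ i ∈ Finset.range k, μ i) + ∑ i ∈ Finset.range k, (k - 1 - i) := by
      rw [← Finset.sum_add_distrib]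
      exact Finset.sum_congr rfl fun i _ => by rw [hl'p]
    rw [hβ'] at hsum2
    omega
  have hsize : l.size = l'.size + e := by
    rw [l.size_eq_sum hl, l'.size_eq_sum hlen]
    have : ∑ i ∈ Finset.range k, l'.parts i = ∑ i ∈ Finset.range k, μ i :=
      Finset.sum_congr rfl fun i _ => hl'p i
    omega
  -- cells subset
  have hsub : cells l' ⊆ cells l := by
    intro x hx
    simp only [cells, Set.mem_setOf_eq, hl'p] at hx ⊢
    exact lt_of_lt_of_le hx (hμ_le x.1)
  -- diff set
  have hdiff : cells l \ cells l' =
      {x : ℕ × ℕ | r ≤ x.1 ∧ x.1 ≤ s - 1 ∧ μ x.1 ≤ x.2 ∧ x.2 ≤ l.parts x.1 - 1} := by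
    ext ⟨i, j⟩
    simp only [cells, Set.mem_diff, Set.mem_setOf_eq, hl'p, not_lt]
    constructor
    · rintro ⟨h1, h2⟩
      rcases Nat.lt_or_ge i r with hh | hh
      · rw [hμ_lt i hh] at h2; omega
      rcases Nat.lt_or_ge i s with hh2 | hh2
      · exact ⟨hh, by omega, h2, by omega⟩
      · rw [hμ_ge i hh2] at h2; omega
    · rintro ⟨h1, h2, h3, h4⟩
      have hp1 : 1 ≤ l.parts i := hpos' i h1 (by omega)
      exact ⟨by omega, h3⟩
  -- ribbon
  have hribsum : ∑ i ∈ Finset.Icc r (s - 1), ((l.parts i - 1) + 1 - μ i) = e := by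
    have hterm : ∀ i ∈ Finset.Icc r (s - 1), (l.parts i - 1) + 1 - μ i = l.parts i - μ i := by
      intro i hi
      simp only [Finset.mem_Icc] at hi
      have := hpos' i hi.1 (by omega)
      omega
    rw [Finset.sum_congr rfl hterm]
    have hss : Finset.Icc r (s - 1) ⊆ Finset.range k := by
      intro i hi
      simp only [Finset.mem_Icc] at hi
      simp only [Finset.mem_range]
      omega
    have hout : ∀ i ∈ Finset.range k \ Finset.Icc r (s - 1), μ i = l.parts i := by
      intro i hi
      simp only [Finset.mem_sdiff, Finset.mem_range, Finset.mem_Icc, not_and, not_le] at hi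
      rcases Nat.lt_or_ge i r with hh | hh
      · exact hμ_lt i hh
      · exact hμ_ge i (by have := hi.2 hh; omega)
    have hd1 := Finset.sum_sdiff (f := l.parts) hss
    have hd2 := Finset.sum_sdiff (f := μ) hss
    have hd3 : ∑ i ∈ Finset.range k \ Finset.Icc r (s - 1), μ i =
        ∑ i ∈ Finset.range k \ Finset.Icc r (s - 1), l.parts i :=
      Finset.sum_congr rfl hout
    have hd4 : ∑ i ∈ Finset.Icc r (s - 1), (μ i + (l.parts i - μ i)) =
        ∑ i ∈ Finset.Icc r (s - 1), l.parts i := by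
      apply Finset.sum_congr rfl
      intro i hi
      have := hμ_le i
      omega
    rw [Finset.sum_add_distrib] at hd4
    omega
  obtain ⟨c, hc0, hc⟩ := ribbon_exists μ (s - 1) e r (fun i => l.parts i - 1)
    (by omega)
    (fun i h1 h2 => hμ_mid i h1 (by omega))
    (by
      intro i h1 h2
      show μ i ≤ l.parts i - 1
      rcases Nat.lt_or_ge (i + 1) s with hh | hh
      · rw [hμ_mid i h1 hh]
        have := l.antitone (show i ≤ i + 1 by omega)
        have := hpos (i + 1) (by omega) hh
        omega
      · rw [hμ_s i h1 (by omega)]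
        have := hlow i (by omega)
        have := hpos' i h1 (by omega)
        omega)
    hribsum
  exact ⟨l', ⟨hsub, c, by rw [hdiff]; exact hc⟩, hlen, hβ', hsize⟩

end Aux5
section Main
open Finset AbPartition

lemma eweight_aux (e k : ℕ) (he : 2 ≤ e) :
    ∀ n (l : AbPartition), l.length ≤ k → wt e (l.betaSet k) = n → EWeight e l n := by
  intro n
  induction n with
  | zero =>
    intro l hl hw
    refine ⟨l, ⟨Relation.ReflTransGen.refl, ?_⟩, by omega⟩
    rintro ⟨m, hm⟩
    obtain ⟨N, hN⟩ := gap_of_removeRibbon he hm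
    obtain ⟨b, hbmem, hbe, hbgap⟩ := hN (max k N) (le_max_right _ _)
    have hnogap := nogap_mono l (by omega) hl (nogap_of_wt_zero (by omega) hw)
      (max k N) (le_max_left _ _)
    exact hbgap (hnogap b hbmem hbe)
  | succ n ih =>
    intro l hl hw
    obtain ⟨b, hb, heb, hgap⟩ := exists_gap_of_wt_ne_zero (e := e) (by omega)
      (by omega : wt e (l.betaSet k) ≠ 0)
    obtain ⟨l', hrib, hlen', hβ', hsize⟩ := remove_ribbon_of_gap he hl hb heb hgap
    have hw' : wt e (l'.betaSet k) = n := by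
      have := wt_move (by omega) hb heb hgap
      rw [← hβ'] at this
      omega
    obtain ⟨κ, ⟨hchain, hcore⟩, hsz⟩ := ih l' hlen' hw'
    exact ⟨κ, ⟨Relation.ReflTransGen.head hrib hchain, hcore⟩, by rw [hsize, hsz]; ring⟩

end Main

theorem eweight_eq_gap_count' (e k : ℕ) (he : 2 ≤ e)
    (l : AbPartition) (hl : l.length ≤ k) :
    EWeight e l
      (∑ p ∈ l.betaSet k,
        ((Finset.range p).filter fun q => q % e = p % e ∧ q ∉ l.betaSet k).card) :=
  eweight_aux e k he _ l hl rfl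

/-- the `e`-weight of `λ` equals the sum, over the beads of its
`e`-abacus with `k` beads, of the number of empty positions above each bead on
its runner. -/
theorem eweight_eq_gap_count (e k : ℕ) (he : 2 ≤ e)
    (l : AbPartition) (hl : l.length ≤ k) :
    EWeight e l
      (∑ p ∈ l.betaSet k,
        ((Finset.range p).filter fun q => q % e = p % e ∧ q ∉ l.betaSet k).card) := by
  exact eweight_aux e k he _ l hl rfl
end

section
/- Removing a rim hook of length e from a partition ν, yielding a partition λ, corresponds on the e-abacus (with k beads, k ≥ ℓ(ν)) to moving a single bead from an occupied position p with p ≥ e to the empty position p − e on the same runner; conversely, every such bead move corresponds to removing an e-rim-hook. Moreover the leg length of the removed rim hook equals the number of beads at positions strictly between p − e and p. -/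
open Finset

/-- A partition: a weakly decreasing, eventually-zero sequence of naturals.
`parts i` is the `(i+1)`-st part (0-indexed). -/
structure NPartition where
  parts : ℕ → ℕ
  antitone : ∀ ⦃i j : ℕ⦄, i ≤ j → parts j ≤ parts i
  eventually_zero : ∃ N, ∀ i, N ≤ i → parts i = 0

namespace NPartition

/-- The length of a partition: the number of nonzero parts. -/
noncomputable def length (l : NPartition) : ℕ :=
  sInf {N | ∀ i, N ≤ i → l.parts i = 0}

/-- The size `|λ|` of a partition: the sum of its parts. -/
noncomputable def size (l : NPartition) : ℕ :=
  ∑ i ∈ Finset.range l.length, l.parts i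

/-- The beta-numbers of `l` with respect to `k` beads: `λ_i + k - i` for `i = 1, …, k`
(here 0-indexed: bead for row `i+1` sits at `parts i + (k - 1 - i)`). -/
def betaSet (l : NPartition) (k : ℕ) : Finset ℕ :=
  (Finset.range k).image fun i => l.parts i + (k - 1 - i)

/-- Dominance order: `l ⊵ m`. -/
def Dominates (l m : NPartition) : Prop :=
  ∀ j, ∑ i ∈ Finset.range j, m.parts i ≤ ∑ i ∈ Finset.range j, l.parts i

/-- Inserting an empty runner before runner `α` into an `e`-abacus: a bead at
position `m*e + r` moves to `m*(e+1) + r` if `r < α` and to `m*(e+1) + r + 1` otherwise. -/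
def insRunner (e α p : ℕ) : ℕ :=
  (p / e) * (e + 1) + p % e + (if p % e < α then 0 else 1)

/-- `lp` is the partition `λ⁺` obtained from `l` by inserting an empty runner at
position `α` into its `e`-abacus with `k` beads. -/
def IsPlus (e α k : ℕ) (l lp : NPartition) : Prop :=
  lp.length ≤ k ∧ lp.betaSet k = (l.betaSet k).image (insRunner e α)

/-- A partition is `d`-regular if no `d` of its nonzero parts are equal. -/
def Regular (d : ℕ) (l : NPartition) : Prop :=
  ¬ ∃ i, l.parts i ≠ 0 ∧ l.parts (i + (d - 1)) = l.parts i

/-- The Young diagram of a partition, as a set of (row, column) cells, 0-indexed. -/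
def cells (l : NPartition) : Set (ℕ × ℕ) := {x | x.2 < l.parts x.1}

/-- `c 0, c 1, …, c (e-1)` are the successive cells of a ribbon: each next cell is
directly below, or directly to the left of, the previous cell. -/
def RibbonSteps (e : ℕ) (c : ℕ → ℕ × ℕ) : Prop :=
  ∀ i, i + 1 < e →
    (c (i + 1) = ((c i).1 + 1, (c i).2)) ∨
    ((c i).2 = (c (i + 1)).2 + 1 ∧ (c (i + 1)).1 = (c i).1)

/-- `R` is an `e`-ribbon with cell enumeration `c` (head `c 0`). -/
def IsRibbonC (e : ℕ) (c : ℕ → ℕ × ℕ) (R : Set (ℕ × ℕ)) : Prop :=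
  R = c '' (Set.Iio e) ∧ Set.InjOn c (Set.Iio e) ∧ RibbonSteps e c

/-- The spin of an `e`-ribbon: the number of vertical steps. -/
def spinOf (e : ℕ) (c : ℕ → ℕ × ℕ) : ℕ :=
  ((Finset.range (e - 1)).filter fun i => (c (i + 1)).1 = (c i).1 + 1).card

/-- The head of the ribbon lies in row 1 or directly below a cell of `l`. -/
def HeadOK (l : NPartition) (c : ℕ → ℕ × ℕ) : Prop :=
  (c 0).1 = 0 ∨ ((c 0).1 - 1, (c 0).2) ∈ cells l

/-- `l` is obtained from `n` by removing a single rim hook (ribbon) of length `e`. -/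
def RemoveRibbon (e : ℕ) (n l : NPartition) : Prop :=
  cells l ⊆ cells n ∧ ∃ c, IsRibbonC e c (cells n \ cells l)

/-- `κ` is the `e`-core of `l`: obtained by repeatedly removing `e`-rim-hooks,
and no further `e`-rim-hook can be removed. -/
def IsECoreOf (e : ℕ) (κ l : NPartition) : Prop :=
  Relation.ReflTransGen (RemoveRibbon e) l κ ∧ ¬ ∃ m, RemoveRibbon e κ m

/-- `l` has `e`-weight `w`: `|l| = |e-core of l| + w * e`. -/
def EWeight (e : ℕ) (l : NPartition) (w : ℕ) : Prop :=
  ∃ κ, IsECoreOf e κ l ∧ l.size = κ.size + w * e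

/-- `λ →_{m:e} ν` with total spin `s`: `[ν] \ [λ]` is a disjoint union of `m`
`e`-ribbons, each of whose heads lies in row 1 or directly below a cell of `λ`,
the sum of whose spins is `s`. -/
def HAddSpin (e m s : ℕ) (l n : NPartition) : Prop :=
  cells l ⊆ cells n ∧
  ∃ (R : Fin m → Set (ℕ × ℕ)) (c : Fin m → ℕ → ℕ × ℕ),
    ((cells n \ cells l) = ⋃ i, R i) ∧
    (Pairwise fun i j => Disjoint (R i) (R j)) ∧
    (∀ i, IsRibbonC e (c i) (R i) ∧ HeadOK l (c i)) ∧
    s = ∑ i, spinOf e (c i)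

/-- `λ →_{m:e} ν`. -/
def HAdd (e m : ℕ) (l n : NPartition) : Prop := ∃ s, HAddSpin e m s l n

/-- `x` is an addable node of `l`. -/
def Addable (l : NPartition) (x : ℕ × ℕ) : Prop :=
  x ∉ cells l ∧ ∃ n : NPartition, cells n = insert x (cells l)

/-- `x` is a removable node of `l`. -/
def Removable (l : NPartition) (x : ℕ × ℕ) : Prop :=
  x ∈ cells l ∧ ∃ n : NPartition, cells n = cells l \ {x}

/-- The `e`-residue of a node `(c,d)`: `d - c mod e`. -/
def res (e : ℕ) (x : ℕ × ℕ) : ZMod e := (x.2 : ZMod e) - (x.1 : ZMod e)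

/-- `N_i(λ,ν) = #{addable i-nodes of λ above x} - #{removable i-nodes of λ above x}`,
where `i = res e x` and `y` is above `x` iff `y.1 < x.1`. -/
noncomputable def Nnum (e : ℕ) (l : NPartition) (x : ℕ × ℕ) : ℤ :=
  ({y | Addable l y ∧ res e y = res e x ∧ y.1 < x.1}.ncard : ℤ) -
  ({y | Removable l y ∧ res e y = res e x ∧ y.1 < x.1}.ncard : ℤ)

end NPartition
namespace NPartition

lemma parts_eq_zero_of_length_le (l : NPartition) {i : ℕ} (h : l.length ≤ i) : l.parts i = 0 := by
  have hne : {N | ∀ j, N ≤ j → l.parts j = 0}.Nonempty := l.eventually_zero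
  exact Nat.sInf_mem hne i h

lemma lt_length_of_parts_ne_zero (l : NPartition) {i : ℕ} (h : l.parts i ≠ 0) : i < l.length := by
  by_contra hc
  exact h (l.parts_eq_zero_of_length_le (by omega))

/-- Beta number of row `i`. -/
def bet (n : NPartition) (k i : ℕ) : ℕ := n.parts i + (k - 1 - i)

lemma bet_strict_anti (n : NPartition) {k i j : ℕ} (hij : i < j) (hj : j < k) :
    n.bet k j < n.bet k i := by
  have h1 : n.parts j ≤ n.parts i := n.antitone hij.le
  unfold bet; omega

lemma bet_inj (n : NPartition) {k i j : ℕ} (hi : i < k) (hj : j < k)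
    (h : n.bet k i = n.bet k j) : i = j := by
  rcases lt_trichotomy i j with hc | hc | hc
  · exact absurd h (by have := n.bet_strict_anti hc hj; omega)
  · exact hc
  · exact absurd h (by have := n.bet_strict_anti hc hi; omega)

lemma mem_betaSet_iff {n : NPartition} {k q : ℕ} :
    q ∈ n.betaSet k ↔ ∃ i, i < k ∧ n.bet k i = q := by
  simp [betaSet, bet]

lemma card_betaSet (n : NPartition) (k : ℕ) : (n.betaSet k).card = k := by
  rw [betaSet, Finset.card_image_of_injOn, Finset.card_range]
  intro i hi j hj hij
  simp only [Finset.coe_range, Set.mem_Iio] at hi hj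
  exact n.bet_inj hi hj hij

lemma mem_diff_cells {n l : NPartition} {t x : ℕ} :
    ((t, x) ∈ cells n \ cells l) ↔ l.parts t ≤ x ∧ x < n.parts t := by
  simp only [cells, Set.mem_diff, Set.mem_setOf_eq, not_lt]
  tauto

/-- Structure of a rim hook occupying rows `r..s`. -/
structure RS (e r s : ℕ) (n l : NPartition) : Prop where
  hrs : r ≤ s
  eq_lt : ∀ i, i < r → l.parts i = n.parts i
  eq_gt : ∀ i, s < i → l.parts i = n.parts i
  step : ∀ i, r ≤ i → i < s → l.parts i + 1 = n.parts (i + 1)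
  lt : ∀ i, r ≤ i → i ≤ s → l.parts i < n.parts i
  size : ∑ i ∈ Finset.Icc r s, (n.parts i - l.parts i) = e

lemma RS.sub {e r s : ℕ} {n l : NPartition} (h : RS e r s n l) : cells l ⊆ cells n := by
  rintro ⟨t, x⟩ hx
  simp only [cells, Set.mem_setOf_eq] at hx ⊢
  rcases lt_or_ge t r with hc | hc
  · rw [← h.eq_lt t hc]; exact hx
  rcases le_or_gt t s with hc2 | hc2
  · exact hx.trans (h.lt t hc hc2)
  · rw [← h.eq_gt t hc2]; exact hx

lemma telescope {n l : NPartition} {r s k : ℕ} (hsk : s < k)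
    (hstep : ∀ i, r ≤ i → i < s → l.parts i + 1 = n.parts (i + 1))
    (hlt : ∀ i, r ≤ i → i ≤ s → l.parts i < n.parts i) :
    ∀ t, r ≤ t → t ≤ s →
      (∑ i ∈ Finset.Icc r t, (n.parts i - l.parts i)) + (l.parts t + (k - 1 - t)) =
        n.parts r + (k - 1 - r) := by
  intro t hrt
  induction t, hrt using Nat.le_induction with
  | base =>
    intro hrs
    rw [Finset.Icc_self, Finset.sum_singleton]
    have := hlt r le_rfl hrs
    omega
  | succ t hrt ih =>
    intro hts
    have h1 : t ≤ s := by omega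
    have h2 := ih (by omega)
    rw [Finset.sum_Icc_succ_top (by omega : r ≤ t + 1)]
    have h3 := hstep t hrt (by omega)
    have h4 := hlt (t + 1) (by omega) hts
    have h5 := hlt t hrt (by omega)
    omega
lemma rs_beta {e r s k : ℕ} {n l : NPartition} (h : RS e r s n l)
    (hn : n.length ≤ k) (hl : l.length ≤ k) :
    n.bet k r ∈ n.betaSet k ∧ e ≤ n.bet k r ∧ (n.bet k r - e) ∉ n.betaSet k ∧
    l.betaSet k = insert (n.bet k r - e) ((n.betaSet k).erase (n.bet k r)) := by
  have hrs0 : r ≤ s := h.hrs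
  have hsk : s < k := by
    have h1 := h.lt s h.hrs le_rfl
    exact lt_of_lt_of_le (n.lt_length_of_parts_ne_zero (by omega)) hn
  have hrk : r < k := lt_of_le_of_lt h.hrs hsk
  have htel := telescope hsk h.step h.lt s h.hrs le_rfl
  rw [h.size] at htel
  -- htel : e + (l.parts s + (k - 1 - s)) = n.parts r + (k - 1 - r)
  have hep : e ≤ n.bet k r := by unfold bet; omega
  have hpes : n.bet k r - e = l.bet k s := by unfold bet; omega
  have hpmem : n.bet k r ∈ n.betaSet k := mem_betaSet_iff.2 ⟨r, hrk, rfl⟩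
  have hpe : (n.bet k r - e) ∉ n.betaSet k := by
    rw [hpes]
    intro hc
    obtain ⟨j, hjk, hj⟩ := mem_betaSet_iff.1 hc
    rcases le_or_gt j s with hc2 | hc2
    · have h1 : n.bet k s ≤ n.bet k j := by
        rcases eq_or_lt_of_le hc2 with hc3 | hc3
        · rw [hc3]
        · exact (n.bet_strict_anti hc3 hsk).le
      have h2 := h.lt s h.hrs le_rfl
      have h3 : l.bet k s < n.bet k s := by unfold bet; omega
      omega
    · have h1 : n.bet k j = l.bet k j := by
        unfold bet; rw [h.eq_gt j hc2]
      have h2 := l.bet_strict_anti hc2 hjk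
      omega
  refine ⟨hpmem, hep, hpe, ?_⟩
  have hcardR : (insert (n.bet k r - e) ((n.betaSet k).erase (n.bet k r))).card = k := by
    rw [Finset.card_insert_of_notMem (fun hc => hpe (Finset.mem_of_mem_erase hc)),
      Finset.card_erase_of_mem hpmem, card_betaSet]
    omega
  refine Finset.eq_of_subset_of_card_le ?_ (by rw [hcardR, card_betaSet])
  intro q hq
  obtain ⟨i, hik, hi⟩ := mem_betaSet_iff.1 hq
  rcases lt_or_ge i r with hc | hc
  · refine Finset.mem_insert_of_mem (Finset.mem_erase.2 ⟨?_, ?_⟩)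
    · rw [← hi]
      intro hc2
      have h1 : l.bet k i = n.bet k i := by unfold bet; rw [h.eq_lt i hc]
      exact absurd (n.bet_inj hik hrk (h1 ▸ hc2)) (by omega)
    · rw [← hi]
      have h1 : l.bet k i = n.bet k i := by unfold bet; rw [h.eq_lt i hc]
      exact h1 ▸ mem_betaSet_iff.2 ⟨i, hik, rfl⟩
  rcases lt_or_ge i s with hc2 | hc2
  · have h1 : l.bet k i = n.bet k (i + 1) := by
      have h2 := h.step i hc hc2
      unfold bet; omega
    refine Finset.mem_insert_of_mem (Finset.mem_erase.2 ⟨?_, ?_⟩)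
    · rw [← hi, h1]
      intro hc3
      have := n.bet_inj (by omega) hrk hc3
      omega
    · rw [← hi, h1]
      exact mem_betaSet_iff.2 ⟨i + 1, by omega, rfl⟩
  rcases eq_or_lt_of_le hc2 with hc3 | hc3
  · have : q = n.bet k r - e := by rw [← hi, ← hc3, ← hpes]
    rw [this]; exact Finset.mem_insert_self _ _
  · refine Finset.mem_insert_of_mem (Finset.mem_erase.2 ⟨?_, ?_⟩)
    · rw [← hi]
      intro hc4
      have h1 : l.bet k i = n.bet k i := by unfold bet; rw [h.eq_gt i hc3]
      have h2 := n.bet_inj hik hrk (h1 ▸ hc4)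
      omega
    · rw [← hi]
      have h1 : l.bet k i = n.bet k i := by unfold bet; rw [h.eq_gt i hc3]
      exact h1 ▸ mem_betaSet_iff.2 ⟨i, hik, rfl⟩
lemma consec_strict_anti {f : ℕ → ℕ} {k : ℕ} (h : ∀ i, i + 1 < k → f (i + 1) < f i) :
    ∀ i j, i < j → j < k → f j < f i := by
  intro i j hij hjk
  induction j with
  | zero => omega
  | succ j ih =>
    rcases Nat.lt_or_ge i j with hc | hc
    · exact lt_trans (h j hjk) (ih hc (by omega))
    · have : i = j := by omega
      rw [this]; exact h j hjk

lemma strictanti_image_eq : ∀ (k : ℕ) (f g : ℕ → ℕ),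
    (∀ i j, i < j → j < k → f j < f i) → (∀ i j, i < j → j < k → g j < g i) →
    (Finset.range k).image f = (Finset.range k).image g → ∀ i, i < k → f i = g i := by
  intro k
  induction k with
  | zero => intro f g _ _ _ i hi; omega
  | succ k ih =>
    intro f g hf hg himg i hik
    have hmax : ∀ (u v : ℕ → ℕ), (∀ i j, i < j → j < k + 1 → u j < u i) →
        (Finset.range (k+1)).image u = (Finset.range (k+1)).image v → v 0 ≤ u 0 := by
      intro u v hu himg'
      have h1 : v 0 ∈ (Finset.range (k+1)).image u := by
        rw [himg']; exact Finset.mem_image_of_mem v (Finset.mem_range.2 (Nat.succ_pos k))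
      obtain ⟨j, hj, hj2⟩ := Finset.mem_image.1 h1
      rcases Nat.eq_zero_or_pos j with hc | hc
      · rw [hc] at hj2; omega
      · have := hu 0 j hc (Finset.mem_range.1 hj); omega
    have h0 : f 0 = g 0 :=
      le_antisymm (hmax g f hg himg.symm) (hmax f g hf himg)
    have hsh : ∀ (u : ℕ → ℕ), (∀ i j, i < j → j < k + 1 → u j < u i) →
        (Finset.range k).image (fun i => u (i + 1)) =
          ((Finset.range (k+1)).image u).erase (u 0) := by
      intro u hu
      ext q
      simp only [Finset.mem_image, Finset.mem_erase, Finset.mem_range]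
      constructor
      · rintro ⟨i, hi, rfl⟩
        exact ⟨by have := hu 0 (i+1) (by omega) (by omega); omega,
          ⟨i + 1, by omega, rfl⟩⟩
      · rintro ⟨hne, i, hi, rfl⟩
        rcases Nat.eq_zero_or_pos i with hc | hc
        · rw [hc] at hne; omega
        · exact ⟨i - 1, by omega, by rw [Nat.sub_add_cancel hc]⟩
    have himg2 : (Finset.range k).image (fun i => f (i + 1)) =
        (Finset.range k).image (fun i => g (i + 1)) := by
      rw [hsh f hf, hsh g hg, himg, h0]
    rcases Nat.eq_zero_or_pos i with hc | hc
    · rw [hc]; exact h0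
    · have := ih (fun i => f (i + 1)) (fun i => g (i + 1))
        (fun a b hab hbk => hf (a+1) (b+1) (by omega) (by omega))
        (fun a b hab hbk => hg (a+1) (b+1) (by omega) (by omega))
        himg2 (i - 1) (by omega)
      simpa [Nat.sub_add_cancel hc] using this
lemma beta_rs {e k p : ℕ} {n l : NPartition} (he : 1 ≤ e)
    (hn : n.length ≤ k) (hl : l.length ≤ k)
    (hp : p ∈ n.betaSet k) (hep : e ≤ p) (hpe : p - e ∉ n.betaSet k)
    (heq : l.betaSet k = insert (p - e) ((n.betaSet k).erase p)) :
    ∃ r s, RS e r s n l ∧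
      ((n.betaSet k).filter fun q => p - e < q ∧ q < p).card = s - r := by
  obtain ⟨r, hrk, hbr⟩ := mem_betaSet_iff.1 hp
  set F := (Finset.range k).filter (fun j => p - e < n.bet k j) with hF
  have hrF : r ∈ F := by
    rw [hF, Finset.mem_filter, Finset.mem_range]
    exact ⟨hrk, by omega⟩
  have hFne : F.Nonempty := ⟨r, hrF⟩
  set s := F.max' hFne with hsdef
  have hsF : s ∈ F := F.max'_mem hFne
  have hsk : s < k := by
    have := (Finset.mem_filter.1 hsF).1; rwa [Finset.mem_range] at this
  have hs1 : p - e < n.bet k s := (Finset.mem_filter.1 hsF).2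
  have hsmax : ∀ j ∈ F, j ≤ s := fun j hj => F.le_max' j hj
  have hrles : r ≤ s := hsmax r hrF
  have habove : ∀ j, j ≤ s → p - e < n.bet k j := by
    intro j hj
    rcases eq_or_lt_of_le hj with hc | hc
    · rw [hc]; exact hs1
    · exact lt_trans hs1 (n.bet_strict_anti hc hsk)
  have hbelow : ∀ j, s < j → j < k → n.bet k j < p - e := by
    intro j hj hjk
    have h1 : ¬ (p - e < n.bet k j) := by
      intro hc
      have : j ∈ F := by rw [hF, Finset.mem_filter, Finset.mem_range]; exact ⟨hjk, hc⟩
      exact absurd (hsmax j this) (by omega)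
    have h2 : n.bet k j ≠ p - e := by
      intro hc
      exact hpe (hc ▸ mem_betaSet_iff.2 ⟨j, hjk, rfl⟩)
    omega
  have hnu1 : 1 ≤ n.parts s := by
    by_contra h0
    have hps0 : n.parts s = 0 := by omega
    have hbs : n.bet k s = k - 1 - s := by unfold bet; omega
    have hlt : p - e < k - 1 - s := by omega
    set j := k - 1 - (p - e) with hj
    have hsj : s < j := by omega
    have hjk : j < k := by omega
    have hpj : n.parts j = 0 := by
      have := n.antitone hsj.le; omega
    have : n.bet k j = p - e := by unfold bet; omega
    exact hpe (this ▸ mem_betaSet_iff.2 ⟨j, hjk, rfl⟩)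
  have hpeks : k - 1 - s ≤ p - e := by
    rcases Nat.lt_or_ge (s + 1) k with hc | hc
    · have h1 := hbelow (s + 1) (by omega) hc
      unfold bet at h1; omega
    · omega
  -- the target beta sequence
  set g : ℕ → ℕ := fun i =>
    if i < r then n.bet k i else if i < s then n.bet k (i + 1)
    else if i = s then p - e else n.bet k i with hgdef
  have hg1 : ∀ i, i < r → g i = n.bet k i := by
    intro i hi; simp only [hgdef, if_pos hi]
  have hg2 : ∀ i, r ≤ i → i < s → g i = n.bet k (i + 1) := by
    intro i h1 h2
    simp only [hgdef, if_neg (by omega : ¬ i < r), if_pos h2]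
  have hg3 : ∀ i, i = s → g i = p - e := by
    intro i h1
    simp only [hgdef, if_neg (by omega : ¬ i < r), if_neg (by omega : ¬ i < s), if_pos h1]
  have hg4 : ∀ i, s < i → g i = n.bet k i := by
    intro i h1
    simp only [hgdef, if_neg (by omega : ¬ i < r), if_neg (by omega : ¬ i < s),
      if_neg (by omega : ¬ i = s)]
  have hganti : ∀ i j, i < j → j < k → g j < g i := by
    refine consec_strict_anti ?_
    intro i hik
    rcases Nat.lt_or_ge (i + 1) r with h1 | h1
    · rw [hg1 i (by omega), hg1 (i + 1) h1]
      exact n.bet_strict_anti (by omega) hik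
    rcases eq_or_lt_of_le h1 with h2 | h2
    · rw [hg1 i (by omega)]
      rcases eq_or_lt_of_le hrles with h3 | h3
      · rw [hg3 (i + 1) (by omega)]
        have := n.bet_strict_anti (by omega : i < r) hrk
        omega
      · rw [hg2 (i + 1) (by omega) (by omega)]
        exact n.bet_strict_anti (by omega) (by omega)
    rcases Nat.lt_or_ge (i + 1) s with h3 | h3
    · rw [hg2 i (by omega) (by omega), hg2 (i + 1) (by omega) h3]
      exact n.bet_strict_anti (by omega) (by omega)
    rcases eq_or_lt_of_le h3 with h4 | h4
    · rw [hg2 i (by omega) (by omega), hg3 (i + 1) (by omega)]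
      have := habove (i + 1) (by omega)
      omega
    rcases Nat.lt_or_ge s i with h5 | h5
    · rw [hg4 i h5, hg4 (i + 1) (by omega)]
      exact n.bet_strict_anti (by omega) hik
    · have h6 : i = s := by omega
      rw [hg3 i h6, hg4 (i + 1) (by omega)]
      exact hbelow (i + 1) (by omega) hik
  have hginj : Set.InjOn g ↑(Finset.range k) := by
    intro a ha b hb hab
    simp only [Finset.coe_range, Set.mem_Iio] at ha hb
    rcases lt_trichotomy a b with hc | hc | hc
    · exact absurd hab (by have := hganti a b hc hb; omega)
    · exact hc
    · exact absurd hab (by have := hganti b a hc ha; omega)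
  have himgg : (Finset.range k).image g = insert (p - e) ((n.betaSet k).erase p) := by
    refine Finset.eq_of_subset_of_card_le ?_ ?_
    · intro q hq
      obtain ⟨i, hi, hiq⟩ := Finset.mem_image.1 hq
      rw [Finset.mem_range] at hi
      rcases Nat.lt_or_ge i r with h1 | h1
      · rw [hg1 i h1] at hiq
        refine Finset.mem_insert_of_mem (Finset.mem_erase.2 ⟨?_, ?_⟩)
        · rw [← hiq, ← hbr]
          intro hc
          exact absurd (n.bet_inj hi hrk hc) (by omega)
        · rw [← hiq]; exact mem_betaSet_iff.2 ⟨i, hi, rfl⟩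
      rcases Nat.lt_or_ge i s with h2 | h2
      · rw [hg2 i h1 h2] at hiq
        refine Finset.mem_insert_of_mem (Finset.mem_erase.2 ⟨?_, ?_⟩)
        · rw [← hiq, ← hbr]
          intro hc
          exact absurd (n.bet_inj (by omega) hrk hc) (by omega)
        · rw [← hiq]; exact mem_betaSet_iff.2 ⟨i + 1, by omega, rfl⟩
      rcases eq_or_lt_of_le h2 with h3 | h3
      · rw [hg3 i h3.symm] at hiq
        rw [← hiq]; exact Finset.mem_insert_self _ _
      · rw [hg4 i h3] at hiq
        refine Finset.mem_insert_of_mem (Finset.mem_erase.2 ⟨?_, ?_⟩)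
        · rw [← hiq, ← hbr]
          intro hc
          exact absurd (n.bet_inj hi hrk hc) (by omega)
        · rw [← hiq]; exact mem_betaSet_iff.2 ⟨i, hi, rfl⟩
    · rw [Finset.card_insert_of_notMem (fun hc => hpe (Finset.mem_of_mem_erase hc)),
        Finset.card_erase_of_mem hp, card_betaSet,
        Finset.card_image_of_injOn hginj, Finset.card_range]
      omega
  have hfg : ∀ i, i < k → l.bet k i = g i := by
    refine strictanti_image_eq k (fun i => l.bet k i) g
      (fun i j hij hjk => l.bet_strict_anti hij hjk) hganti ?_
    have hb : (Finset.range k).image (fun i => l.bet k i) = l.betaSet k := rfl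
    rw [hb, heq, himgg]
  -- derive the partition relations
  have hplt : ∀ i, i < r → l.parts i = n.parts i := by
    intro i hi
    have h1 := hfg i (by omega)
    rw [hg1 i hi] at h1
    unfold bet at h1; omega
  have hpstep : ∀ i, r ≤ i → i < s → l.parts i + 1 = n.parts (i + 1) := by
    intro i h1 h2
    have h3 := hfg i (by omega)
    rw [hg2 i h1 h2] at h3
    have h4 : 1 ≤ n.parts (i + 1) := le_trans hnu1 (n.antitone (by omega))
    unfold bet at h3; omega
  have hps : l.parts s + (k - 1 - s) = p - e := by
    have h1 := hfg s hsk
    rw [hg3 s rfl] at h1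
    unfold bet at h1; omega
  have hpgt : ∀ i, s < i → l.parts i = n.parts i := by
    intro i h1
    rcases Nat.lt_or_ge i k with h2 | h2
    · have h3 := hfg i h2
      rw [hg4 i h1] at h3
      unfold bet at h3; omega
    · rw [l.parts_eq_zero_of_length_le (by omega), n.parts_eq_zero_of_length_le (by omega)]
  have hlts : ∀ i, r ≤ i → i ≤ s → l.parts i < n.parts i := by
    intro i h1 h2
    rcases eq_or_lt_of_le h2 with h3 | h3
    · rw [h3]
      have h4 : n.bet k s = n.parts s + (k - 1 - s) := rfl
      omega
    · have h4 := hpstep i h1 h3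
      have h5 := n.antitone (le_of_lt (Nat.lt_succ_self i) : i ≤ i + 1)
      omega
  have hsize : ∑ i ∈ Finset.Icc r s, (n.parts i - l.parts i) = e := by
    have h1 := telescope hsk hpstep hlts s hrles le_rfl
    unfold bet at hbr
    omega
  refine ⟨r, s, ⟨hrles, hplt, hpgt, hpstep, hlts, hsize⟩, ?_⟩
  have hfs : (n.betaSet k).filter (fun q => p - e < q ∧ q < p) =
      (Finset.Ioc r s).image (n.bet k) := by
    ext q
    simp only [Finset.mem_filter, Finset.mem_image, Finset.mem_Ioc]
    constructor
    · rintro ⟨hq, h1, h2⟩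
      obtain ⟨j, hjk, hj⟩ := mem_betaSet_iff.1 hq
      refine ⟨j, ⟨?_, ?_⟩, hj⟩
      · by_contra hc
        rcases eq_or_lt_of_le (Nat.le_of_not_lt hc) with hc2 | hc2
        · rw [← hc2] at hbr; omega
        · have := n.bet_strict_anti hc2 hrk; omega
      · by_contra hc
        have := hbelow j (by omega) hjk
        omega
    · rintro ⟨j, ⟨h1, h2⟩, rfl⟩
      refine ⟨mem_betaSet_iff.2 ⟨j, by omega, rfl⟩, habove j h2, ?_⟩
      have := n.bet_strict_anti h1 (by omega : j < k)
      omega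
  rw [hfs, Finset.card_image_of_injOn, Nat.card_Ioc]
  intro a ha b hb hab
  simp only [Finset.coe_Ioc, Set.mem_Ioc] at ha hb
  exact n.bet_inj (by omega) (by omega) hab
/-- Position count: number of ribbon cells strictly before cell `(t,x)` in path order. -/
def psiF (n l : NPartition) (r t x : ℕ) : ℕ :=
  (∑ i ∈ Finset.Ico r t, (n.parts i - l.parts i)) + (n.parts t - 1 - x)

/-- The canonical path through the skew shape. -/
def rpath (n l : NPartition) (r : ℕ) : ℕ → ℕ × ℕ
  | 0 => (r, n.parts r - 1)
  | j + 1 =>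
      if (rpath n l r j).2 = l.parts (rpath n l r j).1 then
        ((rpath n l r j).1 + 1, n.parts ((rpath n l r j).1 + 1) - 1)
      else ((rpath n l r j).1, (rpath n l r j).2 - 1)

section RSpath

variable {e r s : ℕ} {n l : NPartition}

lemma rs_sum_Ico_le (h : RS e r s n l) {t : ℕ} (ht : t ≤ s) :
    (∑ i ∈ Finset.Ico r (t + 1), (n.parts i - l.parts i)) ≤ e := by
  rw [← h.size, ← Finset.Ico_add_one_right_eq_Icc]
  exact Finset.sum_le_sum_of_subset (Finset.Ico_subset_Ico le_rfl (by omega))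

lemma rs_psi_lt (h : RS e r s n l) {t x : ℕ} (h1 : r ≤ t) (h2 : t ≤ s)
    (h3 : l.parts t ≤ x) (h4 : x < n.parts t) : psiF n l r t x < e := by
  have h5 := rs_sum_Ico_le h h2
  rw [Finset.sum_Ico_succ_top h1] at h5
  unfold psiF; omega

lemma rs_psi_inj (h : RS e r s n l) {t x t' x' : ℕ}
    (h1 : r ≤ t) (h2 : t ≤ s) (h3 : l.parts t ≤ x) (h4 : x < n.parts t)
    (h1' : r ≤ t') (h2' : t' ≤ s) (h3' : l.parts t' ≤ x') (h4' : x' < n.parts t')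
    (heq : psiF n l r t x = psiF n l r t' x') : t = t' ∧ x = x' := by
  have key : ∀ a b u v, a < b → r ≤ a → b ≤ s → l.parts a ≤ u → u < n.parts a →
      v < n.parts b → psiF n l r a u < psiF n l r b v := by
    intro a b u v hab hra hbs hu hu2 hv
    have hs1 : (∑ i ∈ Finset.Ico r (a + 1), (n.parts i - l.parts i)) ≤
        ∑ i ∈ Finset.Ico r b, (n.parts i - l.parts i) :=
      Finset.sum_le_sum_of_subset (Finset.Ico_subset_Ico le_rfl (by omega))
    rw [Finset.sum_Ico_succ_top hra] at hs1
    unfold psiF; omega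
  rcases lt_trichotomy t t' with hc | hc | hc
  · exact absurd heq (by have := key t t' x x' hc h1 h2' h3 h4 h4'; omega)
  · refine ⟨hc, ?_⟩
    rw [hc] at heq h4
    unfold psiF at heq
    omega
  · exact absurd heq (by have := key t' t x' x hc h1' h2 h3' h4' h4; omega)

lemma rs_last (h : RS e r s n l) {t x j : ℕ} (hj : j + 1 < e)
    (i1 : r ≤ t) (i2 : t ≤ s) (hcase : x = l.parts t)
    (i5 : psiF n l r t x = j) : t < s := by
  rcases eq_or_lt_of_le i2 with hc | hc
  · exfalso
    have h2 := h.lt s h.hrs le_rfl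
    have h3 : (∑ i ∈ Finset.Ico r s, (n.parts i - l.parts i)) + (n.parts s - l.parts s) = e := by
      rw [← Finset.sum_Ico_succ_top h.hrs, Finset.Ico_add_one_right_eq_Icc, h.size]
    unfold psiF at i5
    rw [hcase, hc] at i5
    omega
  · exact hc

lemma rpath_inv (h : RS e r s n l) : ∀ j, j < e →
    r ≤ (rpath n l r j).1 ∧ (rpath n l r j).1 ≤ s ∧
    l.parts (rpath n l r j).1 ≤ (rpath n l r j).2 ∧
    (rpath n l r j).2 < n.parts (rpath n l r j).1 ∧
    psiF n l r (rpath n l r j).1 (rpath n l r j).2 = j := by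
  intro j
  induction j with
  | zero =>
    intro _
    have h1 := h.lt r le_rfl h.hrs
    simp only [rpath]
    refine ⟨le_rfl, h.hrs, by omega, by omega, ?_⟩
    unfold psiF
    rw [Finset.Ico_self, Finset.sum_empty]
    omega
  | succ j ih =>
    intro hj
    obtain ⟨i1, i2, i3, i4, i5⟩ := ih (by omega)
    set t := (rpath n l r j).1 with hts
    set x := (rpath n l r j).2 with hxs
    rcases eq_or_ne x (l.parts t) with hcase | hcase
    · have hts2 : t < s := rs_last h hj i1 i2 hcase i5
      have hred1 : (rpath n l r (j + 1)).1 = t + 1 := by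
        simp only [rpath, ← hts, ← hxs, if_pos hcase]
      have hred2 : (rpath n l r (j + 1)).2 = n.parts (t + 1) - 1 := by
        simp only [rpath, ← hts, ← hxs, if_pos hcase]
      rw [hred1, hred2]
      have h1 := h.lt (t + 1) (by omega) hts2
      refine ⟨by omega, hts2, by omega, by omega, ?_⟩
      unfold psiF
      rw [Finset.sum_Ico_succ_top (by omega : r ≤ t)]
      unfold psiF at i5
      have h2 := h.lt t i1 i2
      omega
    · have hred1 : (rpath n l r (j + 1)).1 = t := by
        simp only [rpath, ← hts, ← hxs, if_neg hcase]
      have hred2 : (rpath n l r (j + 1)).2 = x - 1 := by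
        simp only [rpath, ← hts, ← hxs, if_neg hcase]
      rw [hred1, hred2]
      refine ⟨i1, i2, by omega, by omega, ?_⟩
      unfold psiF at i5 ⊢
      omega

lemma rs_ribbon (h : RS e r s n l) : ∃ c, IsRibbonC e c (cells n \ cells l) := by
  refine ⟨rpath n l r, ?_, ?_, ?_⟩
  · ext d
    obtain ⟨t, x⟩ := d
    simp only [Set.mem_image, Set.mem_Iio]
    constructor
    · intro hd
      have hd2 := mem_diff_cells.1 hd
      have htr : r ≤ t ∧ t ≤ s := by
        by_contra hc
        rcases Nat.lt_or_ge t r with h1 | h1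
        · rw [h.eq_lt t h1] at hd2; omega
        · have h2 : s < t := by omega
          rw [h.eq_gt t h2] at hd2; omega
      set m := psiF n l r t x with hm
      have hme : m < e := rs_psi_lt h htr.1 htr.2 hd2.1 hd2.2
      obtain ⟨i1, i2, i3, i4, i5⟩ := rpath_inv h m hme
      have h6 := rs_psi_inj h i1 i2 i3 i4 htr.1 htr.2 hd2.1 hd2.2 (by rw [i5])
      exact ⟨m, hme, Prod.ext h6.1 h6.2⟩
    · rintro ⟨j, hj, hjeq⟩
      obtain ⟨i1, i2, i3, i4, _⟩ := rpath_inv h j hj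
      rw [← hjeq]
      exact mem_diff_cells.2 ⟨i3, i4⟩
  · intro a ha b hb hab
    simp only [Set.mem_Iio] at ha hb
    obtain ⟨_, _, _, _, a5⟩ := rpath_inv h a ha
    obtain ⟨_, _, _, _, b5⟩ := rpath_inv h b hb
    rw [← a5, ← b5, hab]
  · intro j hj
    obtain ⟨i1, i2, i3, i4, i5⟩ := rpath_inv h j (by omega)
    set t := (rpath n l r j).1 with hts
    set x := (rpath n l r j).2 with hxs
    rcases eq_or_ne x (l.parts t) with hcase | hcase
    · left
      have hts2 : t < s := rs_last h hj i1 i2 hcase i5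
      have hred1 : (rpath n l r (j + 1)).1 = t + 1 := by
        simp only [rpath, ← hts, ← hxs, if_pos hcase]
      have hred2 : (rpath n l r (j + 1)).2 = n.parts (t + 1) - 1 := by
        simp only [rpath, ← hts, ← hxs, if_pos hcase]
      have h1 := h.step t i1 hts2
      have h2 : n.parts (t + 1) - 1 = x := by omega
      refine Prod.ext ?_ ?_
      · rw [hred1]
      · rw [hred2, h2]
    · right
      have hred1 : (rpath n l r (j + 1)).1 = t := by
        simp only [rpath, ← hts, ← hxs, if_neg hcase]
      have hred2 : (rpath n l r (j + 1)).2 = x - 1 := by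
        simp only [rpath, ← hts, ← hxs, if_neg hcase]
      rw [hred1, hred2]
      exact ⟨by omega, rfl⟩

end RSpath
lemma mem_diff_cells' {n l : NPartition} {d : ℕ × ℕ} :
    (d ∈ cells n \ cells l) ↔ l.parts d.1 ≤ d.2 ∧ d.2 < n.parts d.1 := by
  obtain ⟨t, x⟩ := d
  exact mem_diff_cells

lemma ribbon_rs {e : ℕ} {n l : NPartition} {c : ℕ → ℕ × ℕ} (he : 1 ≤ e)
    (hsub : cells l ⊆ cells n) (hR : IsRibbonC e c (cells n \ cells l)) :
    RS e (c 0).1 (c (e - 1)).1 n l := by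
  obtain ⟨hD, hinj, hstep⟩ := hR
  have hcmem : ∀ j, j < e → l.parts (c j).1 ≤ (c j).2 ∧ (c j).2 < n.parts (c j).1 := by
    intro j hj
    have h1 : c j ∈ cells n \ cells l := by rw [hD]; exact ⟨j, hj, rfl⟩
    exact mem_diff_cells'.1 h1
  have hstep' : ∀ j, j + 1 < e → ((c j).1 ≤ (c (j+1)).1 ∧ (c (j+1)).1 ≤ (c j).1 + 1 ∧
      (c (j+1)).2 ≤ (c j).2 ∧ (c j).2 ≤ (c (j+1)).2 + 1) := by
    intro j hj
    rcases hstep j hj with h1 | ⟨h1, h2⟩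
    · have e1 : (c (j+1)).1 = (c j).1 + 1 := by rw [h1]
      have e2 : (c (j+1)).2 = (c j).2 := by rw [h1]
      omega
    · omega
  have hmono : ∀ i j, i ≤ j → j < e → (c i).1 ≤ (c j).1 ∧ (c j).2 ≤ (c i).2 := by
    intro i j hij hj
    induction j with
    | zero =>
      have h0 : i = 0 := by omega
      rw [h0]; exact ⟨le_rfl, le_rfl⟩
    | succ j ih =>
      rcases Nat.lt_or_ge i (j+1) with hc | hc
      · have h1 := ih (by omega) (by omega)
        have h2 := hstep' j (by omega)
        exact ⟨by omega, by omega⟩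
      · have h0 : i = j + 1 := by omega
        rw [h0]; exact ⟨le_rfl, le_rfl⟩
  have hIV : ∀ j, j < e → ∀ t, (c 0).1 ≤ t → t ≤ (c j).1 → ∃ i, i ≤ j ∧ (c i).1 = t := by
    intro j
    induction j with
    | zero => intro _ t h1 h2; exact ⟨0, le_rfl, by omega⟩
    | succ j ih =>
      intro hj t h1 h2
      rcases le_or_gt t (c j).1 with hc | hc
      · obtain ⟨i, hi, hieq⟩ := ih (by omega) t h1 hc
        exact ⟨i, by omega, hieq⟩
      · have h3 := hstep' j hj
        exact ⟨j + 1, le_rfl, by omega⟩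
  have hrs0 : (c 0).1 ≤ (c (e-1)).1 := (hmono 0 (e-1) (by omega) (by omega)).1
  have hrows : ∀ t, l.parts t < n.parts t ↔ ((c 0).1 ≤ t ∧ t ≤ (c (e-1)).1) := by
    intro t
    constructor
    · intro h1
      have h2 : ((t, l.parts t) : ℕ × ℕ) ∈ cells n \ cells l :=
        mem_diff_cells.2 ⟨le_rfl, h1⟩
      rw [hD] at h2
      obtain ⟨j, hj, hj2⟩ := h2
      simp only [Set.mem_Iio] at hj
      have e1 : (c j).1 = t := by rw [hj2]
      constructor
      · have := (hmono 0 j (by omega) hj).1; omega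
      · have := (hmono j (e-1) (by omega) (by omega)).1; omega
    · rintro ⟨h1, h2⟩
      obtain ⟨i, hi, hieq⟩ := hIV (e-1) (by omega) t h1 h2
      have h3 := hcmem i (by omega)
      rw [hieq] at h3
      omega
  have hsubparts : ∀ t, l.parts t ≤ n.parts t := by
    intro t
    by_contra hc
    have h1 : ((t, n.parts t) : ℕ × ℕ) ∈ cells l := by
      simp only [cells, Set.mem_setOf_eq]; omega
    have h2 := hsub h1
    simp only [cells, Set.mem_setOf_eq] at h2
    omega
  have clause : ∀ t, (c 0).1 ≤ t → t < (c (e-1)).1 → l.parts t + 1 = n.parts (t+1) := by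
    intro t h1 h2
    have hFne : ((Finset.range e).filter (fun j => (c j).1 = t)).Nonempty := by
      obtain ⟨i, hi, hieq⟩ := hIV (e-1) (by omega) t h1 (by omega)
      exact ⟨i, by rw [Finset.mem_filter, Finset.mem_range]; exact ⟨by omega, hieq⟩⟩
    set j := ((Finset.range e).filter (fun j => (c j).1 = t)).max' hFne with hjdef
    have hjF := ((Finset.range e).filter (fun j => (c j).1 = t)).max'_mem hFne
    rw [Finset.mem_filter, Finset.mem_range] at hjF
    obtain ⟨hje, hjt⟩ := hjF
    rw [← hjdef] at hje hjt
    have hj1e : j + 1 < e := by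
      rcases Nat.lt_or_ge (j+1) e with hc | hc
      · exact hc
      · exfalso
        have h0 : j = e - 1 := by omega
        rw [h0] at hjt; omega
    have hnext : (c (j+1)).1 ≠ t := by
      intro hc
      have h3 : j + 1 ∈ (Finset.range e).filter (fun j => (c j).1 = t) := by
        rw [Finset.mem_filter, Finset.mem_range]; exact ⟨hj1e, hc⟩
      have := Finset.le_max' _ _ h3
      omega
    have hdown : (c (j+1)).1 = t + 1 ∧ (c (j+1)).2 = (c j).2 := by
      rcases hstep j hj1e with h1' | ⟨h1', h2'⟩
      · constructor
        · rw [h1', hjt]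
        · rw [h1']
      · exact absurd (h2'.trans hjt) hnext
    have hcj := hcmem j (by omega)
    have hcj1 := hcmem (j+1) (by omega)
    rw [hjt] at hcj
    rw [hdown.1] at hcj1
    have hcolmin : (c j).2 = l.parts t := by
      by_contra hc
      have h4 : ((t, (c j).2 - 1) : ℕ × ℕ) ∈ cells n \ cells l :=
        mem_diff_cells.2 ⟨by omega, by omega⟩
      rw [hD] at h4
      obtain ⟨i, hi, hieq⟩ := h4
      simp only [Set.mem_Iio] at hi
      have e1 : (c i).1 = t := by rw [hieq]
      have e2 : (c i).2 = (c j).2 - 1 := by rw [hieq]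
      rcases le_or_gt i j with hc2 | hc2
      · have := (hmono i j hc2 (by omega)).2; omega
      · have h5 := (hmono (j+1) i hc2 hi).1
        rw [hdown.1] at h5
        omega
    have hcolmax : (c (j+1)).2 = n.parts (t+1) - 1 := by
      by_contra hc
      have h4 : ((t+1, (c (j+1)).2 + 1) : ℕ × ℕ) ∈ cells n \ cells l :=
        mem_diff_cells.2 ⟨by omega, by omega⟩
      rw [hD] at h4
      obtain ⟨i, hi, hieq⟩ := h4
      simp only [Set.mem_Iio] at hi
      have e1 : (c i).1 = t + 1 := by rw [hieq]
      have e2 : (c i).2 = (c (j+1)).2 + 1 := by rw [hieq]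
      rcases le_or_gt i j with hc2 | hc2
      · have h5 := (hmono i j hc2 (by omega)).1
        rw [hjt] at h5; omega
      · have := (hmono (j+1) i hc2 hi).2; omega
    have := hdown.2
    omega
  have hhead : (c 0).2 = n.parts (c 0).1 - 1 := by
    have hc0 := hcmem 0 (by omega)
    by_contra hc
    have h4 : (((c 0).1, (c 0).2 + 1) : ℕ × ℕ) ∈ cells n \ cells l :=
      mem_diff_cells.2 ⟨by omega, by omega⟩
    rw [hD] at h4
    obtain ⟨i, hi, hieq⟩ := h4
    simp only [Set.mem_Iio] at hi
    have e2 : (c i).2 = (c 0).2 + 1 := by rw [hieq]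
    have := (hmono 0 i (by omega) hi).2
    omega
  have hlast : (c (e-1)).2 = l.parts (c (e-1)).1 := by
    have hce := hcmem (e-1) (by omega)
    by_contra hc
    have h4 : (((c (e-1)).1, (c (e-1)).2 - 1) : ℕ × ℕ) ∈ cells n \ cells l :=
      mem_diff_cells.2 ⟨by omega, by omega⟩
    rw [hD] at h4
    obtain ⟨i, hi, hieq⟩ := h4
    simp only [Set.mem_Iio] at hi
    have e2 : (c i).2 = (c (e-1)).2 - 1 := by rw [hieq]
    have := (hmono i (e-1) (by omega) (by omega)).2
    omega
  have hpsi : ∀ j, j < e → psiF n l (c 0).1 (c j).1 (c j).2 = j := by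
    intro j
    induction j with
    | zero =>
      intro _
      have hc0 := hcmem 0 (by omega)
      unfold psiF
      rw [Finset.Ico_self, Finset.sum_empty]
      omega
    | succ j ih =>
      intro hj
      have i5 := ih (by omega)
      have hcj := hcmem j (by omega)
      have hcj1 := hcmem (j+1) (by omega)
      rcases hstep j hj with h1 | ⟨h1, h2⟩
      · have e1 : (c (j+1)).1 = (c j).1 + 1 := by rw [h1]
        have e2 : (c (j+1)).2 = (c j).2 := by rw [h1]
        have hr1 : (c 0).1 ≤ (c j).1 := (hmono 0 j (by omega) (by omega)).1
        have hrow1 : (c j).1 < (c (e-1)).1 := by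
          have := (hmono (j+1) (e-1) (by omega) (by omega)).1
          omega
        have hcl := clause (c j).1 hr1 hrow1
        rw [e1, e2] at hcj1
        unfold psiF at i5 ⊢
        rw [e1, e2, Finset.sum_Ico_succ_top hr1]
        omega
      · unfold psiF at i5 ⊢
        rw [h2]
        omega
  refine ⟨hrs0, ?_, ?_, clause, fun t ht1 ht2 => (hrows t).2 ⟨ht1, ht2⟩, ?_⟩
  · intro i hi
    have h1 := hsubparts i
    have h2 : ¬ (l.parts i < n.parts i) := fun hc => by
      have := ((hrows i).1 hc).1; omega
    omega
  · intro i hi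
    have h1 := hsubparts i
    have h2 : ¬ (l.parts i < n.parts i) := fun hc => by
      have := ((hrows i).1 hc).2; omega
    omega
  · have h1 := hpsi (e-1) (by omega)
    have hce := hcmem (e-1) (by omega)
    rw [hlast] at h1
    unfold psiF at h1
    rw [← Finset.Ico_add_one_right_eq_Icc, Finset.sum_Ico_succ_top hrs0]
    omega
end NPartition

open NPartition
/-- removing an `e`-rim-hook from `ν` giving `λ` corresponds to
moving a bead from an occupied position `p ≥ e` to the empty position `p - e`;
and the leg length (rows occupied minus one) equals the number of beads strictly
between `p - e` and `p`. -/
theorem remove_ribbon_iff_bead_move (e k : ℕ) (he : 2 ≤ e)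
    (n l : NPartition) (hn : n.length ≤ k) (hl : l.length ≤ k) :
    (RemoveRibbon e n l ↔
      ∃ p ∈ n.betaSet k, e ≤ p ∧ (p - e) ∉ n.betaSet k ∧
        l.betaSet k = insert (p - e) ((n.betaSet k).erase p)) ∧
    (∀ (c : ℕ → ℕ × ℕ) (p : ℕ), IsRibbonC e c (cells n \ cells l) →
      p ∈ n.betaSet k → e ≤ p → (p - e) ∉ n.betaSet k →
      l.betaSet k = insert (p - e) ((n.betaSet k).erase p) →
      ((Finset.range e).image fun i => (c i).1).card - 1 =
        ((n.betaSet k).filter fun q => p - e < q ∧ q < p).card) := by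
  constructor
  · constructor
    · rintro ⟨hsub, c, hRc⟩
      have hrs := ribbon_rs (by omega) hsub hRc
      obtain ⟨h1, h2, h3, h4⟩ := rs_beta hrs hn hl
      exact ⟨n.bet k (c 0).1, h1, h2, h3, h4⟩
    · rintro ⟨p, hp, hep, hpe, heq⟩
      obtain ⟨r, s, hrs, -⟩ := beta_rs (by omega) hn hl hp hep hpe heq
      exact ⟨hrs.sub, rs_ribbon hrs⟩
  · intro c p hRc hp hep hpe heq
    obtain ⟨r, s, hrs, hcard⟩ := beta_rs (by omega) hn hl hp hep hpe heq
    rw [hcard]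
    have himg : ((Finset.range e).image fun i => (c i).1) = Finset.Icc r s := by
      obtain ⟨hD, hinj, hstep⟩ := hRc
      ext t
      simp only [Finset.mem_image, Finset.mem_range, Finset.mem_Icc]
      constructor
      · rintro ⟨i, hi, rfl⟩
        have h1 : c i ∈ cells n \ cells l := by rw [hD]; exact ⟨i, hi, rfl⟩
        have h2 := mem_diff_cells'.1 h1
        by_contra hc
        rcases Nat.lt_or_ge (c i).1 r with h3 | h3
        · rw [hrs.eq_lt _ h3] at h2; omega
        · have h4 : s < (c i).1 := by omega
          rw [hrs.eq_gt _ h4] at h2; omega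
      · rintro ⟨h1, h2⟩
        have h3 : ((t, l.parts t) : ℕ × ℕ) ∈ cells n \ cells l :=
          mem_diff_cells.2 ⟨le_rfl, hrs.lt t h1 h2⟩
        rw [hD] at h3
        obtain ⟨i, hi, hieq⟩ := h3
        simp only [Set.mem_Iio] at hi
        exact ⟨i, hi, by rw [hieq]⟩
    rw [himg, Nat.card_Icc]
    have := hrs.hrs
    omega
end
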